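/- arXiv:0812.2725 — 3 statements merged into one kernel-verified Lean document; each statement's English description precedes it below -/
import Mathlib

section
/- For every nonnegative integer k and every positive integer n, the joint distribution of k-distant crossings and k-distant nestings over set partitions of [n] is symmetric: the sum over partitions π of [n] of x^{dcr_k(π)} y^{dne_k(π)} equals the sum of x^{dne_k(π)} y^{dcr_k(π)}. -/
open Finset

/-- Set partitions of `[n] = {1, …, n}`. -/
abbrev SP (n : ℕ) := Finpartition (Finset.Icc 1 n)

/-- `(i, j)` is an edge of the diagram of the partition `P`: either a loop `(i, i)`
on a singleton block, or `i < j` are in a common block with no element of that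
block strictly between them. -/
def IsEdge {n : ℕ} (P : SP n) (i j : ℕ) : Prop :=
  (i = j ∧ {i} ∈ P.parts) ∨
  (i < j ∧ ∃ B ∈ P.parts, i ∈ B ∧ j ∈ B ∧ ∀ m ∈ B, ¬(i < m ∧ m < j))

/-- Two edges `e₁ = (i₁, j₁)` and `e₂ = (i₂, j₂)` form a `k`-distant crossing:
`i₁ < i₂ ≤ j₁ < j₂` and `j₁ - i₂ ≥ k`. -/
def CrossPair (k : ℕ) (e₁ e₂ : ℕ × ℕ) : Prop :=
  e₁.1 < e₂.1 ∧ e₂.1 ≤ e₁.2 ∧ e₁.2 < e₂.2 ∧ k ≤ e₁.2 - e₂.1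

/-- Two edges `e₁ = (i₁, j₁)` and `e₂ = (i₂, j₂)` form a `k`-distant nesting:
`i₁ < i₂ ≤ j₂ < j₁` and `j₂ - i₂ ≥ k`. -/
def NestPair (k : ℕ) (e₁ e₂ : ℕ × ℕ) : Prop :=
  e₁.1 < e₂.1 ∧ e₂.1 ≤ e₂.2 ∧ e₂.2 < e₁.2 ∧ k ≤ e₂.2 - e₂.1

/-- The number of `k`-distant crossings of the partition `P`. -/
noncomputable def dcr {n : ℕ} (k : ℕ) (P : SP n) : ℕ :=
  Set.ncard {p : (ℕ × ℕ) × ℕ × ℕ |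
    IsEdge P p.1.1 p.1.2 ∧ IsEdge P p.2.1 p.2.2 ∧ CrossPair k p.1 p.2}

/-- The number of `k`-distant nestings of the partition `P`. -/
noncomputable def dne {n : ℕ} (k : ℕ) (P : SP n) : ℕ :=
  Set.ncard {p : (ℕ × ℕ) × ℕ × ℕ |
    IsEdge P p.1.1 p.1.2 ∧ IsEdge P p.2.1 p.2.2 ∧ NestPair k p.1 p.2}

/-- `P` is a complete matching: every block has exactly two elements. -/
def IsMatching {n : ℕ} (P : SP n) : Prop := ∀ B ∈ P.parts, B.card = 2

/-- The number of `k`-distant noncrossing complete matchings of `[m]`. -/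
noncomputable def NCM (k m : ℕ) : ℕ :=
  Set.ncard {P : SP m | IsMatching P ∧ dcr k P = 0}

/-- The number of `k`-distant noncrossing partitions of `[n]`. -/
noncomputable def NCP (k n : ℕ) : ℕ :=
  Set.ncard {P : SP n | dcr k P = 0}

/-- Openers of `P`: minimal elements of blocks of size at least two. -/
def openers {n : ℕ} (P : SP n) : Set ℕ :=
  {v | ∃ B ∈ P.parts, v ∈ B ∧ 2 ≤ B.card ∧ ∀ m ∈ B, v ≤ m}

/-- Closers of `P`: maximal elements of blocks of size at least two. -/
def closers {n : ℕ} (P : SP n) : Set ℕ :=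
  {v | ∃ B ∈ P.parts, v ∈ B ∧ 2 ≤ B.card ∧ ∀ m ∈ B, m ≤ v}

/-- Singletons of `P`. -/
def singletons {n : ℕ} (P : SP n) : Set ℕ := {v | {v} ∈ P.parts}

/-- Transients of `P`: elements of a block that are neither its minimum nor its
maximum (equivalently, vertices incident to two edges of the diagram). -/
def transients {n : ℕ} (P : SP n) : Set ℕ :=
  {v | ∃ B ∈ P.parts, v ∈ B ∧ (∃ m ∈ B, m < v) ∧ (∃ m ∈ B, v < m)}

open scoped Classical


/-! ### Diagrams -/

/-- one forward step along an edge -/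
def stepE (E : Finset (ℕ × ℕ)) (a b : ℕ) : Prop := (a, b) ∈ E ∧ a < b

/-- connectivity: forward-reachability one way or the other -/
def conE (E : Finset (ℕ × ℕ)) (a b : ℕ) : Prop :=
  Relation.ReflTransGen (stepE E) a b ∨ Relation.ReflTransGen (stepE E) b a

structure IsDiagram (n : ℕ) (E : Finset (ℕ × ℕ)) : Prop where
  bounds : ∀ p ∈ E, 1 ≤ p.1 ∧ p.1 ≤ p.2 ∧ p.2 ≤ n
  runiq : ∀ p ∈ E, ∀ q ∈ E, p.2 = q.2 → p = q
  luniq : ∀ p ∈ E, ∀ q ∈ E, p.1 = q.1 → p = q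
  cover : ∀ v, 1 ≤ v → v ≤ n → (∃ j, (v, j) ∈ E) ∨ (∃ i, (i, v) ∈ E)

/-- generic: deterministic relations have comparable reachability from a common source -/
theorem rtg_from_same_source {α : Type*} {r : α → α → Prop}
    (hdet : ∀ a b c, r a b → r a c → b = c) {a b c : α}
    (hab : Relation.ReflTransGen r a b) (hac : Relation.ReflTransGen r a c) :
    Relation.ReflTransGen r b c ∨ Relation.ReflTransGen r c b := by
  induction hab using Relation.ReflTransGen.head_induction_on with
  | refl => exact Or.inl hac
  | head h' _ ih =>
    rename_i a a' hrest
    rcases (Relation.ReflTransGen.cases_head hac) with rfl | ⟨c', hc', hrest'⟩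
    · exact Or.inr (Relation.ReflTransGen.head h' hrest)
    · exact ih (by rwa [hdet _ _ _ h' hc'] )

theorem rtg_to_same_target {α : Type*} {r : α → α → Prop}
    (hdet : ∀ a b c, r b a → r c a → b = c) {a b c : α}
    (hba : Relation.ReflTransGen r b a) (hca : Relation.ReflTransGen r c a) :
    Relation.ReflTransGen r b c ∨ Relation.ReflTransGen r c b := by
  rw [← Relation.reflTransGen_swap] at hba hca
  have := rtg_from_same_source (r := Function.swap r) (fun a b c h1 h2 => hdet _ _ _ h1 h2) hba hca
  rcases this with h | h
  · exact Or.inr (Relation.reflTransGen_swap.mp h)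
  · exact Or.inl (Relation.reflTransGen_swap.mp h)

theorem stepE_le {E : Finset (ℕ × ℕ)} {a b : ℕ} (h : Relation.ReflTransGen (stepE E) a b) :
    a ≤ b := by
  induction h with
  | refl => exact le_rfl
  | tail h1 h2 ih => exact ih.trans h2.2.le

theorem conE_refl (E : Finset (ℕ × ℕ)) (a : ℕ) : conE E a a := Or.inl .refl
theorem conE_symm {E : Finset (ℕ × ℕ)} {a b : ℕ} (h : conE E a b) : conE E b a := h.symm

theorem conE_trans {n : ℕ} {E : Finset (ℕ × ℕ)} (hE : IsDiagram n E) {a b c : ℕ}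
    (h1 : conE E a b) (h2 : conE E b c) : conE E a c := by
  have fdet : ∀ x y z, stepE E x y → stepE E x z → y = z := by
    intro x y z hy hz
    have := hE.luniq _ hy.1 _ hz.1 rfl
    simpa using congrArg Prod.snd this
  have bdet : ∀ x y z, stepE E y x → stepE E z x → y = z := by
    intro x y z hy hz
    have := hE.runiq _ hy.1 _ hz.1 rfl
    simpa using congrArg Prod.fst this
  rcases h1 with h1 | h1 <;> rcases h2 with h2 | h2
  · exact Or.inl (h1.trans h2)
  · rcases rtg_to_same_target bdet h1 h2 with h | h
    · exact Or.inl h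
    · exact Or.inr h
  · rcases rtg_from_same_source fdet h1 h2 with h | h
    · exact Or.inl h
    · exact Or.inr h
  · exact Or.inr (h2.trans h1)
/-! ### Building a partition from a diagram -/

def relE (E : Finset (ℕ × ℕ)) (a b : ℕ) : Prop := (a, b) ∈ E ∨ (b, a) ∈ E

noncomputable def classE (n : ℕ) (E : Finset (ℕ × ℕ)) (v : ℕ) : Finset ℕ :=
  (Finset.Icc 1 n).filter (fun w => Relation.EqvGen (relE E) v w)

theorem mem_classE {n : ℕ} {E : Finset (ℕ × ℕ)} {v w : ℕ} :
    w ∈ classE n E v ↔ w ∈ Finset.Icc 1 n ∧ Relation.EqvGen (relE E) v w := by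
  simp [classE]

theorem classE_eq_of_rel {n : ℕ} {E : Finset (ℕ × ℕ)} {v w : ℕ}
    (h : Relation.EqvGen (relE E) v w) : classE n E v = classE n E w := by
  ext x
  simp only [mem_classE]
  exact and_congr_right fun _ => ⟨fun hc => (h.symm _ _).trans _ _ _ hc,
    fun hc => h.trans _ _ _ hc⟩

noncomputable def mkPart (n : ℕ) (E : Finset (ℕ × ℕ)) : SP n where
  parts := (Finset.Icc 1 n).image (fun v => classE n E v)
  supIndep := by
    apply Finset.supIndep_iff_pairwiseDisjoint.mpr
    intro B hB C hC hBC
    simp only [Finset.coe_image, Set.mem_image, Finset.mem_coe] at hB hC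
    obtain ⟨v, hv, rfl⟩ := hB
    obtain ⟨w, hw, rfl⟩ := hC
    simp only [Function.onFun, id]
    rw [Finset.disjoint_left]
    intro a hav haw
    rw [mem_classE] at hav haw
    exact hBC (classE_eq_of_rel ((hav.2).trans _ _ _ (haw.2.symm _ _)))
  sup_parts := by
    apply le_antisymm
    · apply Finset.sup_le
      intro B hB
      simp only [Finset.mem_image] at hB
      obtain ⟨v, hv, rfl⟩ := hB
      intro x hx
      exact (mem_classE.mp hx).1
    · intro v hv
      have : v ∈ classE n E v := mem_classE.mpr ⟨hv, Relation.EqvGen.refl v⟩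
      exact Finset.mem_sup.mpr ⟨classE n E v, Finset.mem_image_of_mem _ hv, this⟩
  bot_notMem := by
    simp only [Finset.bot_eq_empty, Finset.mem_image]
    rintro ⟨v, hv, hveq⟩
    have : v ∈ classE n E v := mem_classE.mpr ⟨hv, Relation.EqvGen.refl v⟩
    rw [hveq] at this
    exact absurd this (Finset.notMem_empty v)

theorem mem_mkPart_parts {n : ℕ} {E : Finset (ℕ × ℕ)} {B : Finset ℕ} :
    B ∈ (mkPart n E).parts ↔ ∃ v ∈ Finset.Icc 1 n, B = classE n E v := by
  simp [mkPart, eq_comm]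

/-- under the diagram axioms, `EqvGen relE = conE` -/
theorem eqvGen_eq_conE {n : ℕ} {E : Finset (ℕ × ℕ)} (hE : IsDiagram n E) {a b : ℕ} :
    Relation.EqvGen (relE E) a b ↔ conE E a b := by
  constructor
  · intro h
    induction h with
    | rel x y hxy =>
      rcases hxy with hxy | hxy
      · rcases lt_or_eq_of_le (hE.bounds _ hxy).2.1 with hlt | heq
        · exact Or.inl (Relation.ReflTransGen.single ⟨hxy, hlt⟩)
        · simp only at heq; exact heq ▸ conE_refl E x
      · rcases lt_or_eq_of_le (hE.bounds _ hxy).2.1 with hlt | heq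
        · exact Or.inr (Relation.ReflTransGen.single ⟨hxy, hlt⟩)
        · simp only at heq; exact heq ▸ conE_refl E y
    | refl x => exact conE_refl E x
    | symm x y _ ih => exact conE_symm ih
    | trans x y z _ _ ih1 ih2 => exact conE_trans hE ih1 ih2
  · intro h
    have key : ∀ x y, Relation.ReflTransGen (stepE E) x y → Relation.EqvGen (relE E) x y := by
      intro x y hxy
      induction hxy with
      | refl => exact Relation.EqvGen.refl _
      | tail h1 h2 ih => exact ih.trans _ _ _ (Relation.EqvGen.rel _ _ (Or.inl h2.1))
    rcases h with h | h
    · exact key _ _ h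
    · exact (key _ _ h).symm _ _
/-! ### Characterization of edges of `mkPart` -/

theorem loop_isolated {n : ℕ} {E : Finset (ℕ × ℕ)} (hE : IsDiagram n E) {i : ℕ}
    (hi : (i, i) ∈ E) : ∀ a b, Relation.EqvGen (relE E) a b → (a = i ↔ b = i) := by
  intro a b h
  induction h with
  | rel x y hxy =>
    constructor
    · rintro rfl
      rcases hxy with hxy | hxy
      · have := hE.luniq _ hxy _ hi rfl; have := congrArg Prod.snd this; simp only at this; omega
      · have := hE.runiq _ hxy _ hi rfl; have := congrArg Prod.fst this; simp only at this; omega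
    · rintro rfl
      rcases hxy with hxy | hxy
      · have := hE.runiq _ hxy _ hi rfl; have := congrArg Prod.fst this; simp only at this; omega
      · have := hE.luniq _ hxy _ hi rfl; have := congrArg Prod.snd this; simp only at this; omega
  | refl x => exact Iff.rfl
  | symm x y _ ih => exact ih.symm
  | trans x y z _ _ ih1 ih2 => exact ih1.trans ih2

theorem classE_loop {n : ℕ} {E : Finset (ℕ × ℕ)} (hE : IsDiagram n E) {i : ℕ}
    (hi : (i, i) ∈ E) : classE n E i = {i} := by
  have hb := hE.bounds _ hi
  ext w
  simp only [mem_classE, Finset.mem_singleton]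
  constructor
  · rintro ⟨_, hw⟩
    exact (loop_isolated hE hi i w hw).mp rfl
  · rintro rfl
    exact ⟨Finset.mem_Icc.mpr ⟨hb.1, hb.2.2⟩, Relation.EqvGen.refl _⟩

theorem edge_of_isEdge_mkPart {n : ℕ} {E : Finset (ℕ × ℕ)} (hE : IsDiagram n E) {i j : ℕ}
    (h : IsEdge (mkPart n E) i j) : (i, j) ∈ E := by
  rcases h with ⟨rfl, hsing⟩ | ⟨hij, B, hB, hiB, hjB, hbet⟩
  · -- loop case: {i} is a part, so i ∈ Icc and its class is {i}
    obtain ⟨v, hv, hveq⟩ := mem_mkPart_parts.mp hsing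
    have hvmem : v ∈ classE n E v := mem_classE.mpr ⟨hv, Relation.EqvGen.refl v⟩
    rw [← hveq, Finset.mem_singleton] at hvmem
    subst hvmem
    have hicc := hv
    rw [Finset.mem_Icc] at hicc
    rcases hE.cover v hicc.1 hicc.2 with ⟨j', hj'⟩ | ⟨i', hi'⟩
    · have hcl : j' ∈ classE n E v := mem_classE.mpr
        ⟨Finset.mem_Icc.mpr ⟨le_trans hicc.1 (hE.bounds _ hj').2.1, (hE.bounds _ hj').2.2⟩,
          Relation.EqvGen.rel _ _ (Or.inl hj')⟩
      rw [← hveq, Finset.mem_singleton] at hcl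
      exact hcl ▸ hj'
    · have hcl : i' ∈ classE n E v := mem_classE.mpr
        ⟨Finset.mem_Icc.mpr ⟨(hE.bounds _ hi').1, le_trans (hE.bounds _ hi').2.1 hicc.2⟩,
          Relation.EqvGen.rel _ _ (Or.inr hi')⟩
      rw [← hveq, Finset.mem_singleton] at hcl
      exact hcl ▸ hi'
  · -- arc case
    obtain ⟨v, hv, hveq⟩ := mem_mkPart_parts.mp hB
    subst hveq
    have hcon : conE E i j := by
      have h1 := (mem_classE.mp hiB).2
      have h2 := (mem_classE.mp hjB).2
      exact (eqvGen_eq_conE hE).mp ((h1.symm _ _).trans _ _ _ h2)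
    rcases hcon with hc | hc
    · rcases Relation.ReflTransGen.cases_head hc with rfl | ⟨x, hx, hrest⟩
      · exact absurd rfl hij.ne
      · -- x is the successor of i; x ∈ class, i < x ≤ j so x = j
        have hxj : x ≤ j := stepE_le hrest
        have hxB : x ∈ classE n E v := by
          rw [mem_classE] at hiB ⊢
          refine ⟨Finset.mem_Icc.mpr ⟨le_trans (hE.bounds _ hx.1).1 hx.2.le,
            le_trans hxj (Finset.mem_Icc.mp (mem_classE.mp hjB).1).2⟩, ?_⟩
          exact (hiB.2).trans _ _ _ (Relation.EqvGen.rel _ _ (Or.inl hx.1))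
        have := hbet x hxB
        have hxeq : x = j := by
          rcases lt_or_eq_of_le hxj with h' | h'
          · exact absurd ⟨hx.2, h'⟩ this
          · exact h'
        exact hxeq ▸ hx.1
    · have := stepE_le hc
      omega

theorem isEdge_mkPart_of_edge {n : ℕ} {E : Finset (ℕ × ℕ)} (hE : IsDiagram n E) {i j : ℕ}
    (h : (i, j) ∈ E) : IsEdge (mkPart n E) i j := by
  have hb := hE.bounds _ h
  simp only at hb
  have hiIcc : i ∈ Finset.Icc 1 n := Finset.mem_Icc.mpr ⟨hb.1, hb.2.1.trans hb.2.2⟩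
  rcases lt_or_eq_of_le hb.2.1 with hij | rfl
  · right
    refine ⟨hij, classE n E i, mem_mkPart_parts.mpr ⟨i, hiIcc, rfl⟩,
      mem_classE.mpr ⟨hiIcc, Relation.EqvGen.refl i⟩,
      mem_classE.mpr ⟨Finset.mem_Icc.mpr ⟨le_trans hb.1 hb.2.1, hb.2.2⟩,
        Relation.EqvGen.rel _ _ (Or.inl h)⟩, ?_⟩
    intro m hm ⟨him, hmj⟩
    have hcon : conE E i m := (eqvGen_eq_conE hE).mp (mem_classE.mp hm).2
    rcases hcon with hc | hc
    · rcases Relation.ReflTransGen.cases_head hc with rfl | ⟨x, hx, hrest⟩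
      · omega
      · -- first step from i must go to j
        have hxj : x = j := by
          have := hE.luniq _ hx.1 _ h rfl
          simpa using congrArg Prod.snd this
        subst hxj
        have := stepE_le hrest
        omega
    · have := stepE_le hc
      omega
  · left
    refine ⟨rfl, ?_⟩
    rw [mem_mkPart_parts]
    exact ⟨i, hiIcc, (classE_loop hE h).symm⟩

theorem isEdge_mkPart_iff {n : ℕ} {E : Finset (ℕ × ℕ)} (hE : IsDiagram n E) {i j : ℕ} :
    IsEdge (mkPart n E) i j ↔ (i, j) ∈ E :=
  ⟨edge_of_isEdge_mkPart hE, isEdge_mkPart_of_edge hE⟩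
/-! ### The diagram of a partition -/

theorem isEdge_bounds {n : ℕ} {P : SP n} {i j : ℕ} (h : IsEdge P i j) :
    1 ≤ i ∧ i ≤ j ∧ j ≤ n := by
  rcases h with ⟨rfl, hsing⟩ | ⟨hij, B, hB, hiB, hjB, _⟩
  · have := P.le hsing (Finset.mem_singleton_self i)
    rw [Finset.mem_Icc] at this
    exact ⟨this.1, le_rfl, this.2⟩
  · have h1 := P.le hB hiB
    have h2 := P.le hB hjB
    rw [Finset.mem_Icc] at h1 h2
    exact ⟨h1.1, hij.le, h2.2⟩

theorem isEdge_runiq {n : ℕ} {P : SP n} {i i' j : ℕ} (h : IsEdge P i j) (h' : IsEdge P i' j) :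
    i = i' := by
  rcases h with ⟨rfl, hsing⟩ | ⟨hij, B, hB, hiB, hjB, hbet⟩ <;>
    rcases h' with ⟨hi'j, hsing'⟩ | ⟨hij', B', hB', hiB', hjB', hbet'⟩
  · omega
  · -- {j} is a part and i' < j in a common block B'
    have := P.eq_of_mem_parts hsing hB' (Finset.mem_singleton_self _) hjB'
    rw [← this, Finset.mem_singleton] at hiB'
    omega
  · have := P.eq_of_mem_parts hsing' hB (by rw [hi'j]; exact Finset.mem_singleton_self _) hjB
    rw [← this, Finset.mem_singleton] at hiB
    omega
  · have hBB : B = B' := P.eq_of_mem_parts hB hB' hjB hjB'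
    subst hBB
    rcases lt_trichotomy i i' with hlt | heq | hlt
    · exact (hbet i' hiB' ⟨hlt, hij'⟩).elim
    · exact heq
    · exact (hbet' i hiB ⟨hlt, hij⟩).elim
  
theorem isEdge_luniq {n : ℕ} {P : SP n} {i j j' : ℕ} (h : IsEdge P i j) (h' : IsEdge P i j') :
    j = j' := by
  rcases h with ⟨hij, hsing⟩ | ⟨hij, B, hB, hiB, hjB, hbet⟩ <;>
    rcases h' with ⟨hij', hsing'⟩ | ⟨hij', B', hB', hiB', hjB', hbet'⟩
  · omega
  · have := P.eq_of_mem_parts hsing hB' (Finset.mem_singleton_self _) hiB'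
    rw [← this, Finset.mem_singleton] at hjB'
    omega
  · have := P.eq_of_mem_parts hsing' hB (Finset.mem_singleton_self _) hiB
    rw [← this, Finset.mem_singleton] at hjB
    omega
  · have hBB : B = B' := P.eq_of_mem_parts hB hB' hiB hiB'
    subst hBB
    rcases lt_trichotomy j j' with hlt | heq | hlt
    · exact (hbet' j hjB ⟨hij, hlt⟩).elim
    · exact heq
    · exact (hbet j' hjB' ⟨hij', hlt⟩).elim

noncomputable def encP {n : ℕ} (P : SP n) : Finset (ℕ × ℕ) :=
  (Finset.Icc 1 n ×ˢ Finset.Icc 1 n).filter (fun p => IsEdge P p.1 p.2)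

theorem mem_encP {n : ℕ} {P : SP n} {i j : ℕ} : (i, j) ∈ encP P ↔ IsEdge P i j := by
  simp only [encP, Finset.mem_filter, Finset.mem_product, Finset.mem_Icc]
  constructor
  · exact fun h => h.2
  · intro h
    have := isEdge_bounds h
    exact ⟨⟨⟨this.1, le_trans this.2.1 this.2.2⟩, ⟨le_trans this.1 this.2.1, this.2.2⟩⟩, h⟩

theorem isDiagram_encP {n : ℕ} (P : SP n) : IsDiagram n (encP P) := by
  constructor
  · rintro ⟨i, j⟩ h
    exact isEdge_bounds (mem_encP.mp h)
  · rintro ⟨i, j⟩ h ⟨i', j'⟩ h' heq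
    simp only at heq
    subst heq
    have := isEdge_runiq (mem_encP.mp h) (mem_encP.mp h')
    simp [this]
  · rintro ⟨i, j⟩ h ⟨i', j'⟩ h' heq
    simp only at heq
    subst heq
    have := isEdge_luniq (mem_encP.mp h) (mem_encP.mp h')
    simp [this]
  · intro v h1 hn
    obtain ⟨B, hB, hvB⟩ := P.exists_mem (Finset.mem_Icc.mpr ⟨h1, hn⟩)
    by_cases hup : ∃ m ∈ B, v < m
    · -- edge to the next element of B above v
      obtain ⟨m, hm, hvm⟩ := hup
      set S := B.filter (fun m => v < m) with hS
      have hSne : S.Nonempty := ⟨m, Finset.mem_filter.mpr ⟨hm, hvm⟩⟩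
      left
      refine ⟨S.min' hSne, mem_encP.mpr (Or.inr ⟨?_, B, hB, hvB, ?_, ?_⟩)⟩
      · exact (Finset.mem_filter.mp (S.min'_mem hSne)).2
      · exact (Finset.mem_filter.mp (S.min'_mem hSne)).1
      · intro x hx ⟨hvx, hxm⟩
        exact absurd (S.min'_le x (Finset.mem_filter.mpr ⟨hx, hvx⟩)) (by omega)
    · by_cases hdown : ∃ m ∈ B, m < v
      · obtain ⟨m, hm, hvm⟩ := hdown
        set S := B.filter (fun m => m < v) with hS
        have hSne : S.Nonempty := ⟨m, Finset.mem_filter.mpr ⟨hm, hvm⟩⟩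
        right
        refine ⟨S.max' hSne, mem_encP.mpr (Or.inr ⟨?_, B, hB, ?_, hvB, ?_⟩)⟩
        · exact (Finset.mem_filter.mp (S.max'_mem hSne)).2
        · exact (Finset.mem_filter.mp (S.max'_mem hSne)).1
        · intro x hx ⟨hmx, hxv⟩
          exact absurd (S.le_max' x (Finset.mem_filter.mpr ⟨hx, hxv⟩)) (by omega)
      · -- B = {v}
        left
        refine ⟨v, mem_encP.mpr (Or.inl ⟨rfl, ?_⟩)⟩
        have : B = {v} := by
          apply Finset.eq_singleton_iff_unique_mem.mpr
          refine ⟨hvB, fun x hx => ?_⟩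
          rcases lt_trichotomy x v with h' | h' | h'
          · exact absurd ⟨x, hx, h'⟩ hdown
          · exact h'
          · exact absurd ⟨x, hx, h'⟩ hup
        rwa [← this]
/-! ### Round trip: `mkPart (encP P) = P` -/

theorem chain_eqvGen {n : ℕ} {P : SP n} {B : Finset ℕ} (hB : B ∈ P.parts) :
    ∀ d u w, w - u = d → u ∈ B → w ∈ B → u ≤ w →
      Relation.EqvGen (relE (encP P)) u w := by
  intro d
  induction d using Nat.strong_induction_on with
  | _ d ih =>
    intro u w hd huB hwB huw
    rcases eq_or_lt_of_le huw with rfl | hlt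
    · exact Relation.EqvGen.refl u
    · set S := B.filter (fun m => u ≤ m ∧ m < w) with hS
      have hSne : S.Nonempty := ⟨u, Finset.mem_filter.mpr ⟨huB, le_rfl, hlt⟩⟩
      set m0 := S.max' hSne with hm0
      have hm0S := S.max'_mem hSne
      rw [Finset.mem_filter] at hm0S
      have hedge : IsEdge P m0 w := by
        refine Or.inr ⟨hm0S.2.2, B, hB, hm0S.1, hwB, ?_⟩
        intro x hx ⟨h1, h2⟩
        exact absurd (S.le_max' x (Finset.mem_filter.mpr ⟨hx, le_of_lt (lt_of_le_of_lt hm0S.2.1 h1), h2⟩)) (by omega)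
      have h1 : Relation.EqvGen (relE (encP P)) u m0 := by
        rcases eq_or_lt_of_le hm0S.2.1 with heq | hum0
        · rw [hm0, ← heq]; exact Relation.EqvGen.refl u
        · exact ih (m0 - u) (by omega) u m0 rfl huB hm0S.1 hm0S.2.1
      exact h1.trans _ _ _ (Relation.EqvGen.rel _ _ (Or.inl (mem_encP.mpr hedge)))

theorem classE_eq_block {n : ℕ} {P : SP n} {B : Finset ℕ} (hB : B ∈ P.parts) {v : ℕ}
    (hv : v ∈ B) : classE n (encP P) v = B := by
  ext w
  rw [mem_classE]
  constructor
  · rintro ⟨hwIcc, hw⟩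
    -- EqvGen implies same block (or equal)
    have key : ∀ a b, Relation.EqvGen (relE (encP P)) a b →
        a = b ∨ ∃ C ∈ P.parts, a ∈ C ∧ b ∈ C := by
      intro a b h
      induction h with
      | rel x y hxy =>
        right
        rcases hxy with hxy | hxy
        · rcases mem_encP.mp hxy with ⟨rfl, hsing⟩ | ⟨_, C, hC, h1, h2, _⟩
          · exact ⟨{x}, hsing, Finset.mem_singleton_self _, Finset.mem_singleton_self _⟩
          · exact ⟨C, hC, h1, h2⟩
        · rcases mem_encP.mp hxy with ⟨heq, hsing⟩ | ⟨_, C, hC, h1, h2, _⟩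
          · exact ⟨{y}, hsing, by simp [heq], Finset.mem_singleton_self _⟩
          · exact ⟨C, hC, h2, h1⟩
      | refl x => exact Or.inl rfl
      | symm x y _ ih =>
        rcases ih with rfl | ⟨C, hC, h1, h2⟩
        · exact Or.inl rfl
        · exact Or.inr ⟨C, hC, h2, h1⟩
      | trans x y z _ _ ih1 ih2 =>
        rcases ih1 with rfl | ⟨C, hC, h1, h2⟩
        · exact ih2
        · rcases ih2 with rfl | ⟨C', hC', h1', h2'⟩
          · exact Or.inr ⟨C, hC, h1, h2⟩
          · exact Or.inr ⟨C, hC, h1, (P.eq_of_mem_parts hC' hC h1' h2) ▸ h2'⟩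
    rcases key v w hw with rfl | ⟨C, hC, h1, h2⟩
    · exact hv
    · rwa [P.eq_of_mem_parts hC hB h1 hv] at h2
  · intro hwB
    refine ⟨P.le hB hwB, ?_⟩
    rcases le_total v w with h | h
    · exact chain_eqvGen hB _ v w rfl hv hwB h
    · exact (chain_eqvGen hB _ w v rfl hwB hv h).symm _ _

theorem mkPart_encP {n : ℕ} (P : SP n) : mkPart n (encP P) = P := by
  apply Finpartition.ext
  ext B
  rw [mem_mkPart_parts]
  constructor
  · rintro ⟨v, hv, rfl⟩
    obtain ⟨C, hC, hvC⟩ := P.exists_mem hv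
    rw [classE_eq_block hC hvC]
    exact hC
  · intro hB
    obtain ⟨v, hv⟩ := P.nonempty_of_mem_parts hB
    exact ⟨v, P.le hB hv, (classE_eq_block hB hv).symm⟩
/-! ### Statistics at the diagram level -/

noncomputable def dcrD (k : ℕ) (E : Finset (ℕ × ℕ)) : ℕ :=
  ∑ e ∈ E, (E.filter (fun f => CrossPair k e f)).card

noncomputable def dneD (k : ℕ) (E : Finset (ℕ × ℕ)) : ℕ :=
  ∑ f ∈ E, (E.filter (fun e => NestPair k e f)).card

def opensE (E : Finset (ℕ × ℕ)) (i : ℕ) : Prop := ∃ j, (i, j) ∈ E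
def rendE (E : Finset (ℕ × ℕ)) (j : ℕ) : Prop := ∃ i, (i, j) ∈ E

noncomputable def availE (E : Finset (ℕ × ℕ)) (j : ℕ) : Finset ℕ :=
  (Finset.range (j+1)).filter (fun i => ∃ j', j ≤ j' ∧ (i, j') ∈ E)

theorem mem_availE {E : Finset (ℕ × ℕ)} {j i : ℕ} :
    i ∈ availE E j ↔ i ≤ j ∧ ∃ j', j ≤ j' ∧ (i, j') ∈ E := by
  simp [availE, Finset.mem_range, Nat.lt_succ_iff]

/-- local crossing count at a right endpoint -/
theorem locCR {n k : ℕ} {E : Finset (ℕ × ℕ)} (hE : IsDiagram n E) {h0 j : ℕ}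
    (h : (h0, j) ∈ E) :
    (E.filter (fun f => CrossPair k (h0, j) f)).card
      = ((availE E j).filter (fun i => h0 < i ∧ i + k ≤ j)).card := by
  apply Finset.card_bij (fun f _ => f.1)
  · rintro ⟨i2, j2⟩ hf
    rw [Finset.mem_filter] at hf
    obtain ⟨hfE, h1, h2, h3, h4⟩ := hf
    simp only at h1 h2 h3 h4 ⊢
    rw [Finset.mem_filter, mem_availE]
    exact ⟨⟨h2, j2, h3.le, hfE⟩, h1, by omega⟩
  · rintro ⟨i2, j2⟩ hf ⟨i2', j2'⟩ hf' heq
    rw [Finset.mem_filter] at hf hf'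
    simp only at heq
    subst heq
    exact hE.luniq _ hf.1 _ hf'.1 rfl
  · intro i hi
    rw [Finset.mem_filter, mem_availE] at hi
    obtain ⟨⟨hij, j', hjj', hedge⟩, hlt, hfar⟩ := hi
    refine ⟨(i, j'), Finset.mem_filter.mpr ⟨hedge, ?_⟩, rfl⟩
    have hne : j' ≠ j := fun hc => by
      subst hc
      have := hE.runiq _ hedge _ h rfl
      simp only [Prod.mk.injEq] at this
      omega
    exact ⟨hlt, by omega, by omega, by omega⟩

/-- local nesting count at an (inner) right endpoint -/
theorem locNE {n k : ℕ} {E : Finset (ℕ × ℕ)} (hE : IsDiagram n E) {h0 j : ℕ}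
    (h : (h0, j) ∈ E) :
    (E.filter (fun e => NestPair k e (h0, j))).card
      = if h0 + k ≤ j then ((availE E j).filter (fun i => i < h0)).card else 0 := by
  have hb := hE.bounds _ h
  simp only at hb
  split_ifs with hfar
  · apply Finset.card_bij (fun e _ => e.1)
    · rintro ⟨i1, j1⟩ hf
      rw [Finset.mem_filter] at hf
      obtain ⟨hfE, h1, h2, h3, h4⟩ := hf
      simp only at h1 h2 h3 h4 ⊢
      rw [Finset.mem_filter, mem_availE]
      exact ⟨⟨by omega, j1, h3.le, hfE⟩, h1⟩
    · rintro ⟨i1, j1⟩ hf ⟨i1', j1'⟩ hf' heq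
      rw [Finset.mem_filter] at hf hf'
      simp only at heq
      subst heq
      exact hE.luniq _ hf.1 _ hf'.1 rfl
    · intro i hi
      rw [Finset.mem_filter, mem_availE] at hi
      obtain ⟨⟨hij, j', hjj', hedge⟩, hlt⟩ := hi
      refine ⟨(i, j'), Finset.mem_filter.mpr ⟨hedge, ?_⟩, rfl⟩
      have hne : j' ≠ j := fun hc => by
        subst hc
        have := hE.runiq _ hedge _ h rfl
        simp only [Prod.mk.injEq] at this
        omega
      exact ⟨hlt, by omega, by omega, by omega⟩
  · rw [Finset.card_eq_zero, Finset.filter_eq_empty_iff]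
    rintro ⟨i1, j1⟩ _ ⟨h1, h2, h3, h4⟩
    simp only at h1 h2 h3 h4
    omega

/-! ### partition statistics = diagram statistics -/

theorem dcr_eq_dcrD {n k : ℕ} {P : SP n} {E : Finset (ℕ × ℕ)}
    (hPE : ∀ i j, IsEdge P i j ↔ (i, j) ∈ E) :
    Set.ncard {p : (ℕ × ℕ) × ℕ × ℕ |
      IsEdge P p.1.1 p.1.2 ∧ IsEdge P p.2.1 p.2.2 ∧ CrossPair k p.1 p.2} = dcrD k E := by
  have hset : {p : (ℕ × ℕ) × ℕ × ℕ |
      IsEdge P p.1.1 p.1.2 ∧ IsEdge P p.2.1 p.2.2 ∧ CrossPair k p.1 p.2}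
      = ↑((E ×ˢ E).filter (fun p => CrossPair k p.1 p.2)) := by
    ext ⟨⟨a, b⟩, c, d⟩
    simp only [Set.mem_setOf_eq, Finset.coe_filter, Finset.mem_product, Set.mem_setOf_eq]
    rw [hPE, hPE]
    tauto
  rw [hset, Set.ncard_coe_finset, dcrD]
  rw [Finset.card_eq_sum_card_fiberwise (f := fun p => p.1) (t := E)
    (fun p hp => (Finset.mem_product.mp (Finset.mem_filter.mp hp).1).1)]
  apply Finset.sum_congr rfl
  intro e he
  apply Finset.card_bij (fun p _ => p.2)
  · intro p hp
    simp only [Finset.mem_filter, Finset.mem_product] at hp ⊢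
    exact ⟨hp.1.1.2, hp.2 ▸ hp.1.2⟩
  · intro p hp q hq heq
    simp only [Finset.mem_filter] at hp hq
    exact Prod.ext (hp.2.trans hq.2.symm) heq
  · intro f hf
    simp only [Finset.mem_filter] at hf
    exact ⟨(e, f), by simp [Finset.mem_filter, Finset.mem_product, he, hf.1, hf.2], rfl⟩

theorem dne_eq_dneD {n k : ℕ} {P : SP n} {E : Finset (ℕ × ℕ)}
    (hPE : ∀ i j, IsEdge P i j ↔ (i, j) ∈ E) :
    Set.ncard {p : (ℕ × ℕ) × ℕ × ℕ |
      IsEdge P p.1.1 p.1.2 ∧ IsEdge P p.2.1 p.2.2 ∧ NestPair k p.1 p.2} = dneD k E := by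
  have hset : {p : (ℕ × ℕ) × ℕ × ℕ |
      IsEdge P p.1.1 p.1.2 ∧ IsEdge P p.2.1 p.2.2 ∧ NestPair k p.1 p.2}
      = ↑((E ×ˢ E).filter (fun p => NestPair k p.1 p.2)) := by
    ext ⟨⟨a, b⟩, c, d⟩
    simp only [Set.mem_setOf_eq, Finset.coe_filter, Finset.mem_product, Set.mem_setOf_eq]
    rw [hPE, hPE]
    tauto
  rw [hset, Set.ncard_coe_finset, dneD]
  rw [Finset.card_eq_sum_card_fiberwise (f := fun p => p.2) (t := E)
    (fun p hp => (Finset.mem_product.mp (Finset.mem_filter.mp hp).1).2)]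
  apply Finset.sum_congr rfl
  intro f hf
  apply Finset.card_bij (fun p _ => p.1)
  · intro p hp
    simp only [Finset.mem_filter, Finset.mem_product] at hp ⊢
    exact ⟨hp.1.1.1, hp.2 ▸ hp.1.2⟩
  · intro p hp q hq heq
    simp only [Finset.mem_filter] at hp hq
    exact Prod.ext heq (hp.2.trans hq.2.symm)
  · intro e he
    simp only [Finset.mem_filter] at he
    exact ⟨(e, f), by simp [Finset.mem_filter, Finset.mem_product, hf, he.1, he.2], rfl⟩
/-! ### rank / pick machinery -/

noncomputable def pick (S : Finset ℕ) (m : ℕ) : ℕ :=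
  if h : m < S.card then (S.orderIsoOfFin rfl ⟨m, h⟩ : ℕ) else 0

theorem pick_mem {S : Finset ℕ} {m : ℕ} (h : m < S.card) : pick S m ∈ S := by
  rw [pick, dif_pos h]
  exact (S.orderIsoOfFin rfl ⟨m, h⟩).2

theorem filter_lt_orderIso (S : Finset ℕ) (i : Fin S.card) :
    (S.filter (fun x => x < (S.orderIsoOfFin rfl i : ℕ))).card = i := by
  have key : S.filter (fun x => x < (S.orderIsoOfFin rfl i : ℕ))
      = (Finset.univ.filter (fun j : Fin S.card => j < i)).image
          (fun j => (S.orderIsoOfFin rfl j : ℕ)) := by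
    ext x
    simp only [Finset.mem_filter, Finset.mem_image, Finset.mem_univ, true_and]
    constructor
    · rintro ⟨hxS, hlt⟩
      refine ⟨(S.orderIsoOfFin rfl).symm ⟨x, hxS⟩, ?_, ?_⟩
      · rw [← (S.orderIsoOfFin rfl).lt_iff_lt]
        rw [OrderIso.apply_symm_apply]; exact hlt
      · simp
    · rintro ⟨j, hj, rfl⟩
      refine ⟨(S.orderIsoOfFin rfl j).2, ?_⟩
      have := (S.orderIsoOfFin rfl).lt_iff_lt.mpr hj
      exact this
  rw [key, Finset.card_image_of_injective _ (fun a b hab => by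
    have : (S.orderIsoOfFin rfl a : {x // x ∈ S}) = S.orderIsoOfFin rfl b := Subtype.ext hab
    exact (S.orderIsoOfFin rfl).injective this)]
  have : Finset.univ.filter (fun j : Fin S.card => j < i) = Finset.Iio i := by
    ext x; simp [Finset.mem_Iio]
  rw [this, Fin.card_Iio]


/-- rank of `pick S m` is `m` -/
theorem rank_pick {S : Finset ℕ} {m : ℕ} (h : m < S.card) :
    (S.filter (fun x => x < pick S m)).card = m := by
  rw [pick, dif_pos h]
  exact filter_lt_orderIso S ⟨m, h⟩

/-- `pick` of the rank of `h` is `h` -/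
theorem pick_rank {S : Finset ℕ} {h : ℕ} (hh : h ∈ S) :
    pick S ((S.filter (fun x => x < h)).card) = h := by
  set r := (S.filter (fun x => x < h)).card with hr
  have hrlt : r < S.card := by
    have : (S.filter (fun x => x < h)).card < S.card := by
      apply Finset.card_lt_card
      constructor
      · exact Finset.filter_subset _ _
      · intro hsub
        have := hsub hh
        rw [Finset.mem_filter] at this
        omega
    omega
  -- pick S r ∈ S with rank r; h ∈ S with rank r; strict monotonicity of rank on S forces equality
  have h1 : (S.filter (fun x => x < pick S r)).card = r := rank_pick hrlt
  have h2 : pick S r ∈ S := pick_mem hrlt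
  by_contra hne
  rcases lt_or_gt_of_ne hne with hlt | hlt
  · -- pick S r < h : then filter(<h) ⊃ filter(<pick) ∪ {pick}
    have : (S.filter (fun x => x < pick S r)).card < (S.filter (fun x => x < h)).card := by
      apply Finset.card_lt_card
      constructor
      · intro x hx
        rw [Finset.mem_filter] at hx ⊢
        exact ⟨hx.1, hx.2.trans hlt⟩
      · intro hsub
        have := hsub (Finset.mem_filter.mpr ⟨h2, hlt⟩)
        rw [Finset.mem_filter] at this
        omega
    omega
  · have : (S.filter (fun x => x < h)).card < (S.filter (fun x => x < pick S r)).card := by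
      apply Finset.card_lt_card
      constructor
      · intro x hx
        rw [Finset.mem_filter] at hx ⊢
        exact ⟨hx.1, hx.2.trans hlt⟩
      · intro hsub
        have := hsub (Finset.mem_filter.mpr ⟨hh, hlt⟩)
        rw [Finset.mem_filter] at this
        omega
    omega
/-! ### The swap construction -/

noncomputable def prtE (E : Finset (ℕ × ℕ)) (j : ℕ) : ℕ := sInf {i | (i, j) ∈ E}

theorem prtE_mem {E : Finset (ℕ × ℕ)} {j : ℕ} (h : rendE E j) : (prtE E j, j) ∈ E :=
  Nat.sInf_mem h

theorem prtE_eq {n : ℕ} {E : Finset (ℕ × ℕ)} (hE : IsDiagram n E) {i j : ℕ}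
    (h : (i, j) ∈ E) : prtE E j = i := by
  have := hE.runiq _ (prtE_mem ⟨i, h⟩) _ h rfl
  simpa using congrArg Prod.fst this

noncomputable def availA (E A : Finset (ℕ × ℕ)) (j : ℕ) : Finset ℕ :=
  (Finset.range (j+1)).filter (fun i => opensE E i ∧ ∀ p ∈ A, p.1 ≠ i)

theorem mem_availA {E A : Finset (ℕ × ℕ)} {j i : ℕ} :
    i ∈ availA E A j ↔ i ≤ j ∧ opensE E i ∧ ∀ p ∈ A, p.1 ≠ i := by
  simp [availA, Finset.mem_range, Nat.lt_succ_iff]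

noncomputable def farE (k : ℕ) (E : Finset (ℕ × ℕ)) (j : ℕ) : Finset ℕ :=
  (availE E j).filter (fun i => i + k ≤ j)

noncomputable def farA (k : ℕ) (E A : Finset (ℕ × ℕ)) (j : ℕ) : Finset ℕ :=
  (availA E A j).filter (fun i => i + k ≤ j)

noncomputable def h2val (k : ℕ) (E A : Finset (ℕ × ℕ)) (j : ℕ) : ℕ :=
  if prtE E j + k ≤ j then
    pick (farA k E A j)
      ((farA k E A j).card - 1 - ((farE k E j).filter (fun x => x < prtE E j)).card)
  else prtE E j

noncomputable def swapAux (k : ℕ) (E : Finset (ℕ × ℕ)) : ℕ → Finset (ℕ × ℕ)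
  | 0 => ∅
  | j+1 => swapAux k E j ∪
      (if rendE E j then {(h2val k E (swapAux k E j) j, j)} else ∅)

noncomputable def swapC (k n : ℕ) (E : Finset (ℕ × ℕ)) : Finset (ℕ × ℕ) :=
  swapAux k E (n + 1)

/-- the invariant carried along the construction -/
structure SwInv (k : ℕ) (E A : Finset (ℕ × ℕ)) (j : ℕ) : Prop where
  mem : ∀ p ∈ A, p.2 < j ∧ rendE E p.2 ∧ opensE E p.1 ∧ p.1 ≤ p.2
  full : ∀ m, m < j → rendE E m → ∃ i, (i, m) ∈ A
  runiq : ∀ p ∈ A, ∀ q ∈ A, p.2 = q.2 → p = q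
  luniq : ∀ p ∈ A, ∀ q ∈ A, p.1 = q.1 → p = q
  near : ∀ i, j < i + k → (i ∈ availA E A j ↔ i ∈ availE E j)
  far : (farA k E A j).card = (farE k E j).card

theorem availE_succ {n : ℕ} {E : Finset (ℕ × ℕ)} (hE : IsDiagram n E) {j i : ℕ} :
    i ∈ availE E (j+1) ↔ ((i = j+1 ∧ opensE E (j+1)) ∨ (i ∈ availE E j ∧ (i, j) ∉ E)) := by
  rw [mem_availE]
  constructor
  · rintro ⟨hij, j', hjj', hedge⟩
    rcases eq_or_lt_of_le hij with rfl | hlt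
    · exact Or.inl ⟨rfl, j', hedge⟩
    · refine Or.inr ⟨mem_availE.mpr ⟨by omega, j', by omega, hedge⟩, fun hc => ?_⟩
      have := hE.luniq _ hedge _ hc rfl
      simp only [Prod.mk.injEq] at this
      omega
  · rintro (⟨rfl, j', hedge⟩ | ⟨hmem, hnotj⟩)
    · have := (hE.bounds _ hedge).2.1
      exact ⟨le_rfl, j', this, hedge⟩
    · rw [mem_availE] at hmem
      obtain ⟨hij, j', hjj', hedge⟩ := hmem
      have : j' ≠ j := fun hc => hnotj (hc ▸ hedge)
      exact ⟨by omega, j', by omega, hedge⟩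

/-- helper: the rank of a member is less than the cardinality -/
theorem rank_lt_card {S : Finset ℕ} {h : ℕ} (hh : h ∈ S) :
    (S.filter (fun x => x < h)).card < S.card := by
  apply Finset.card_lt_card
  constructor
  · exact Finset.filter_subset _ _
  · intro hsub
    have := hsub hh
    rw [Finset.mem_filter] at this
    omega

theorem rank_gt {S : Finset ℕ} {h : ℕ} (hh : h ∈ S) :
    (S.filter (fun x => h < x)).card = S.card - 1 - (S.filter (fun x => x < h)).card := by
  have hsplit := Finset.card_filter_add_card_filter_not
    (s := S) (p := fun x => x < h)
  have : S.filter (fun x => ¬ x < h) = insert h (S.filter (fun x => h < x)) := by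
    ext x
    simp only [Finset.mem_filter, Finset.mem_insert, not_lt]
    constructor
    · rintro ⟨hxS, hge⟩
      rcases eq_or_lt_of_le hge with rfl | hlt
      · exact Or.inl rfl
      · exact Or.inr ⟨hxS, hlt⟩
    · rintro (rfl | ⟨hxS, hlt⟩)
      · exact ⟨hh, le_rfl⟩
      · exact ⟨hxS, hlt.le⟩
  rw [this] at hsplit
  rw [Finset.card_insert_of_notMem (by simp)] at hsplit
  omega
/-! ### the key cardinality step lemma -/

theorem farcard_succ {V V' : Finset ℕ} {j k y : ℕ} (Q : Prop)
    (hV : ∀ i ∈ V, i ≤ j)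
    (hmem : ∀ i, i ∈ V' ↔ (i = j+1 ∧ Q) ∨ (i ∈ V ∧ i ≠ y)) :
    (V'.filter (fun i => i + k ≤ j+1)).card
      = (V.filter (fun i => i + k ≤ j ∧ i ≠ y)).card
        + (V.filter (fun i => i + k = j+1 ∧ i ≠ y)).card
        + (if Q ∧ k = 0 then 1 else 0) := by
  set W := V.filter (fun i => i + k ≤ j + 1 ∧ i ≠ y) with hW
  have hWcard : W.card = (V.filter (fun i => i + k ≤ j ∧ i ≠ y)).card
      + (V.filter (fun i => i + k = j+1 ∧ i ≠ y)).card := by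
    have hsplit := Finset.card_filter_add_card_filter_not
      (s := W) (p := fun i => i + k ≤ j)
    have e1 : W.filter (fun i => i + k ≤ j) = V.filter (fun i => i + k ≤ j ∧ i ≠ y) := by
      ext i
      simp only [hW, Finset.mem_filter]
      constructor
      · rintro ⟨⟨h1, h2, h3⟩, h4⟩; exact ⟨h1, h4, h3⟩
      · rintro ⟨h1, h2, h3⟩; exact ⟨⟨h1, by omega, h3⟩, h2⟩
    have e2 : W.filter (fun i => ¬ i + k ≤ j) = V.filter (fun i => i + k = j+1 ∧ i ≠ y) := by
      ext i
      simp only [hW, Finset.mem_filter]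
      constructor
      · rintro ⟨⟨h1, h2, h3⟩, h4⟩; exact ⟨h1, by omega, h3⟩
      · rintro ⟨h1, h2, h3⟩; exact ⟨⟨h1, by omega, h3⟩, by omega⟩
    rw [e1, e2] at hsplit
    omega
  by_cases hQ0 : Q ∧ k = 0
  · have hset : V'.filter (fun i => i + k ≤ j+1) = insert (j+1) W := by
      ext i
      simp only [Finset.mem_filter, Finset.mem_insert, hW]
      constructor
      · rintro ⟨hi, hfar⟩
        rcases (hmem i).mp hi with ⟨rfl, _⟩ | ⟨hiV, hiy⟩
        · exact Or.inl rfl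
        · exact Or.inr ⟨hiV, hfar, hiy⟩
      · rintro (rfl | ⟨hiV, hfar, hiy⟩)
        · exact ⟨(hmem _).mpr (Or.inl ⟨rfl, hQ0.1⟩), by omega⟩
        · exact ⟨(hmem i).mpr (Or.inr ⟨hiV, hiy⟩), hfar⟩
    rw [hset, Finset.card_insert_of_notMem (by
      simp only [hW, Finset.mem_filter]
      rintro ⟨hmemV, _⟩
      exact absurd (hV _ hmemV) (by omega))]
    rw [if_pos hQ0]
    omega
  · have hset : V'.filter (fun i => i + k ≤ j+1) = W := by
      ext i
      simp only [Finset.mem_filter, hW]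
      constructor
      · rintro ⟨hi, hfar⟩
        rcases (hmem i).mp hi with ⟨rfl, hQ⟩ | ⟨hiV, hiy⟩
        · exact absurd ⟨hQ, by omega⟩ hQ0
        · exact ⟨hiV, hfar, hiy⟩
      · rintro ⟨hiV, hfar, hiy⟩
        exact ⟨(hmem i).mpr (Or.inr ⟨hiV, hiy⟩), hfar⟩
    rw [hset, if_neg hQ0]
    omega

/-! ### properties of the chosen value -/

theorem h2val_spec {n k : ℕ} {E A : Finset (ℕ × ℕ)} {j : ℕ} (hE : IsDiagram n E)
    (hInv : SwInv k E A j) (hrend : rendE E j) :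
    h2val k E A j ∈ availA E A j ∧ (h2val k E A j + k ≤ j ↔ prtE E j + k ≤ j) := by
  set h := prtE E j with hh
  have hmemE : (h, j) ∈ E := prtE_mem hrend
  have hhE : h ∈ availE E j := mem_availE.mpr ⟨(hE.bounds _ hmemE).2.1, j, le_rfl, hmemE⟩
  by_cases hfar : h + k ≤ j
  · have hhF : h ∈ farE k E j := Finset.mem_filter.mpr ⟨hhE, hfar⟩
    have hr : ((farE k E j).filter (fun x => x < h)).card < (farE k E j).card :=
      rank_lt_card hhF
    have hcards : (farA k E A j).card = (farE k E j).card := hInv.far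
    have hidx : (farA k E A j).card - 1 - ((farE k E j).filter (fun x => x < h)).card
        < (farA k E A j).card := by omega
    have hpick := pick_mem hidx
    rw [h2val, if_pos hfar]
    have hpickfar := Finset.mem_filter.mp hpick
    exact ⟨Finset.mem_filter.mp hpick |>.1, by constructor <;> intro <;> [exact hfar;
      exact hpickfar.2]⟩
  · rw [h2val, if_neg hfar]
    refine ⟨(hInv.near h (by omega)).mpr hhE, by tauto⟩

/-! ### the master induction -/

theorem master {n k : ℕ} {E : Finset (ℕ × ℕ)} (hE : IsDiagram n E) :
    ∀ j, SwInv k E (swapAux k E j) j := by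
  intro j
  induction j with
  | zero =>
    have havailE0 : ∀ i, i ∉ availE E 0 := by
      intro i hi
      rw [mem_availE] at hi
      obtain ⟨hi0, j', _, hedge⟩ := hi
      have := (hE.bounds _ hedge).1
      omega
    have havailA0 : ∀ i, i ∉ availA E (swapAux k E 0) 0 := by
      intro i hi
      rw [mem_availA] at hi
      obtain ⟨hi0, ⟨j', hedge⟩, _⟩ := hi
      have := (hE.bounds _ hedge).1
      omega
    refine ⟨?_, ?_, ?_, ?_, ?_, ?_⟩
    · intro p hp; simp [swapAux] at hp
    · intro m hm; omega
    · intro p hp; simp [swapAux] at hp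
    · intro p hp; simp [swapAux] at hp
    · intro i _
      constructor
      · intro hmem; exact absurd hmem (havailA0 i)
      · intro hmem; exact absurd hmem (havailE0 i)
    · have h1 : farA k E (swapAux k E 0) 0 = ∅ := by
        rw [Finset.eq_empty_iff_forall_notMem]
        intro i hi
        exact havailA0 i (Finset.mem_filter.mp hi).1
      have h2 : farE k E 0 = ∅ := by
        rw [Finset.eq_empty_iff_forall_notMem]
        intro i hi
        exact havailE0 i (Finset.mem_filter.mp hi).1
      rw [h1, h2]
  | succ j ih =>
    set A := swapAux k E j with hA
    set h := prtE E j with hhdef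
    set x := h2val k E A j with hxdef
    -- the new configuration
    have hstep : swapAux k E (j+1) = A ∪ (if rendE E j then {(x, j)} else ∅) := rfl
    set yA := if rendE E j then x else j + 1 with hyA
    set yE := if rendE E j then h else j + 1 with hyE
    by_cases hrend : rendE E j
    · -- right endpoint at j
      obtain ⟨hxavail, hxfar_iff⟩ := h2val_spec hE ih hrend
      have hxj : x ≤ j := (mem_availA.mp hxavail).1
      have hmemE : (h, j) ∈ E := prtE_mem hrend
      have hhj : h ≤ j := (hE.bounds _ hmemE).2.1
      have hhE : h ∈ availE E j := mem_availE.mpr ⟨hhj, j, le_rfl, hmemE⟩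
      have hA' : swapAux k E (j+1) = A ∪ {(x, j)} := by rw [hstep, if_pos hrend]
      have hmemA' : ∀ p, p ∈ swapAux k E (j+1) ↔ p ∈ A ∨ p = (x, j) := by
        intro p; rw [hA']; simp [or_comm]
      -- membership in the new avail (A side)
      have memA' : ∀ i, i ∈ availA E (swapAux k E (j+1)) (j+1) ↔
          ((i = j+1 ∧ opensE E (j+1)) ∨ (i ∈ availA E A j ∧ i ≠ x)) := by
        intro i
        rw [mem_availA]
        constructor
        · rintro ⟨hij, hop, hnc⟩
          rcases eq_or_lt_of_le hij with rfl | hlt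
          · exact Or.inl ⟨rfl, hop⟩
          · refine Or.inr ⟨mem_availA.mpr ⟨by omega, hop, fun p hp => hnc p ((hmemA' p).mpr (Or.inl hp))⟩, ?_⟩
            have := hnc (x, j) ((hmemA' _).mpr (Or.inr rfl))
            simp only at this
            exact fun hc => this hc.symm
        · rintro (⟨rfl, hop⟩ | ⟨hmem, hne⟩)
          · refine ⟨le_rfl, hop, fun p hp => ?_⟩
            rcases (hmemA' p).mp hp with hp | rfl
            · have := (ih.mem p hp).1
              have := (ih.mem p hp).2.2.2
              omega
            · simpa using (by omega : x ≠ j + 1)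
          · rw [mem_availA] at hmem
            refine ⟨by omega, hmem.2.1, fun p hp => ?_⟩
            rcases (hmemA' p).mp hp with hp | rfl
            · exact hmem.2.2 p hp
            · simp only; exact hne.symm
      -- membership in the new avail (E side)
      have memE' : ∀ i, i ∈ availE E (j+1) ↔
          ((i = j+1 ∧ opensE E (j+1)) ∨ (i ∈ availE E j ∧ i ≠ h)) := by
        intro i
        rw [availE_succ hE]
        apply or_congr Iff.rfl
        apply and_congr Iff.rfl
        constructor
        · intro hnotE
          rintro rfl
          exact hnotE hmemE
        · intro hne hc
          exact hne (prtE_eq hE hc).symm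
      constructor
      · -- mem
        intro p hp
        rcases (hmemA' p).mp hp with hp | rfl
        · have := ih.mem p hp
          exact ⟨by omega, this.2.1, this.2.2.1, this.2.2.2⟩
        · exact ⟨by omega, hrend, (mem_availA.mp hxavail).2.1, hxj⟩
      · -- full
        intro m hm hrm
        rcases eq_or_lt_of_le (Nat.lt_succ_iff.mp hm) with rfl | hlt
        · exact ⟨x, (hmemA' _).mpr (Or.inr rfl)⟩
        · obtain ⟨i, hi⟩ := ih.full m hlt hrm
          exact ⟨i, (hmemA' _).mpr (Or.inl hi)⟩
      · -- runiq
        intro p hp q hq heq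
        rcases (hmemA' p).mp hp with hp' | rfl <;> rcases (hmemA' q).mp hq with hq' | rfl
        · exact ih.runiq p hp' q hq' heq
        · exact absurd heq (by have := (ih.mem p hp').1; simp; omega)
        · exact absurd heq (by have := (ih.mem q hq').1; simp; omega)
        · rfl
      · -- luniq
        intro p hp q hq heq
        rcases (hmemA' p).mp hp with hp' | rfl <;> rcases (hmemA' q).mp hq with hq' | rfl
        · exact ih.luniq p hp' q hq' heq
        · exact absurd heq (by
            simp only
            exact fun hc => (mem_availA.mp hxavail).2.2 p hp' hc)
        · exact absurd heq (by
            simp only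
            exact fun hc => (mem_availA.mp hxavail).2.2 q hq' hc.symm)
        · rfl
      · -- near
        intro i hnear
        rw [memA' i, memE' i]
        apply or_congr Iff.rfl
        have hInear : j < i + k := by omega
        apply and_congr (ih.near i hInear)
        by_cases hfar : h + k ≤ j
        · -- both x and h are far, i is near, so both inequalities hold trivially
          have hxfar : x + k ≤ j := hxfar_iff.mpr hfar
          constructor
          · intro _; omega
          · intro _; omega
        · -- x = h
          have : x = h := by rw [hxdef, h2val, if_neg hfar]
          rw [this]
      · -- far
        have hcardA := farcard_succ (V := availA E A j)
          (V' := availA E (swapAux k E (j+1)) (j+1)) (j := j) (k := k) (y := x)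
          (opensE E (j+1)) (fun i hi => (mem_availA.mp hi).1) memA'
        have hcardE := farcard_succ (V := availE E j)
          (V' := availE E (j+1)) (j := j) (k := k) (y := h)
          (opensE E (j+1)) (fun i hi => (mem_availE.mp hi).1) memE'
        rw [farA, farE, hcardA, hcardE]
        congr 1
        congr 1
        · -- far parts minus the removed element have equal cards
          by_cases hfar : h + k ≤ j
          · have hxfar : x + k ≤ j := hxfar_iff.mpr hfar
            have hxF : x ∈ farA k E A j := Finset.mem_filter.mpr ⟨hxavail, hxfar⟩
            have hhF : h ∈ farE k E j := Finset.mem_filter.mpr ⟨hhE, hfar⟩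
            have eA : (availA E A j).filter (fun i => i + k ≤ j ∧ i ≠ x)
                = (farA k E A j).erase x := by
              ext i
              simp only [Finset.mem_filter, Finset.mem_erase, farA]
              tauto
            have eE : (availE E j).filter (fun i => i + k ≤ j ∧ i ≠ h)
                = (farE k E j).erase h := by
              ext i
              simp only [Finset.mem_filter, Finset.mem_erase, farE]
              tauto
            rw [eA, eE, Finset.card_erase_of_mem hxF, Finset.card_erase_of_mem hhF, ih.far]
          · have hxel : x = h := by rw [hxdef, h2val, if_neg hfar]
            have eA : (availA E A j).filter (fun i => i + k ≤ j ∧ i ≠ x)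
                = farA k E A j := by
              ext i
              simp only [Finset.mem_filter, farA]
              constructor
              · rintro ⟨h1, h2, _⟩; exact ⟨h1, h2⟩
              · rintro ⟨h1, h2⟩; exact ⟨h1, h2, by rw [hxel]; omega⟩
            have eE : (availE E j).filter (fun i => i + k ≤ j ∧ i ≠ h)
                = farE k E j := by
              ext i
              simp only [Finset.mem_filter, farE]
              constructor
              · rintro ⟨h1, h2, _⟩; exact ⟨h1, h2⟩
              · rintro ⟨h1, h2⟩; exact ⟨h1, h2, by omega⟩
            rw [eA, eE, ih.far]
        · -- migrant sets are equal
          congr 1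
          ext i
          simp only [Finset.mem_filter]
          constructor
          · rintro ⟨hmem, hmig, hne⟩
            have hnear : j < i + k := by omega
            refine ⟨(ih.near i hnear).mp hmem, hmig, ?_⟩
            by_cases hfar : h + k ≤ j
            · omega
            · have : x = h := by rw [hxdef, h2val, if_neg hfar]
              rw [← this]; exact hne
          · rintro ⟨hmem, hmig, hne⟩
            have hnear : j < i + k := by omega
            refine ⟨(ih.near i hnear).mpr hmem, hmig, ?_⟩
            by_cases hfar : h + k ≤ j
            · have hxfar : x + k ≤ j := hxfar_iff.mpr hfar
              omega
            · have : x = h := by rw [hxdef, h2val, if_neg hfar]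
              rw [this]; exact hne
    · -- no right endpoint at j
      have hA' : swapAux k E (j+1) = A := by rw [hstep, if_neg hrend]; simp
      have memA' : ∀ i, i ∈ availA E (swapAux k E (j+1)) (j+1) ↔
          ((i = j+1 ∧ opensE E (j+1)) ∨ (i ∈ availA E A j ∧ i ≠ j + 1)) := by
        intro i
        rw [hA', mem_availA]
        constructor
        · rintro ⟨hij, hop, hnc⟩
          rcases eq_or_lt_of_le hij with rfl | hlt
          · exact Or.inl ⟨rfl, hop⟩
          · exact Or.inr ⟨mem_availA.mpr ⟨by omega, hop, hnc⟩, by omega⟩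
        · rintro (⟨rfl, hop⟩ | ⟨hmem, _⟩)
          · refine ⟨le_rfl, hop, fun p hp => ?_⟩
            have h1 := (ih.mem p hp).1
            have h2 := (ih.mem p hp).2.2.2
            omega
          · rw [mem_availA] at hmem
            exact ⟨by omega, hmem.2.1, hmem.2.2⟩
      have memE' : ∀ i, i ∈ availE E (j+1) ↔
          ((i = j+1 ∧ opensE E (j+1)) ∨ (i ∈ availE E j ∧ i ≠ j + 1)) := by
        intro i
        rw [availE_succ hE]
        apply or_congr Iff.rfl
        constructor
        · rintro ⟨hmem, _⟩
          exact ⟨hmem, by have := (mem_availE.mp hmem).1; omega⟩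
        · rintro ⟨hmem, _⟩
          exact ⟨hmem, fun hc => hrend ⟨i, hc⟩⟩
      refine ⟨?_, ?_, ?_, ?_, ?_, ?_⟩
      · intro p hp
        rw [hA'] at hp
        have := ih.mem p hp
        exact ⟨by omega, this.2.1, this.2.2.1, this.2.2.2⟩
      · intro m hm hrm
        rcases eq_or_lt_of_le (Nat.lt_succ_iff.mp hm) with rfl | hlt
        · exact absurd hrm hrend
        · rw [hA']; exact ih.full m hlt hrm
      · rw [hA']; exact ih.runiq
      · rw [hA']; exact ih.luniq
      · intro i hnear
        rw [memA' i, memE' i]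
        exact or_congr Iff.rfl (and_congr (ih.near i (by omega)) Iff.rfl)
      · have hcardA := farcard_succ (V := availA E A j)
          (V' := availA E (swapAux k E (j+1)) (j+1)) (j := j) (k := k) (y := j + 1)
          (opensE E (j+1)) (fun i hi => (mem_availA.mp hi).1) memA'
        have hcardE := farcard_succ (V := availE E j)
          (V' := availE E (j+1)) (j := j) (k := k) (y := j + 1)
          (opensE E (j+1)) (fun i hi => (mem_availE.mp hi).1) memE'
        rw [farA, farE, hcardA, hcardE]
        congr 1
        congr 1
        · have eA : (availA E A j).filter (fun i => i + k ≤ j ∧ i ≠ j + 1)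
              = farA k E A j := by
            ext i
            simp only [Finset.mem_filter, farA]
            constructor
            · rintro ⟨h1, h2, _⟩; exact ⟨h1, h2⟩
            · rintro ⟨h1, h2⟩
              exact ⟨h1, h2, by have := (mem_availA.mp h1).1; omega⟩
          have eE : (availE E j).filter (fun i => i + k ≤ j ∧ i ≠ j + 1)
              = farE k E j := by
            ext i
            simp only [Finset.mem_filter, farE]
            constructor
            · rintro ⟨h1, h2, _⟩; exact ⟨h1, h2⟩
            · rintro ⟨h1, h2⟩
              exact ⟨h1, h2, by have := (mem_availE.mp h1).1; omega⟩
          rw [eA, eE, ih.far]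
        · congr 1
          ext i
          simp only [Finset.mem_filter]
          constructor
          · rintro ⟨hmem, hmig, hne⟩
            exact ⟨(ih.near i (by omega)).mp hmem, hmig, hne⟩
          · rintro ⟨hmem, hmig, hne⟩
            exact ⟨(ih.near i (by omega)).mpr hmem, hmig, hne⟩
/-! ### Properties of the completed swap -/

theorem swapAux_mono_filter {n k : ℕ} {E : Finset (ℕ × ℕ)} (hE : IsDiagram n E) :
    ∀ j m, j ≤ m → swapAux k E j = (swapAux k E m).filter (fun p => p.2 < j) := by
  intro j m hjm
  induction m with
  | zero =>
    have : j = 0 := by omega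
    subst this
    simp [swapAux]
  | succ m ihm =>
    rcases eq_or_lt_of_le hjm with rfl | hlt
    · -- j = m+1 : filter is everything
      ext p
      simp only [Finset.mem_filter]
      constructor
      · intro hp
        exact ⟨hp, ((master hE (m+1)).mem p hp).1⟩
      · exact fun hp => hp.1
    · have hjm' : j ≤ m := by omega
      rw [ihm hjm']
      have hstep : swapAux k E (m+1) = swapAux k E m ∪
          (if rendE E m then {(h2val k E (swapAux k E m) m, m)} else ∅) := rfl
      rw [hstep]
      ext p
      simp only [Finset.mem_filter, Finset.mem_union]
      constructor
      · rintro ⟨hp, hlt'⟩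
        exact ⟨Or.inl hp, hlt'⟩
      · rintro ⟨hp | hp, hlt'⟩
        · exact ⟨hp, hlt'⟩
        · exfalso
          rcases Finset.mem_singleton.mp (by
            rcases Classical.em (rendE E m) with hr | hr
            · rwa [if_pos hr] at hp
            · rw [if_neg hr] at hp; exact absurd hp (Finset.notMem_empty _)) with heq
          subst heq
          simp only at hlt'
          omega

theorem availE_top {n : ℕ} {E : Finset (ℕ × ℕ)} (hE : IsDiagram n E) :
    availE E (n+1) = ∅ := by
  rw [Finset.eq_empty_iff_forall_notMem]
  intro i hi
  rw [mem_availE] at hi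
  obtain ⟨_, j', hj', hedge⟩ := hi
  have := (hE.bounds _ hedge).2.2
  omega

theorem availA_top {n k : ℕ} {E : Finset (ℕ × ℕ)} (hE : IsDiagram n E) :
    availA E (swapAux k E (n+1)) (n+1) = ∅ := by
  have hInv := master (k := k) hE (n+1)
  rw [Finset.eq_empty_iff_forall_notMem]
  intro i hi
  by_cases hnear : n + 1 < i + k
  · have := (hInv.near i hnear).mp hi
    rw [availE_top hE] at this
    exact absurd this (Finset.notMem_empty _)
  · have hfarA : i ∈ farA k E (swapAux k E (n+1)) (n+1) :=
      Finset.mem_filter.mpr ⟨hi, by omega⟩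
    have h0 : (farE k E (n+1)).card = 0 := by
      rw [Finset.card_eq_zero, Finset.eq_empty_iff_forall_notMem]
      intro x hx
      rw [farE, availE_top hE] at hx
      simp at hx
    have := hInv.far
    rw [h0, Finset.card_eq_zero] at this
    rw [this] at hfarA
    exact absurd hfarA (Finset.notMem_empty _)

theorem opens_swap {n k : ℕ} {E : Finset (ℕ × ℕ)} (hE : IsDiagram n E) (i : ℕ) :
    opensE (swapC k n E) i ↔ opensE E i := by
  constructor
  · rintro ⟨j', hj'⟩
    exact ((master (k := k) hE (n+1)).mem _ hj').2.2.1
  · rintro ⟨j₀, hedge⟩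
    have hb := hE.bounds _ hedge
    simp only at hb
    have hne : i ∉ availA E (swapAux k E (n+1)) (n+1) := by
      rw [availA_top hE]; exact Finset.notMem_empty i
    rw [mem_availA] at hne
    push_neg at hne
    obtain ⟨p, hp, hp1⟩ := hne (by omega) ⟨j₀, hedge⟩
    exact ⟨p.2, by rw [← hp1]; exact hp⟩

theorem rend_swap {n k : ℕ} {E : Finset (ℕ × ℕ)} (hE : IsDiagram n E) (j : ℕ) :
    rendE (swapC k n E) j ↔ rendE E j := by
  constructor
  · rintro ⟨i, hi⟩
    exact ((master (k := k) hE (n+1)).mem _ hi).2.1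
  · intro hr
    obtain ⟨i0, hedge⟩ := hr
    have : j < n + 1 := by have := (hE.bounds _ hedge).2.2; omega
    obtain ⟨i, hi⟩ := (master (k := k) hE (n+1)).full j this ⟨i0, hedge⟩
    exact ⟨i, hi⟩

theorem avail_swap_match {n k : ℕ} {E : Finset (ℕ × ℕ)} (hE : IsDiagram n E) {j : ℕ}
    (hj : j ≤ n + 1) :
    availE (swapC k n E) j = availA E (swapAux k E j) j := by
  have hInv := master (k := k) hE (n+1)
  have hfilt := swapAux_mono_filter (k := k) hE j (n+1) hj
  ext i
  rw [mem_availE, mem_availA]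
  constructor
  · rintro ⟨hij, j', hjj', hedge⟩
    refine ⟨hij, (hInv.mem _ hedge).2.2.1, fun p hp hp1 => ?_⟩
    rw [hfilt, Finset.mem_filter] at hp
    have := hInv.luniq p hp.1 (i, j') hedge hp1
    rw [this] at hp
    simp only at hp
    omega
  · rintro ⟨hij, hop, hnc⟩
    obtain ⟨j', hj'⟩ := (opens_swap (k := k) hE i).mpr hop
    refine ⟨hij, j', ?_, hj'⟩
    by_contra hlt
    push_neg at hlt
    have : (i, j') ∈ swapAux k E j := by
      rw [hfilt, Finset.mem_filter]
      exact ⟨hj', by omega⟩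
    exact hnc _ this rfl

theorem isDiagram_swap {n k : ℕ} {E : Finset (ℕ × ℕ)} (hE : IsDiagram n E) :
    IsDiagram n (swapC k n E) := by
  have hInv := master (k := k) hE (n+1)
  constructor
  · intro p hp
    have h1 := hInv.mem p hp
    obtain ⟨i0, hedge⟩ := h1.2.1
    obtain ⟨j₀, hedge'⟩ := h1.2.2.1
    have hb1 := hE.bounds _ hedge
    have hb2 := hE.bounds _ hedge'
    simp only at hb1 hb2
    exact ⟨by omega, h1.2.2.2, by omega⟩
  · exact hInv.runiq
  · exact hInv.luniq
  · intro v h1 hn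
    rcases hE.cover v h1 hn with ⟨j₀, hedge⟩ | ⟨i0, hedge⟩
    · obtain ⟨j', hj'⟩ := (opens_swap (k := k) hE v).mpr ⟨j₀, hedge⟩
      exact Or.inl ⟨j', hj'⟩
    · obtain ⟨i, hi⟩ := (rend_swap (k := k) hE v).mpr ⟨i0, hedge⟩
      exact Or.inr ⟨i, hi⟩

theorem prt_swap {n k : ℕ} {E : Finset (ℕ × ℕ)} (hE : IsDiagram n E) {j : ℕ}
    (hr : rendE E j) :
    (h2val k E (swapAux k E j) j, j) ∈ swapC k n E ∧
      prtE (swapC k n E) j = h2val k E (swapAux k E j) j := by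
  obtain ⟨i0, hedge⟩ := hr
  have hjn : j ≤ n := (hE.bounds _ hedge).2.2
  have hmem : (h2val k E (swapAux k E j) j, j) ∈ swapAux k E (j+1) := by
    have hstep : swapAux k E (j+1) = swapAux k E j ∪
        (if rendE E j then {(h2val k E (swapAux k E j) j, j)} else ∅) := rfl
    rw [hstep, if_pos ⟨i0, hedge⟩]
    exact Finset.mem_union_right _ (Finset.mem_singleton_self _)
  have hsub : swapAux k E (j+1) ⊆ swapC k n E := by
    rw [swapAux_mono_filter (k := k) hE (j+1) (n+1) (by omega)]
    exact Finset.filter_subset _ _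
  exact ⟨hsub hmem, prtE_eq (isDiagram_swap hE) (hsub hmem)⟩
/-! ### per-step statistic swap -/

theorem step_stats {n k : ℕ} {E : Finset (ℕ × ℕ)} (hE : IsDiagram n E) {j : ℕ}
    (hr : rendE E j) :
    (((availA E (swapAux k E j) j).filter
        (fun i => h2val k E (swapAux k E j) j < i ∧ i + k ≤ j)).card
      = if prtE E j + k ≤ j then ((availE E j).filter (fun i => i < prtE E j)).card else 0)
    ∧ ((if h2val k E (swapAux k E j) j + k ≤ j then
          ((availA E (swapAux k E j) j).filter
            (fun i => i < h2val k E (swapAux k E j) j)).card else 0)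
      = ((availE E j).filter (fun i => prtE E j < i ∧ i + k ≤ j)).card) := by
  set A := swapAux k E j with hA
  set h := prtE E j with hh
  set x := h2val k E A j with hx
  have hInv := master (k := k) hE j
  have hmemE : (h, j) ∈ E := prtE_mem hr
  have hhj : h ≤ j := (hE.bounds _ hmemE).2.1
  have hhE : h ∈ availE E j := mem_availE.mpr ⟨hhj, j, le_rfl, hmemE⟩
  set F := farE k E j with hF
  set F' := farA k E A j with hF'
  have hc : F'.card = F.card := hInv.far
  by_cases hfar : h + k ≤ j
  · have hhF : h ∈ F := Finset.mem_filter.mpr ⟨hhE, hfar⟩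
    set r := (F.filter (fun i => i < h)).card with hr'
    have hrc : r < F.card := rank_lt_card hhF
    have hidx : F'.card - 1 - r < F'.card := by omega
    have hxpick : x = pick F' (F'.card - 1 - r) := by rw [hx, h2val, if_pos hfar]
    have hxF' : x ∈ F' := hxpick ▸ pick_mem hidx
    have hxrank : (F'.filter (fun i => i < x)).card = F'.card - 1 - r := by
      rw [hxpick]; exact rank_pick hidx
    have hxfar : x + k ≤ j := (Finset.mem_filter.mp hxF').2
    constructor
    · -- crossing side
      have e1 : (availA E A j).filter (fun i => x < i ∧ i + k ≤ j)
          = F'.filter (fun i => x < i) := by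
        ext i
        simp only [Finset.mem_filter, hF', farA]
        tauto
      have e2 : (availE E j).filter (fun i => i < h) = F.filter (fun i => i < h) := by
        ext i
        simp only [Finset.mem_filter, hF, farE]
        constructor
        · rintro ⟨h1, h2⟩; exact ⟨⟨h1, by omega⟩, h2⟩
        · rintro ⟨⟨h1, _⟩, h2⟩; exact ⟨h1, h2⟩
      rw [e1, if_pos hfar, e2, rank_gt hxF', hxrank, ← hr']
      omega
    · -- nesting side
      have e1 : (availA E A j).filter (fun i => i < x) = F'.filter (fun i => i < x) := by
        ext i
        simp only [Finset.mem_filter, hF', farA]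
        constructor
        · rintro ⟨h1, h2⟩; exact ⟨⟨h1, by omega⟩, h2⟩
        · rintro ⟨⟨h1, _⟩, h2⟩; exact ⟨h1, h2⟩
      have e2 : (availE E j).filter (fun i => h < i ∧ i + k ≤ j)
          = F.filter (fun i => h < i) := by
        ext i
        simp only [Finset.mem_filter, hF, farE]
        tauto
      rw [if_pos hxfar, e1, e2, rank_gt hhF, hxrank, ← hr']
      omega
  · have hxh : x = h := by rw [hx, h2val, if_neg hfar]
    constructor
    · rw [if_neg hfar]
      rw [Finset.card_eq_zero, Finset.filter_eq_empty_iff]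
      intro i _
      rw [hxh]
      omega
    · rw [hxh, if_neg hfar]
      symm
      rw [Finset.card_eq_zero, Finset.filter_eq_empty_iff]
      intro i _
      omega

/-! ### reindexing sums over edges by right endpoints -/

theorem sum_right_endpoints {n : ℕ} {F : Finset (ℕ × ℕ)} (hF : IsDiagram n F)
    (g : ℕ × ℕ → ℕ) :
    ∑ e ∈ F, g e = ∑ j ∈ (Finset.range (n+1)).filter (rendE F), g (prtE F j, j) := by
  apply Finset.sum_nbij' (i := fun e => e.2) (j := fun j => (prtE F j, j))
  · intro e he
    rw [Finset.mem_filter, Finset.mem_range]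
    exact ⟨by have := (hF.bounds _ he).2.2; omega, ⟨e.1, by rwa [Prod.mk.eta]⟩⟩
  · intro j hj
    rw [Finset.mem_filter] at hj
    exact prtE_mem hj.2
  · intro e he
    have : (e.1, e.2) ∈ F := by rwa [Prod.mk.eta]
    rw [prtE_eq hF this]
  · intro j hj
    rfl
  · intro e he
    have : (e.1, e.2) ∈ F := by rwa [Prod.mk.eta]
    rw [prtE_eq hF this, Prod.mk.eta]

theorem dcrD_swap {n k : ℕ} {E : Finset (ℕ × ℕ)} (hE : IsDiagram n E) :
    dcrD k (swapC k n E) = dneD k E := by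
  have hS := isDiagram_swap (k := k) hE
  rw [dcrD, dneD]
  rw [sum_right_endpoints hS, sum_right_endpoints hE]
  rw [show (Finset.range (n+1)).filter (rendE (swapC k n E))
      = (Finset.range (n+1)).filter (rendE E) from by
    ext j; simp only [Finset.mem_filter]; rw [rend_swap hE]]
  apply Finset.sum_congr rfl
  intro j hj
  rw [Finset.mem_filter, Finset.mem_range] at hj
  obtain ⟨hjn, hr⟩ := hj
  rw [locCR hS (prtE_mem ((rend_swap (k := k) hE j).mpr hr)),
      locNE hE (prtE_mem hr)]
  rw [(prt_swap (k := k) hE hr).2, avail_swap_match hE (by omega)]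
  exact (step_stats hE hr).1

theorem dneD_swap {n k : ℕ} {E : Finset (ℕ × ℕ)} (hE : IsDiagram n E) :
    dneD k (swapC k n E) = dcrD k E := by
  have hS := isDiagram_swap (k := k) hE
  rw [dcrD, dneD]
  rw [sum_right_endpoints hS, sum_right_endpoints hE]
  rw [show (Finset.range (n+1)).filter (rendE (swapC k n E))
      = (Finset.range (n+1)).filter (rendE E) from by
    ext j; simp only [Finset.mem_filter]; rw [rend_swap hE]]
  apply Finset.sum_congr rfl
  intro j hj
  rw [Finset.mem_filter, Finset.mem_range] at hj
  obtain ⟨hjn, hr⟩ := hj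
  rw [locNE hS (prtE_mem ((rend_swap (k := k) hE j).mpr hr)),
      locCR hE (prtE_mem hr)]
  rw [(prt_swap (k := k) hE hr).2, avail_swap_match hE (by omega)]
  exact (step_stats hE hr).2
/-! ### the swap is an involution -/

theorem swap_invol {n k : ℕ} {E : Finset (ℕ × ℕ)} (hE : IsDiagram n E) :
    swapC k n (swapC k n E) = E := by
  set S := swapC k n E with hSdef
  have hS : IsDiagram n S := isDiagram_swap hE
  have key : ∀ j, j ≤ n + 1 → swapAux k S j = E.filter (fun p => p.2 < j) := by
    intro j
    induction j with
    | zero =>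
      intro _
      ext p
      simp [swapAux]
    | succ j ihj =>
      intro hj1
      have hjn : j ≤ n := by omega
      have ihj' := ihj (by omega)
      have hstep : swapAux k S (j+1) = swapAux k S j ∪
          (if rendE S j then {(h2val k S (swapAux k S j) j, j)} else ∅) := rfl
      by_cases hr : rendE E j
      · have hrS : rendE S j := (rend_swap hE j).mpr hr
        have hmemE : (prtE E j, j) ∈ E := prtE_mem hr
        -- the rebuilt avail equals the original avail
        have havT : availA S (swapAux k S j) j = availE E j := by
          rw [ihj']
          ext i
          rw [mem_availA, mem_availE]
          constructor
          · rintro ⟨hij, hop, hnc⟩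
            obtain ⟨j₀, hedge⟩ := (opens_swap hE i).mp hop
            refine ⟨hij, j₀, ?_, hedge⟩
            by_contra hlt
            push_neg at hlt
            exact hnc (i, j₀) (Finset.mem_filter.mpr ⟨hedge, by omega⟩) rfl
          · rintro ⟨hij, j', hjj', hedge⟩
            refine ⟨hij, (opens_swap hE i).mpr ⟨j', hedge⟩, fun p hp hp1 => ?_⟩
            rw [Finset.mem_filter] at hp
            have := hE.luniq p hp.1 (i, j') hedge hp1
            rw [this] at hp
            simp only at hp
            omega
        -- identify the new edge
        have hnew : h2val k S (swapAux k S j) j = prtE E j := by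
          set h := prtE E j with hh
          set A := swapAux k E j with hA
          set x := h2val k E A j with hx
          have hInv := master (k := k) hE j
          have hprtS : prtE S j = x := (prt_swap (k := k) hE hr).2
          have hfarT : farA k S (swapAux k S j) j = farE k E j := by
            rw [farA, farE, havT]
          have hfarS : farE k S j = farA k E A j := by
            rw [farE, farA, avail_swap_match hE (by omega)]
          by_cases hfar : h + k ≤ j
          · -- h is far; x = pick ... and the rebuild returns h
            have hhE : h ∈ availE E j :=
              mem_availE.mpr ⟨(hE.bounds _ hmemE).2.1, j, le_rfl, hmemE⟩
            have hhF : h ∈ farE k E j := Finset.mem_filter.mpr ⟨hhE, hfar⟩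
            set r := ((farE k E j).filter (fun i => i < h)).card with hrdef
            have hrc : r < (farE k E j).card := rank_lt_card hhF
            have hc : (farA k E A j).card = (farE k E j).card := hInv.far
            have hidx : (farA k E A j).card - 1 - r < (farA k E A j).card := by omega
            have hxpick : x = pick (farA k E A j) ((farA k E A j).card - 1 - r) := by
              rw [hx, h2val, if_pos hfar]
            have hxF' : x ∈ farA k E A j := hxpick ▸ pick_mem hidx
            have hxfar : x + k ≤ j := (Finset.mem_filter.mp hxF').2
            have hxrank : ((farA k E A j).filter (fun i => i < x)).card
                = (farA k E A j).card - 1 - r := by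
              rw [hxpick]; exact rank_pick hidx
            rw [h2val]
            rw [hprtS]
            rw [if_pos hxfar]
            rw [hfarT]
            rw [hfarS]
            rw [hxrank]
            rw [hc]
            have : (farE k E j).card - 1 - ((farE k E j).card - 1 - r) = r := by omega
            rw [this, hrdef]
            exact pick_rank hhF
          · have hxh : x = h := by rw [hx, h2val, if_neg hfar]
            rw [h2val, hprtS, hxh, if_neg hfar]
        rw [hstep, if_pos hrS, hnew, ihj']
        ext p
        simp only [Finset.mem_union, Finset.mem_filter, Finset.mem_singleton]
        constructor
        · rintro (⟨hp, hlt⟩ | rfl)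
          · exact ⟨hp, by omega⟩
          · exact ⟨hmemE, by omega⟩
        · rintro ⟨hp, hlt⟩
          rcases Nat.lt_succ_iff_lt_or_eq.mp hlt with hlt' | heq
          · exact Or.inl ⟨hp, hlt'⟩
          · right
            have : p = (prtE E p.2, p.2) := by
              have hmem : (p.1, p.2) ∈ E := by rwa [Prod.mk.eta]
              rw [prtE_eq hE hmem, Prod.mk.eta]
            rw [this, heq]
      · have hrS : ¬ rendE S j := fun hc => hr ((rend_swap hE j).mp hc)
        rw [hstep, if_neg hrS, ihj']
        ext p
        simp only [Finset.mem_union, Finset.mem_filter, Finset.notMem_empty, or_false]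
        constructor
        · rintro ⟨hp, hlt⟩
          exact ⟨hp, by omega⟩
        · rintro ⟨hp, hlt⟩
          refine ⟨hp, ?_⟩
          rcases Nat.lt_succ_iff_lt_or_eq.mp hlt with hlt' | heq
          · exact hlt'
          · exact absurd ⟨p.1, by rw [← heq]; rwa [Prod.mk.eta]⟩ hr
    
  have := key (n+1) le_rfl
  rw [swapC, this]
  ext p
  simp only [Finset.mem_filter]
  constructor
  · exact fun h => h.1
  · intro hp
    exact ⟨hp, by have := (hE.bounds _ hp).2.2; omega⟩
/-! ### the involution on set partitions and the main theorem -/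

noncomputable def phi (k n : ℕ) (P : SP n) : SP n := mkPart n (swapC k n (encP P))

theorem isEdge_phi {k n : ℕ} (P : SP n) {i j : ℕ} :
    IsEdge (phi k n P) i j ↔ (i, j) ∈ swapC k n (encP P) :=
  isEdge_mkPart_iff (isDiagram_swap (isDiagram_encP P))

theorem encP_phi {k n : ℕ} (P : SP n) : encP (phi k n P) = swapC k n (encP P) := by
  ext ⟨i, j⟩
  rw [mem_encP, isEdge_phi]

theorem phi_invol {k n : ℕ} : Function.Involutive (phi k n) := by
  intro P
  rw [phi, encP_phi, swap_invol (isDiagram_encP P), mkPart_encP]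

theorem dcr_phi {k n : ℕ} (P : SP n) : dcr k (phi k n P) = dne k P := by
  rw [show dcr k (phi k n P) = Set.ncard {p : (ℕ × ℕ) × ℕ × ℕ |
      IsEdge (phi k n P) p.1.1 p.1.2 ∧ IsEdge (phi k n P) p.2.1 p.2.2
        ∧ CrossPair k p.1 p.2} from rfl]
  rw [dcr_eq_dcrD (fun i j => isEdge_phi P), dcrD_swap (isDiagram_encP P)]
  rw [show dne k P = Set.ncard {p : (ℕ × ℕ) × ℕ × ℕ |
      IsEdge P p.1.1 p.1.2 ∧ IsEdge P p.2.1 p.2.2 ∧ NestPair k p.1 p.2} from rfl]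
  rw [dne_eq_dneD (fun i j => mem_encP.symm)]

theorem dne_phi {k n : ℕ} (P : SP n) : dne k (phi k n P) = dcr k P := by
  rw [show dne k (phi k n P) = Set.ncard {p : (ℕ × ℕ) × ℕ × ℕ |
      IsEdge (phi k n P) p.1.1 p.1.2 ∧ IsEdge (phi k n P) p.2.1 p.2.2
        ∧ NestPair k p.1 p.2} from rfl]
  rw [dne_eq_dneD (fun i j => isEdge_phi P), dneD_swap (isDiagram_encP P)]
  rw [show dcr k P = Set.ncard {p : (ℕ × ℕ) × ℕ × ℕ |
      IsEdge P p.1.1 p.1.2 ∧ IsEdge P p.2.1 p.2.2 ∧ CrossPair k p.1 p.2} from rfl]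
  rw [dcr_eq_dcrD (fun i j => mem_encP.symm)]


open MvPolynomial in
/-- The joint distribution of `k`-distant crossings and `k`-distant nestings
over set partitions of `[n]` is symmetric. -/
theorem distant_crossings_nestings_symmetric (k n : ℕ) (hn : 0 < n) :
    ∑ P : SP n, (X 0 : MvPolynomial (Fin 2) ℤ) ^ dcr k P * X 1 ^ dne k P =
      ∑ P : SP n, (X 0 : MvPolynomial (Fin 2) ℤ) ^ dne k P * X 1 ^ dcr k P := by
  symm
  apply Fintype.sum_bijective (phi k n) (phi_invol.bijective)
  intro P
  rw [dcr_phi, dne_phi]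
end

section
/- For every positive integer k ≥ 1 and n ≥ 1, there exists a type-preserving involution φ_k on partitions of [n] exchanging the statistics dcr_k and dne_k; here type-preserving means φ_k(π) has the same sets of openers, closers, singletons, and transients as π. -/
open Finset

namespace KZ
open scoped Classical

/-- rank from above / below -/
def rkA (F : Finset ℕ) (i : ℕ) : ℕ := (F.filter (fun x => i < x)).card
def rkB (F : Finset ℕ) (i : ℕ) : ℕ := (F.filter (fun x => x < i)).card

lemma tricho {F : Finset ℕ} {i : ℕ} (hi : i ∈ F) : rkB F i + 1 + rkA F i = F.card := by
  classical
  have h1 : F.card = (F.filter (fun x => x < i)).card + (F.filter (fun x => ¬ x < i)).card :=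
    (Finset.card_filter_add_card_filter_not _).symm
  have h2 : F.filter (fun x => ¬ x < i) = insert i (F.filter (fun x => i < x)) := by
    ext x
    simp only [mem_filter, mem_insert, not_lt]
    constructor
    · rintro ⟨hx, hxi⟩
      rcases eq_or_lt_of_le hxi with h | h
      · exact Or.inl h.symm
      · exact Or.inr ⟨hx, h⟩
    · rintro (rfl | ⟨hx, hxi⟩)
      · exact ⟨hi, le_refl _⟩
      · exact ⟨hx, le_of_lt hxi⟩
  have h3 : i ∉ F.filter (fun x => i < x) := by simp
  rw [h2, Finset.card_insert_of_notMem h3] at h1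
  unfold rkA rkB; omega

lemma rkA_lt_of_mem {F : Finset ℕ} {i : ℕ} (hi : i ∈ F) : rkA F i < F.card := by
  have := tricho hi; omega

lemma rkB_lt_of_mem {F : Finset ℕ} {i : ℕ} (hi : i ∈ F) : rkB F i < F.card := by
  have := tricho hi; omega

lemma rkA_strict {F : Finset ℕ} {i i' : ℕ} (hi' : i' ∈ F) (h : i < i') :
    rkA F i' < rkA F i := by
  apply Finset.card_lt_card
  constructor
  · intro x hx; simp only [mem_filter] at hx ⊢; exact ⟨hx.1, lt_trans h hx.2⟩
  · intro hsub
    have : i' ∈ F.filter (fun x => i < x) := by simp [hi', h]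
    have := hsub this
    simp at this

lemma rkA_injOn {F : Finset ℕ} {i i' : ℕ} (hi : i ∈ F) (hi' : i' ∈ F)
    (h : rkA F i = rkA F i') : i = i' := by
  rcases lt_trichotomy i i' with hlt | he | hlt
  · have := rkA_strict hi' hlt; omega
  · exact he
  · have := rkA_strict hi hlt; omega

lemma rkA_surj {F : Finset ℕ} {r : ℕ} (hr : r < F.card) : ∃ i ∈ F, rkA F i = r := by
  classical
  have himg : F.image (rkA F) = Finset.range F.card := by
    apply Finset.eq_of_subset_of_card_le
    · intro x hx
      simp only [mem_image] at hx
      obtain ⟨i, hi, rfl⟩ := hx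
      simpa using rkA_lt_of_mem hi
    · rw [Finset.card_range, Finset.card_image_of_injOn]
      intro a ha b hb; exact rkA_injOn ha hb
  have : r ∈ F.image (rkA F) := by rw [himg]; simpa using hr
  simpa only [mem_image] using this

noncomputable def pick (F : Finset ℕ) (r : ℕ) : ℕ :=
  if h : ∃ i ∈ F, rkA F i = r then h.choose else 0

lemma pick_spec {F : Finset ℕ} {r : ℕ} (hr : r < F.card) :
    pick F r ∈ F ∧ rkA F (pick F r) = r := by
  have h := rkA_surj hr
  rw [pick, dif_pos h]
  exact h.choose_spec

lemma pick_eq {F : Finset ℕ} {r i : ℕ} (hi : i ∈ F) (h : rkA F i = r) : pick F r = i := by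
  have hr : r < F.card := h ▸ rkA_lt_of_mem hi
  obtain ⟨h1, h2⟩ := pick_spec hr
  exact rkA_injOn h1 hi (h2.trans h.symm)

lemma pick_mem_or_zero (F : Finset ℕ) (r : ℕ) : pick F r ∈ F ∨ pick F r = 0 := by
  unfold pick; split
  · next h => exact Or.inl h.choose_spec.1
  · exact Or.inr rfl

def Valid (n : ℕ) (c : ℕ → Option ℕ) : Prop :=
  (∀ ⦃j i⦄, c j = some i → 1 ≤ i ∧ i < j ∧ j ≤ n) ∧
  (∀ ⦃j j' i⦄, c j = some i → c j' = some i → j = j')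

noncomputable def avail (n : ℕ) (c past : ℕ → Option ℕ) (j : ℕ) : Finset ℕ :=
  (Finset.Icc 1 n).filter
    (fun i => i < j ∧ (∃ j'', c j'' = some i) ∧ ∀ j' < j, past j' ≠ some i)

noncomputable def fav (n k : ℕ) (c past : ℕ → Option ℕ) (j : ℕ) : Finset ℕ :=
  (avail n c past j).filter (fun i => i + k ≤ j)

noncomputable def step (n k : ℕ) (c past : ℕ → Option ℕ) (j : ℕ) : Option ℕ :=
  (c j).map (fun i => if j < i + k then i
    else pick (fav n k c past j) (rkB (fav n k c c j) i))

noncomputable def upTo (n k : ℕ) (c : ℕ → Option ℕ) : ℕ → ℕ → Option ℕ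
  | 0 => fun _ => none
  | (j+1) => fun x => if x = j then step n k c (upTo n k c j) j else upTo n k c j x

noncomputable def flip (n k : ℕ) (c : ℕ → Option ℕ) : ℕ → Option ℕ :=
  fun j => step n k c (upTo n k c j) j

lemma avail_congr {n : ℕ} {c past past' : ℕ → Option ℕ} {j : ℕ}
    (h : ∀ j' < j, past j' = past' j') : avail n c past j = avail n c past' j := by
  unfold avail; apply Finset.filter_congr; intro i _
  constructor
  · rintro ⟨h1, h2, h3⟩; exact ⟨h1, h2, fun j' hj' => (h j' hj') ▸ h3 j' hj'⟩
  · rintro ⟨h1, h2, h3⟩; exact ⟨h1, h2, fun j' hj' => (h j' hj') ▸ h3 j' hj'⟩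

lemma step_congr {n k : ℕ} {c past past' : ℕ → Option ℕ} {j : ℕ}
    (h : ∀ j' < j, past j' = past' j') : step n k c past j = step n k c past' j := by
  unfold step fav
  rw [avail_congr h]

lemma upTo_eq {n k : ℕ} {c : ℕ → Option ℕ} (J x : ℕ) :
    upTo n k c J x = if x < J then flip n k c x else none := by
  induction J with
  | zero => simp [upTo]
  | succ j ih =>
    simp only [upTo]
    by_cases hx : x = j
    · subst hx
      rw [if_pos rfl, if_pos (Nat.lt_succ_self x)]
      rfl
    · rw [if_neg hx, ih]
      by_cases hxj : x < j
      · rw [if_pos hxj, if_pos (Nat.lt_succ_of_lt hxj)]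
      · rw [if_neg hxj, if_neg (by omega)]

lemma flip_eq {n k : ℕ} (c : ℕ → Option ℕ) (j : ℕ) :
    flip n k c j = step n k c (flip n k c) j := by
  unfold flip
  exact step_congr (fun j2 hj2 => by rw [upTo_eq, if_pos hj2]; rfl)

section
variable {n k : ℕ} {c : ℕ → Option ℕ}

lemma mem_avail {past : ℕ → Option ℕ} {j x : ℕ} :
    x ∈ avail n c past j ↔
      x ∈ Finset.Icc 1 n ∧ x < j ∧ (∃ j'', c j'' = some x) ∧ ∀ j' < j, past j' ≠ some x := by
  unfold avail
  rw [mem_filter]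

lemma mem_fav {past : ℕ → Option ℕ} {j x : ℕ} :
    x ∈ fav n k c past j ↔ x ∈ avail n c past j ∧ x + k ≤ j := by
  unfold fav; exact Finset.mem_filter

lemma flip_val_lt (hc : Valid n c) {j i : ℕ} (h : flip n k c j = some i) : i < j := by
  rw [flip_eq] at h
  unfold step at h
  cases hcj : c j with
  | none => rw [hcj] at h; exact absurd h (by simp)
  | some i₀ =>
    rw [hcj, Option.map_some] at h
    have hb := hc.1 hcj
    rw [Option.some_inj] at h
    by_cases hni : j < i₀ + k
    · rw [if_pos hni] at h; omega
    · rw [if_neg hni] at h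
      rcases pick_mem_or_zero (fav n k c (flip n k c) j) (rkB (fav n k c c j) i₀)
        with hm | hz
      · rw [h] at hm
        rw [mem_fav, mem_avail] at hm
        exact hm.1.2.1
      · omega

lemma c_val_lt (hc : Valid n c) : ∀ j' i, c j' = some i → i < j' :=
  fun _ _ h => (hc.1 h).2.1

lemma mem_avail_succ {past : ℕ → Option ℕ} {j x : ℕ}
    (hp : ∀ j' i, past j' = some i → i < j') :
    x ∈ avail n c past (j + 1) ↔
      ((x ∈ avail n c past j ∧ past j ≠ some x) ∨
        (x = j ∧ x ∈ Finset.Icc 1 n ∧ ∃ j'', c j'' = some x)) := by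
  rw [mem_avail, mem_avail]
  constructor
  · rintro ⟨hI, hlt, hl, hu⟩
    rcases Nat.lt_succ_iff_lt_or_eq.mp hlt with hxj | rfl
    · exact Or.inl ⟨⟨hI, hxj, hl, fun j' hj' => hu j' (Nat.lt_succ_of_lt hj')⟩,
        hu j (Nat.lt_succ_self j)⟩
    · exact Or.inr ⟨rfl, hI, hl⟩
  · rintro (⟨⟨hI, hlt, hl, hu⟩, hne⟩ | ⟨rfl, hI, hl⟩)
    · refine ⟨hI, Nat.lt_succ_of_lt hlt, hl, fun j' hj' => ?_⟩
      rcases Nat.lt_succ_iff_lt_or_eq.mp hj' with h | rfl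
      · exact hu j' h
      · exact hne
    · refine ⟨hI, Nat.lt_succ_self x, hl, fun j' hj' he => ?_⟩
      have := hp j' x he
      omega

lemma self_mem_avail (hc : Valid n c) {j i : ℕ} (h : c j = some i) :
    i ∈ avail n c c j := by
  rw [mem_avail]
  obtain ⟨h1, h2, h3⟩ := hc.1 h
  refine ⟨Finset.mem_Icc.mpr ⟨h1, by omega⟩, h2, ⟨j, h⟩, fun j' hj' he => ?_⟩
  have := hc.2 h he
  omega

/-- The flip at a far position picks a member of the flipped far-available set. -/
lemma flip_far (hc : Valid n c) {j i : ℕ} (h : c j = some i) (hfar : i + k ≤ j)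
    (hcard : (fav n k c c j).card = (fav n k c (flip n k c) j).card) :
    flip n k c j = some (pick (fav n k c (flip n k c) j) (rkB (fav n k c c j) i)) ∧
      pick (fav n k c (flip n k c) j) (rkB (fav n k c c j) i) ∈ fav n k c (flip n k c) j ∧
      rkA (fav n k c (flip n k c) j) (pick (fav n k c (flip n k c) j) (rkB (fav n k c c j) i))
        = rkB (fav n k c c j) i := by
  have hiF : i ∈ fav n k c c j := mem_fav.mpr ⟨self_mem_avail hc h, hfar⟩
  have hr : rkB (fav n k c c j) i < (fav n k c (flip n k c) j).card :=
    hcard ▸ rkB_lt_of_mem hiF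
  obtain ⟨hm, hs⟩ := pick_spec hr
  refine ⟨?_, hm, hs⟩
  rw [flip_eq]
  unfold step
  rw [h, Option.map_some, if_neg (by omega)]

/-- The central invariant. -/
theorem inv (hk : 1 ≤ k) (hc : Valid n c) : ∀ j : ℕ,
    (∀ x, j < x + k → (x ∈ avail n c c j ↔ x ∈ avail n c (flip n k c) j)) ∧
      (fav n k c c j).card = (fav n k c (flip n k c) j).card := by
  intro j
  induction j with
  | zero =>
    constructor
    · intro x _; simp [mem_avail]
    · have h1 : avail n c c 0 = ∅ := by ext x; simp [mem_avail]
      have h2 : avail n c (flip n k c) 0 = ∅ := by ext x; simp [mem_avail]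
      unfold fav; rw [h1, h2]
  | succ j IH =>
    obtain ⟨IHN, IHC⟩ := IH
    have hval : ∀ {x}, 1 ≤ x → j < x + k → (c j = some x ↔ flip n k c j = some x) := by
      intro x hx1 hxnear
      rw [flip_eq]
      unfold step
      cases hcj : c j with
      | none => simp
      | some i =>
        rw [Option.map_some]
        by_cases hni : j < i + k
        · rw [if_pos hni]
        · rw [if_neg hni]
          rw [Option.some_inj, Option.some_inj]
          constructor
          · intro h; omega
          · intro h
            exfalso
            rcases pick_mem_or_zero (fav n k c (flip n k c) j) (rkB (fav n k c c j) i)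
              with hm | hz
            · rw [h] at hm
              rw [mem_fav] at hm
              omega
            · omega
    have hone : ∀ {p : ℕ → Option ℕ} {x}, x ∈ avail n c p j → 1 ≤ x := by
      intro p x hx
      rw [mem_avail] at hx
      exact (Finset.mem_Icc.mp hx.1).1
    constructor
    · intro x hx
      rw [mem_avail_succ (c_val_lt hc), mem_avail_succ (fun j' i h => flip_val_lt hc h)]
      constructor
      · rintro (⟨hA, hne⟩ | hr)
        · refine Or.inl ⟨(IHN x (by omega)).1 hA, fun he => ?_⟩
          exact hne ((hval (hone hA) (show j < x + k by omega)).mpr he)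
        · exact Or.inr hr
      · rintro (⟨hA, hne⟩ | hr)
        · refine Or.inl ⟨(IHN x (by omega)).2 hA, fun he => ?_⟩
          exact hne ((hval (hone hA) (show j < x + k by omega)).mp he)
        · exact Or.inr hr
    · have hdec : ∀ (p : ℕ → Option ℕ), (∀ j' i, p j' = some i → i < j') →
          (fav n k c p (j+1)).card
            = ((fav n k c p j).filter (fun x => p j ≠ some x)).card
              + ((avail n c p j).filter (fun x => x + k = j + 1 ∧ p j ≠ some x)).card
              + (if j ∈ Finset.Icc 1 n ∧ (∃ j'', c j'' = some j) ∧ j + k ≤ j + 1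
                  then 1 else 0) := by
        intro p hp
        have hsplit : fav n k c p (j+1)
            = (((fav n k c p j).filter (fun x => p j ≠ some x))
              ∪ ((avail n c p j).filter (fun x => x + k = j + 1 ∧ p j ≠ some x)))
              ∪ ((Finset.Icc 1 n).filter
                  (fun x => x = j ∧ (∃ j'', c j'' = some x) ∧ x + k ≤ j + 1)) := by
          ext x
          rw [mem_fav, mem_avail_succ hp]
          simp only [mem_union, mem_filter, mem_fav]
          constructor
          · rintro ⟨(⟨hA, hne⟩ | ⟨rfl, hI, hl⟩), hfar⟩
            · rcases Nat.lt_or_ge (x + k) (j + 1) with h | h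
              · exact Or.inl (Or.inl ⟨⟨hA, by omega⟩, hne⟩)
              · exact Or.inl (Or.inr ⟨hA, by omega, hne⟩)
            · exact Or.inr ⟨hI, rfl, hl, hfar⟩
          · rintro ((⟨⟨hA, hf⟩, hne⟩ | ⟨hA, hf, hne⟩) | ⟨hI, rfl, hl, hf⟩)
            · exact ⟨Or.inl ⟨hA, hne⟩, by omega⟩
            · exact ⟨Or.inl ⟨hA, hne⟩, by omega⟩
            · refine ⟨Or.inr ⟨rfl, hI, hl⟩, hf⟩
        rw [hsplit, Finset.card_union_of_disjoint, Finset.card_union_of_disjoint]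
        · congr 1
          by_cases hj : j ∈ Finset.Icc 1 n ∧ (∃ j'', c j'' = some j) ∧ j + k ≤ j + 1
          · rw [if_pos hj]
            have he : (Finset.Icc 1 n).filter
                (fun x => x = j ∧ (∃ j'', c j'' = some x) ∧ x + k ≤ j + 1) = {j} := by
              ext x
              simp only [mem_filter, mem_singleton]
              constructor
              · rintro ⟨_, rfl, _⟩; rfl
              · rintro rfl; exact ⟨hj.1, rfl, hj.2⟩
            rw [he, Finset.card_singleton]
          · rw [if_neg hj]
            have he : (Finset.Icc 1 n).filter
                (fun x => x = j ∧ (∃ j'', c j'' = some x) ∧ x + k ≤ j + 1) = ∅ := by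
              ext x
              simp only [mem_filter, Finset.notMem_empty, iff_false]
              rintro ⟨hI, rfl, hl, hf⟩
              exact hj ⟨hI, hl, hf⟩
            rw [he, Finset.card_empty]
        · rw [Finset.disjoint_left]
          intro x hx hy
          rw [mem_filter, mem_fav] at hx
          rw [mem_filter] at hy
          omega
        · rw [Finset.disjoint_left]
          intro x hx hy
          rw [mem_filter] at hy
          rw [mem_union] at hx
          rcases hx with hx | hx
          · rw [mem_filter, mem_fav, mem_avail] at hx
            obtain ⟨⟨⟨_, hlt, _⟩, _⟩, _⟩ := hx
            omega
          · rw [mem_filter, mem_avail] at hx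
            obtain ⟨⟨_, hlt, _⟩, _⟩ := hx
            omega
      rw [hdec c (c_val_lt hc), hdec (flip n k c) (fun j' i h => flip_val_lt hc h)]
      congr 1
      congr 1
      · -- first pieces
        cases hcj : c j with
        | none =>
          have hcj' : flip n k c j = none := by
            rw [flip_eq]; unfold step; rw [hcj]; rfl
          simp only [hcj, hcj']
          rw [Finset.filter_true_of_mem (fun x _ => by simp),
            Finset.filter_true_of_mem (fun x _ => by simp)]
          exact IHC
        | some i =>
          by_cases hni : j < i + k
          · have hcj' : flip n k c j = some i := (hval (hc.1 hcj).1 hni).mp hcj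
            simp only [hcj, hcj']
            rw [Finset.filter_true_of_mem, Finset.filter_true_of_mem]
            · exact IHC
            · intro x hx
              rw [mem_fav] at hx
              simp only [ne_eq, Option.some_inj]
              omega
            · intro x hx
              rw [mem_fav] at hx
              simp only [ne_eq, Option.some_inj]
              omega
          · have hfar : i + k ≤ j := by omega
            obtain ⟨hcj', hm, _⟩ := flip_far hc hcj hfar IHC
            simp only [hcj, hcj']
            have hiF : i ∈ fav n k c c j := mem_fav.mpr ⟨self_mem_avail hc hcj, hfar⟩
            have e1 : (fav n k c c j).filter (fun x => some i ≠ some x)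
                = (fav n k c c j).erase i := by
              ext x; rw [mem_filter, Finset.mem_erase]
              simp only [ne_eq, Option.some_inj]
              tauto
            have e2 : (fav n k c (flip n k c) j).filter
                  (fun x => some (pick (fav n k c (flip n k c) j) (rkB (fav n k c c j) i))
                    ≠ some x)
                = (fav n k c (flip n k c) j).erase
                    (pick (fav n k c (flip n k c) j) (rkB (fav n k c c j) i)) := by
              ext x; rw [mem_filter, Finset.mem_erase]
              simp only [ne_eq, Option.some_inj]
              tauto
            rw [e1, e2, Finset.card_erase_of_mem hiF, Finset.card_erase_of_mem hm, IHC]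
      · -- migrating pieces are equal sets
        congr 1
        ext x
        rw [mem_filter, mem_filter]
        constructor
        · rintro ⟨hA, hmig, hne⟩
          refine ⟨(IHN x (by omega)).1 hA, hmig, fun he => ?_⟩
          exact hne ((hval (hone hA) (show j < x + k by omega)).mpr he)
        · rintro ⟨hA, hmig, hne⟩
          have hA' := (IHN x (by omega)).2 hA
          refine ⟨hA', hmig, fun he => ?_⟩
          exact hne ((hval (hone hA) (show j < x + k by omega)).mp he)


lemma flip_valid (hk : 1 ≤ k) (hc : Valid n c) : Valid n (flip n k c) := by
  constructor
  · intro j i h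
    have hlt := flip_val_lt hc h
    rw [flip_eq] at h
    unfold step at h
    cases hcj : c j with
    | none => rw [hcj] at h; exact absurd h (by simp)
    | some i₀ =>
      rw [hcj, Option.map_some, Option.some_inj] at h
      have hb := hc.1 hcj
      by_cases hni : j < i₀ + k
      · rw [if_pos hni] at h; omega
      · rw [if_neg hni] at h
        have hm := (flip_far hc hcj (by omega) (inv hk hc j).2).2.1
        rw [h] at hm
        rw [mem_fav, mem_avail, Finset.mem_Icc] at hm
        omega
  · intro j j' i h h'
    have key : ∀ a b, a < b → flip n k c a = some i → flip n k c b = some i → False := by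
      intro a b hab ha hb
      have hmem : i ∈ avail n c (flip n k c) b := by
        rw [flip_eq] at hb
        unfold step at hb
        cases hcb : c b with
        | none => rw [hcb] at hb; exact absurd hb (by simp)
        | some i₀ =>
          rw [hcb, Option.map_some, Option.some_inj] at hb
          by_cases hni : b < i₀ + k
          · rw [if_pos hni] at hb
            subst hb
            exact ((inv hk hc b).1 i₀ (by omega)).mp (self_mem_avail hc hcb)
          · rw [if_neg hni] at hb
            have hm := (flip_far hc hcb (by omega) (inv hk hc b).2).2.1
            rw [hb] at hm
            exact (mem_fav.mp hm).1
      rw [mem_avail] at hmem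
      exact hmem.2.2.2 a hab ha
    rcases lt_trichotomy j j' with hlt | he | hlt
    · exact absurd (key j j' hlt h h') (by simp)
    · exact he
    · exact absurd (key j' j hlt h' h) (by simp)

lemma flip_lefts (hk : 1 ≤ k) (hc : Valid n c) {x : ℕ} :
    (∃ j, flip n k c j = some x) ↔ (∃ j, c j = some x) := by
  constructor
  · rintro ⟨j, h⟩
    rw [flip_eq] at h
    unfold step at h
    cases hcj : c j with
    | none => rw [hcj] at h; exact absurd h (by simp)
    | some i₀ =>
      rw [hcj, Option.map_some, Option.some_inj] at h
      by_cases hni : j < i₀ + k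
      · rw [if_pos hni] at h; exact ⟨j, h ▸ hcj⟩
      · rw [if_neg hni] at h
        have hm := (flip_far hc hcj (by omega) (inv hk hc j).2).2.1
        rw [h] at hm
        exact (mem_avail.mp (mem_fav.mp hm).1).2.2.1
  · rintro ⟨j, h⟩
    by_contra hnone
    push_neg at hnone
    set J := n + x + k + 1 with hJ
    have hbx := hc.1 h
    have hempty : fav n k c c J = ∅ := by
      ext y
      rw [mem_fav, mem_avail]
      simp only [Finset.notMem_empty, iff_false]
      rintro ⟨⟨_, hy2, ⟨j'', hj''⟩, hu⟩, _⟩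
      exact hu j'' (by have := hc.1 hj''; omega) hj''
    have hx : x ∈ fav n k c (flip n k c) J := by
      rw [mem_fav, mem_avail]
      refine ⟨⟨Finset.mem_Icc.mpr ⟨hbx.1, by omega⟩, by omega, ⟨j, h⟩,
        fun j' _ => hnone j'⟩, by omega⟩
    have := (inv hk hc J).2
    rw [hempty] at this
    simp only [Finset.card_empty] at this
    rw [Finset.card_eq_zero.mp this.symm] at hx
    exact absurd hx (Finset.notMem_empty x)

lemma avail_flip_base (hk : 1 ≤ k) (hc : Valid n c) (p : ℕ → Option ℕ) (j : ℕ) :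
    avail n (flip n k c) p j = avail n c p j := by
  ext x
  rw [mem_avail, mem_avail]
  have := flip_lefts (n := n) hk hc (x := x)
  tauto

lemma flip_flip (hk : 1 ≤ k) (hc : Valid n c) : ∀ j, flip n k (flip n k c) j = c j := by
  intro j
  induction j using Nat.strong_induction_on with
  | _ j IH =>
  rw [flip_eq, step_congr (fun j' hj' => IH j' hj')]
  unfold step
  cases hcj : c j with
  | none =>
    have hcj' : flip n k c j = none := by
      rw [flip_eq]; unfold step; rw [hcj]; rfl
    rw [hcj']; rfl
  | some i =>
    by_cases hni : j < i + k
    · have hcj' : flip n k c j = some i := by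
        rw [flip_eq]; unfold step; rw [hcj, Option.map_some, if_pos hni]
      rw [hcj', Option.map_some, if_pos hni]
    · have hfar : i + k ≤ j := by omega
      obtain ⟨hcj', hm, hrk⟩ := flip_far hc hcj hfar (inv hk hc j).2
      rw [hcj', Option.map_some]
      have hfar' : pick (fav n k c (flip n k c) j) (rkB (fav n k c c j) i) + k ≤ j :=
        (mem_fav.mp hm).2
      rw [if_neg (by omega)]
      have hsetA : fav n k (flip n k c) c j = fav n k c c j := by
        unfold fav; rw [avail_flip_base hk hc]
      have hsetB : fav n k (flip n k c) (flip n k c) j = fav n k c (flip n k c) j := by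
        unfold fav; rw [avail_flip_base hk hc]
      rw [hsetA, hsetB]
      have hiF : i ∈ fav n k c c j := mem_fav.mpr ⟨self_mem_avail hc hcj, hfar⟩
      have t1 := tricho hiF
      have t2 := tricho hm
      have hcard := (inv hk hc j).2
      congr 1
      apply pick_eq hiF
      omega

noncomputable def crAt (n k : ℕ) (c : ℕ → Option ℕ) (j : ℕ) : ℕ :=
  (c j).elim 0 (fun i => rkA (fav n k c c j) i)

noncomputable def neAt (n k : ℕ) (c : ℕ → Option ℕ) (j : ℕ) : ℕ :=
  (c j).elim 0 (fun i => if i + k ≤ j then rkB (fav n k c c j) i else 0)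

lemma rkA_near_zero {p : ℕ → Option ℕ} {j i : ℕ} (h : j < i + k) :
    rkA (fav n k c p j) i = 0 := by
  unfold rkA
  rw [Finset.card_eq_zero, Finset.filter_eq_empty_iff]
  intro x hx
  rw [mem_fav] at hx
  omega

lemma crAt_flip (hk : 1 ≤ k) (hc : Valid n c) (j : ℕ) :
    crAt n k (flip n k c) j = neAt n k c j := by
  have hsetB : fav n k (flip n k c) (flip n k c) j = fav n k c (flip n k c) j := by
    unfold fav; rw [avail_flip_base hk hc]
  unfold crAt neAt
  cases hcj : c j with
  | none =>
    have hcj' : flip n k c j = none := by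
      rw [flip_eq]; unfold step; rw [hcj]; rfl
    rw [hcj']; rfl
  | some i =>
    by_cases hni : j < i + k
    · have hcj' : flip n k c j = some i := by
        rw [flip_eq]; unfold step; rw [hcj, Option.map_some, if_pos hni]
      rw [hcj']
      simp only [Option.elim]
      rw [hsetB, rkA_near_zero hni, if_neg (by omega)]
    · obtain ⟨hcj', hm, hrk⟩ := flip_far hc hcj (by omega) (inv hk hc j).2
      rw [hcj']
      simp only [Option.elim]
      rw [hsetB, hrk]
      rw [if_pos (show i + k ≤ j by omega)]

lemma neAt_flip (hk : 1 ≤ k) (hc : Valid n c) (j : ℕ) :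
    neAt n k (flip n k c) j = crAt n k c j := by
  have hsetB : fav n k (flip n k c) (flip n k c) j = fav n k c (flip n k c) j := by
    unfold fav; rw [avail_flip_base hk hc]
  unfold crAt neAt
  cases hcj : c j with
  | none =>
    have hcj' : flip n k c j = none := by
      rw [flip_eq]; unfold step; rw [hcj]; rfl
    rw [hcj']; rfl
  | some i =>
    by_cases hni : j < i + k
    · have hcj' : flip n k c j = some i := by
        rw [flip_eq]; unfold step; rw [hcj, Option.map_some, if_pos hni]
      rw [hcj']
      simp only [Option.elim]
      rw [if_neg (show ¬ i + k ≤ j by omega), rkA_near_zero hni]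
    · obtain ⟨hcj', hm, hrk⟩ := flip_far hc hcj (by omega) (inv hk hc j).2
      rw [hcj']
      simp only [Option.elim]
      rw [hsetB]
      have hfar' : pick (fav n k c (flip n k c) j) (rkB (fav n k c c j) i) + k ≤ j :=
        (mem_fav.mp hm).2
      rw [if_pos hfar']
      have hiF : i ∈ fav n k c c j := mem_fav.mpr ⟨self_mem_avail hc hcj, by omega⟩
      have t1 := tricho hiF
      have t2 := tricho hm
      have hcard := (inv hk hc j).2
      omega

end

section Dict
variable {n : ℕ}

lemma part_subset {P : SP n} {B : Finset ℕ} (hB : B ∈ P.parts) : B ⊆ Finset.Icc 1 n :=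
  P.le hB

lemma edge_mem_Icc {P : SP n} {i j : ℕ} (h : IsEdge P i j) :
    i ∈ Finset.Icc 1 n ∧ j ∈ Finset.Icc 1 n := by
  rcases h with ⟨rfl, hs⟩ | ⟨hij, B, hB, hiB, hjB, _⟩
  · exact ⟨part_subset hs (Finset.mem_singleton_self i),
      part_subset hs (Finset.mem_singleton_self i)⟩
  · exact ⟨part_subset hB hiB, part_subset hB hjB⟩

lemma edge_unique {P : SP n} {i i' j : ℕ}
    (h : IsEdge P i j) (h' : IsEdge P i' j) (hij : i < j) (hij' : i' < j) : i = i' := by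
  rcases h with ⟨rfl, _⟩ | ⟨_, B, hB, hiB, hjB, hbet⟩
  · omega
  rcases h' with ⟨rfl, _⟩ | ⟨_, B', hB', hiB', hjB', hbet'⟩
  · omega
  have hBB : B = B' := P.eq_of_mem_parts hB hB' hjB hjB'
  subst hBB
  rcases lt_trichotomy i i' with h1 | h1 | h1
  · exact absurd ⟨h1, hij'⟩ (hbet i' hiB')
  · exact h1
  · exact absurd ⟨h1, hij⟩ (hbet' i hiB)

noncomputable def cOf (P : SP n) : ℕ → Option ℕ :=
  fun j => if h : ∃ i, i < j ∧ IsEdge P i j then some h.choose else none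

lemma cOf_eq_some_iff {P : SP n} {i j : ℕ} :
    cOf P j = some i ↔ i < j ∧ IsEdge P i j := by
  unfold cOf
  split
  · next h =>
    rw [Option.some_inj]
    constructor
    · rintro rfl; exact h.choose_spec
    · rintro ⟨h1, h2⟩
      exact edge_unique h.choose_spec.2 h2 h.choose_spec.1 h1
  · next h =>
    simp only [reduceCtorEq, false_iff]
    rintro ⟨h1, h2⟩
    exact h ⟨i, h1, h2⟩

lemma cOf_valid (P : SP n) : Valid n (cOf P) := by
  constructor
  · intro j i h
    rw [cOf_eq_some_iff] at h
    obtain ⟨hi, hj⟩ := edge_mem_Icc h.2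
    rw [Finset.mem_Icc] at hi hj
    exact ⟨hi.1, h.1, hj.2⟩
  · intro j j' i h h'
    rw [cOf_eq_some_iff] at h h'
    obtain ⟨hij, he⟩ := h
    obtain ⟨hij', he'⟩ := h'
    rcases he with ⟨h1, _⟩ | ⟨_, B, hB, hiB, hjB, hbet⟩
    · omega
    rcases he' with ⟨h1, _⟩ | ⟨_, B', hB', hiB', hjB', hbet'⟩
    · omega
    have hBB : B = B' := P.eq_of_mem_parts hB hB' hiB hiB'
    subst hBB
    rcases lt_trichotomy j j' with h1 | h1 | h1
    · exact (hbet' j hjB ⟨hij, h1⟩).elim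
    · exact h1
    · exact (hbet j' hjB' ⟨hij', h1⟩).elim

lemma consec_below {P : SP n} {B : Finset ℕ} {v u : ℕ}
    (hB : B ∈ P.parts) (hv : v ∈ B) (hu : u ∈ B) (huv : u < v) :
    ∃ w ∈ B, w < v ∧ IsEdge P w v := by
  have hne : (B.filter (fun x => x < v)).Nonempty := ⟨u, Finset.mem_filter.mpr ⟨hu, huv⟩⟩
  set w := (B.filter (fun x => x < v)).max' hne with hw
  have hwmem := (B.filter (fun x => x < v)).max'_mem hne
  rw [Finset.mem_filter] at hwmem
  refine ⟨w, hwmem.1, hwmem.2, Or.inr ⟨hwmem.2, B, hB, hwmem.1, hv, fun m hm h => ?_⟩⟩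
  obtain ⟨h1, h2⟩ := h
  have : m ≤ w := Finset.le_max' (B.filter (fun x => x < v)) m (Finset.mem_filter.mpr ⟨hm, h2⟩)
  omega

lemma consec_above {P : SP n} {B : Finset ℕ} {v u : ℕ}
    (hB : B ∈ P.parts) (hv : v ∈ B) (hu : u ∈ B) (hvu : v < u) :
    ∃ w ∈ B, v < w ∧ IsEdge P v w := by
  have hne : (B.filter (fun x => v < x)).Nonempty := ⟨u, Finset.mem_filter.mpr ⟨hu, hvu⟩⟩
  set w := (B.filter (fun x => v < x)).min' hne with hw
  have hwmem := (B.filter (fun x => v < x)).min'_mem hne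
  rw [Finset.mem_filter] at hwmem
  refine ⟨w, hwmem.1, hwmem.2, Or.inr ⟨hwmem.2, B, hB, hv, hwmem.1, fun m hm h => ?_⟩⟩
  obtain ⟨h1, h2⟩ := h
  have : w ≤ m := Finset.min'_le (B.filter (fun x => v < x)) m (Finset.mem_filter.mpr ⟨hm, h1⟩)
  omega

lemma opener_iff {P : SP n} {v : ℕ} :
    v ∈ openers P ↔ (∃ j, cOf P j = some v) ∧ cOf P v = none := by
  constructor
  · rintro ⟨B, hB, hvB, hcard, hmin⟩
    obtain ⟨u, huB, hune⟩ := Finset.exists_mem_ne hcard v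
    have hvu : v < u := lt_of_le_of_ne (hmin u huB) (Ne.symm hune)
    obtain ⟨w, hwB, hvw, he⟩ := consec_above hB hvB huB hvu
    refine ⟨⟨w, cOf_eq_some_iff.mpr ⟨hvw, he⟩⟩, ?_⟩
    rw [← Option.not_isSome_iff_eq_none]
    intro hs
    obtain ⟨i, hi⟩ := Option.isSome_iff_exists.mp hs
    rw [cOf_eq_some_iff] at hi
    obtain ⟨hiv, he'⟩ := hi
    rcases he' with ⟨h1, _⟩ | ⟨_, B', hB', hiB', hvB', _⟩
    · omega
    have : B' = B := P.eq_of_mem_parts hB' hB hvB' hvB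
    subst this
    have := hmin i hiB'
    omega
  · rintro ⟨⟨j, hj⟩, hnone⟩
    rw [cOf_eq_some_iff] at hj
    obtain ⟨hvj, he⟩ := hj
    rcases he with ⟨h1, _⟩ | ⟨_, B, hB, hvB, hjB, _⟩
    · omega
    refine ⟨B, hB, hvB, Finset.one_lt_card.mpr ⟨v, hvB, j, hjB, by omega⟩, fun m hm => ?_⟩
    by_contra hlt
    push_neg at hlt
    obtain ⟨w, hwB, hwv, he'⟩ := consec_below hB hvB hm hlt
    have h2 := cOf_eq_some_iff.mpr ⟨hwv, he'⟩
    rw [hnone] at h2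
    exact absurd h2 (by simp)

lemma closer_iff {P : SP n} {v : ℕ} :
    v ∈ closers P ↔ cOf P v ≠ none ∧ ∀ j, cOf P j ≠ some v := by
  constructor
  · rintro ⟨B, hB, hvB, hcard, hmax⟩
    obtain ⟨u, huB, hune⟩ := Finset.exists_mem_ne hcard v
    have huv : u < v := lt_of_le_of_ne (hmax u huB) hune
    obtain ⟨w, hwB, hwv, he⟩ := consec_below hB hvB huB huv
    refine ⟨by rw [cOf_eq_some_iff.mpr ⟨hwv, he⟩]; simp, fun j hj => ?_⟩
    rw [cOf_eq_some_iff] at hj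
    obtain ⟨hvj, he'⟩ := hj
    rcases he' with ⟨h1, _⟩ | ⟨_, B', hB', hvB', hjB', _⟩
    · omega
    have : B' = B := P.eq_of_mem_parts hB' hB hvB' hvB
    subst this
    have := hmax j hjB'
    omega
  · rintro ⟨hsome, hnol⟩
    obtain ⟨i, hi⟩ := Option.ne_none_iff_exists'.mp hsome
    rw [cOf_eq_some_iff] at hi
    obtain ⟨hiv, he⟩ := hi
    rcases he with ⟨h1, _⟩ | ⟨_, B, hB, hiB, hvB, _⟩
    · omega
    refine ⟨B, hB, hvB, Finset.one_lt_card.mpr ⟨i, hiB, v, hvB, by omega⟩, fun m hm => ?_⟩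
    by_contra hlt
    push_neg at hlt
    obtain ⟨w, hwB, hvw, he'⟩ := consec_above hB hvB hm hlt
    exact hnol w (cOf_eq_some_iff.mpr ⟨hvw, he'⟩)

lemma transient_iff {P : SP n} {v : ℕ} :
    v ∈ transients P ↔ cOf P v ≠ none ∧ ∃ j, cOf P j = some v := by
  constructor
  · rintro ⟨B, hB, hvB, ⟨a, haB, hav⟩, ⟨b, hbB, hvb⟩⟩
    obtain ⟨w, hwB, hwv, he⟩ := consec_below hB hvB haB hav
    obtain ⟨w', hw'B, hvw', he'⟩ := consec_above hB hvB hbB hvb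
    exact ⟨by rw [cOf_eq_some_iff.mpr ⟨hwv, he⟩]; simp,
      ⟨w', cOf_eq_some_iff.mpr ⟨hvw', he'⟩⟩⟩
  · rintro ⟨hsome, j, hj⟩
    obtain ⟨i, hi⟩ := Option.ne_none_iff_exists'.mp hsome
    rw [cOf_eq_some_iff] at hi hj
    obtain ⟨hiv, he⟩ := hi
    obtain ⟨hvj, he'⟩ := hj
    rcases he with ⟨h1, _⟩ | ⟨_, B, hB, hiB, hvB, _⟩
    · omega
    rcases he' with ⟨h1, _⟩ | ⟨_, B', hB', hvB', hjB', _⟩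
    · omega
    have hBB : B' = B := P.eq_of_mem_parts hB' hB hvB' hvB
    exact ⟨B, hB, hvB, ⟨i, hiB, hiv⟩, ⟨j, hBB ▸ hjB', hvj⟩⟩

lemma singleton_iff {P : SP n} {v : ℕ} :
    v ∈ singletons P ↔ v ∈ Finset.Icc 1 n ∧ cOf P v = none ∧ ∀ j, cOf P j ≠ some v := by
  constructor
  · intro hs
    have hs' : ({v} : Finset ℕ) ∈ P.parts := hs
    refine ⟨part_subset hs' (Finset.mem_singleton_self v), ?_, ?_⟩
    · rw [← Option.not_isSome_iff_eq_none]
      intro h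
      obtain ⟨i, hi⟩ := Option.isSome_iff_exists.mp h
      rw [cOf_eq_some_iff] at hi
      obtain ⟨hiv, he⟩ := hi
      rcases he with ⟨h1, _⟩ | ⟨_, B, hB, hiB, hvB, _⟩
      · omega
      have : B = {v} := P.eq_of_mem_parts hB hs' hvB (Finset.mem_singleton_self v)
      subst this
      rw [Finset.mem_singleton] at hiB
      omega
    · intro j hj
      rw [cOf_eq_some_iff] at hj
      obtain ⟨hvj, he⟩ := hj
      rcases he with ⟨h1, _⟩ | ⟨_, B, hB, hvB, hjB, _⟩
      · omega
      have : B = {v} := P.eq_of_mem_parts hB hs' hvB (Finset.mem_singleton_self v)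
      subst this
      rw [Finset.mem_singleton] at hjB
      omega
  · rintro ⟨hIcc, hnone, hnol⟩
    obtain ⟨B, hB, hvB⟩ := P.exists_mem hIcc
    have hBv : B = {v} := by
      rw [Finset.eq_singleton_iff_unique_mem]
      refine ⟨hvB, fun u hu => ?_⟩
      by_contra hne
      rcases lt_or_gt_of_ne hne with h | h
      · obtain ⟨w, hwB, hwv, he⟩ := consec_below hB hvB hu h
        have h2 := cOf_eq_some_iff.mpr ⟨hwv, he⟩
        rw [hnone] at h2
        exact absurd h2 (by simp)
      · obtain ⟨w, hwB, hvw, he⟩ := consec_above hB hvB hu h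
        exact hnol w (cOf_eq_some_iff.mpr ⟨hvw, he⟩)
    show ({v} : Finset ℕ) ∈ P.parts
    rw [← hBv]
    exact hB


def Rrel (c : ℕ → Option ℕ) (a b : ℕ) : Prop := c b = some a

abbrev reach (c : ℕ → Option ℕ) : ℕ → ℕ → Prop := Relation.ReflTransGen (Rrel c)

def Srel (c : ℕ → Option ℕ) (u v : ℕ) : Prop := reach c u v ∨ reach c v u

variable {c : ℕ → Option ℕ}

lemma reach_le (hc : Valid n c) {a b : ℕ} (h : reach c a b) : a ≤ b := by
  induction h with
  | refl => exact le_refl a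
  | tail h1 h2 ih =>
    have := (hc.1 h2).2.1
    omega

lemma comp_back (hc : Valid n c) :
    ∀ v u w, reach c u v → reach c w v → reach c u w ∨ reach c w u := by
  intro v
  induction v using Nat.strong_induction_on with
  | _ v IH =>
  intro u w hu hw
  rcases hu.cases_tail with he | ⟨m, hum, hmv⟩
  · exact Or.inr (he ▸ hw)
  rcases hw.cases_tail with he' | ⟨m', hwm', hm'v⟩
  · exact Or.inl (he' ▸ hu)
  have hmm : m = m' := by
    have : some m = some m' := hmv ▸ hm'v
    injection this
  subst hmm
  exact IH m (hc.1 hmv).2.1 u w hum hwm'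

lemma comp_fwd (hc : Valid n c) {v u : ℕ} (h : reach c v u) :
    ∀ w, reach c v w → reach c u w ∨ reach c w u := by
  induction h using Relation.ReflTransGen.head_induction_on with
  | refl => exact fun w hw => Or.inl hw
  | head h' hcu IH =>
    rename_i a b
    intro w haw
    rcases haw.cases_head with he | ⟨b', hab', hb'w⟩
    · exact Or.inr (he ▸ Relation.ReflTransGen.head h' hcu)
    · have : b' = b := hc.2 hab' h'
      subst this
      exact IH w hb'w

lemma S_refl (u : ℕ) : Srel c u u := Or.inl Relation.ReflTransGen.refl

lemma S_symm {u v : ℕ} (h : Srel c u v) : Srel c v u := h.symm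

lemma S_trans (hc : Valid n c) {u v w : ℕ} (h1 : Srel c u v) (h2 : Srel c v w) :
    Srel c u w := by
  rcases h1 with h1 | h1 <;> rcases h2 with h2 | h2
  · exact Or.inl (h1.trans h2)
  · exact comp_back hc v u w h1 h2
  · exact comp_fwd hc h1 w h2
  · exact Or.inr (h2.trans h1)

noncomputable def blk (n : ℕ) (c : ℕ → Option ℕ) (v : ℕ) : Finset ℕ :=
  (Finset.Icc 1 n).filter (fun u => Srel c u v)

lemma mem_blk {v u : ℕ} : u ∈ blk n c v ↔ u ∈ Finset.Icc 1 n ∧ Srel c u v :=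
  Finset.mem_filter

lemma blk_eq_of_S (hc : Valid n c) {v w : ℕ} (h : Srel c v w) : blk n c v = blk n c w := by
  ext u
  rw [mem_blk, mem_blk]
  exact and_congr_right fun _ =>
    ⟨fun h' => S_trans hc h' h, fun h' => S_trans hc h' (S_symm h)⟩

lemma self_mem_blk {v : ℕ} (hv : v ∈ Finset.Icc 1 n) : v ∈ blk n c v :=
  mem_blk.mpr ⟨hv, S_refl v⟩

noncomputable def ofC (n : ℕ) (c : ℕ → Option ℕ) (hc : Valid n c) : SP n where
  parts := (Finset.Icc 1 n).image (blk n c)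
  supIndep := by
    rw [Finset.supIndep_iff_pairwiseDisjoint]
    rintro B hB B' hB' hne
    rw [Finset.mem_coe, Finset.mem_image] at hB hB'
    obtain ⟨v, hv, rfl⟩ := hB
    obtain ⟨v', hv', rfl⟩ := hB'
    rw [Function.onFun, disjoint_left]
    intro a ha ha'
    rw [id_eq, mem_blk] at ha ha'
    exact hne (blk_eq_of_S hc (S_trans hc (S_symm ha.2) ha'.2))
  sup_parts := by
    apply le_antisymm
    · rw [Finset.sup_le_iff]
      intro B hB
      rw [Finset.mem_image] at hB
      obtain ⟨v, hv, rfl⟩ := hB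
      exact Finset.filter_subset _ _
    · intro v hv
      rw [Finset.mem_sup]
      exact ⟨blk n c v, Finset.mem_image_of_mem _ hv, self_mem_blk hv⟩
  bot_notMem := by
    rw [Finset.mem_image]
    rintro ⟨v, hv, hbv⟩
    have := self_mem_blk (c := c) hv
    rw [hbv] at this
    exact absurd this (Finset.notMem_empty v)

lemma mem_parts_ofC {hc : Valid n c} {B : Finset ℕ} :
    B ∈ (ofC n c hc).parts ↔ ∃ v ∈ Finset.Icc 1 n, blk n c v = B := by
  unfold ofC
  rw [Finset.mem_image]

lemma isEdge_ofC {hc : Valid n c} {i j : ℕ} (hij : i < j) :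
    IsEdge (ofC n c hc) i j ↔ c j = some i := by
  constructor
  · intro he
    rcases he with ⟨h1, _⟩ | ⟨_, B, hB, hiB, hjB, hbet⟩
    · omega
    rw [mem_parts_ofC] at hB
    obtain ⟨v, hv, rfl⟩ := hB
    rw [mem_blk] at hiB hjB
    have hSij : Srel c i j := S_trans hc hiB.2 (S_symm hjB.2)
    have hrij : reach c i j := by
      rcases hSij with h | h
      · exact h
      · have := reach_le hc h
        omega
    rcases hrij.cases_tail with he | ⟨m, him, hmj⟩
    · omega
    have hb := hc.1 hmj
    have hm : m ∈ blk n c v := by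
      rw [mem_blk]
      exact ⟨Finset.mem_Icc.mpr ⟨hb.1, by omega⟩, S_trans hc (Or.inr him) hiB.2⟩
    have hmi : i ≤ m := reach_le hc him
    have hnb := hbet m hm
    have hmi' : m = i := by omega
    subst hmi'
    exact hmj
  · intro hcj
    have hb := hc.1 hcj
    have hiI : i ∈ Finset.Icc 1 n := Finset.mem_Icc.mpr ⟨hb.1, by omega⟩
    have hjI : j ∈ Finset.Icc 1 n := Finset.mem_Icc.mpr ⟨by omega, hb.2.2⟩
    have hrij : reach c i j := Relation.ReflTransGen.single hcj
    refine Or.inr ⟨hij, blk n c i, mem_parts_ofC.mpr ⟨i, hiI, rfl⟩, self_mem_blk hiI,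
      mem_blk.mpr ⟨hjI, Or.inr hrij⟩, fun m hm h2 => ?_⟩
    obtain ⟨him, hmj⟩ := h2
    rw [mem_blk] at hm
    rcases hm.2 with h | h
    · -- reach m i, but i < m
      have := reach_le hc h
      omega
    · -- reach i m together with reach i j
      rcases comp_fwd hc h j hrij with h' | h'
      · rcases h'.cases_tail with he | ⟨p, hmp, hpj⟩
        · omega
        · have hpi : p = i := by
            have : some p = some i := hpj ▸ hcj
            injection this
          subst hpi
          have := reach_le hc hmp
          omega
      · have := reach_le hc h'
        omega


lemma sb_of_reach {P : SP n} {u v : ℕ} (h : reach (cOf P) u v) :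
    u = v ∨ ∃ B ∈ P.parts, u ∈ B ∧ v ∈ B := by
  induction h with
  | refl => exact Or.inl rfl
  | @tail b c₀ hab h2 ih =>
    have he := cOf_eq_some_iff.mp h2
    rcases he.2 with ⟨h3, _⟩ | ⟨_, B', hB', hbB', hcB'⟩
    · omega
    rcases ih with rfl | ⟨B, hB, huB, hbB⟩
    · exact Or.inr ⟨B', hB', hbB', hcB'.1⟩
    · have : B = B' := P.eq_of_mem_parts hB hB' hbB hbB'
      subst this
      exact Or.inr ⟨B, hB, huB, hcB'.1⟩

lemma reach_min {P : SP n} {B : Finset ℕ} (hB : B ∈ P.parts) :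
    ∀ v, ∀ hv : v ∈ B, reach (cOf P) (B.min' ⟨v, hv⟩) v := by
  intro v
  induction v using Nat.strong_induction_on with
  | _ v IH =>
  intro hv
  by_cases hmin : B.min' ⟨v, hv⟩ = v
  · rw [hmin]
  · have h1 : B.min' ⟨v, hv⟩ < v :=
      lt_of_le_of_ne (Finset.min'_le B v hv) hmin
    obtain ⟨w, hwB, hwv, he⟩ := consec_below hB hv (B.min'_mem ⟨v, hv⟩) h1
    have hR : Rrel (cOf P) w v := cOf_eq_some_iff.mpr ⟨hwv, he⟩
    have hmm : B.min' ⟨v, hv⟩ = B.min' ⟨w, hwB⟩ := rfl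
    exact Relation.ReflTransGen.tail (hmm ▸ IH w hwv hwB) hR

lemma blk_eq_block {P : SP n} {B : Finset ℕ} {v : ℕ} (hB : B ∈ P.parts) (hv : v ∈ B) :
    blk n (cOf P) v = B := by
  ext u
  rw [mem_blk]
  constructor
  · rintro ⟨huI, hS⟩
    rcases hS with h | h
    · rcases sb_of_reach h with rfl | ⟨B'', hB'', huB'', hvB''⟩
      · exact hv
      · have : B'' = B := P.eq_of_mem_parts hB'' hB hvB'' hv
        exact this ▸ huB''
    · rcases sb_of_reach h with he | ⟨B'', hB'', hvB'', huB''⟩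
      · exact he ▸ hv
      · have : B'' = B := P.eq_of_mem_parts hB'' hB hvB'' hv
        exact this ▸ huB''
  · intro hu
    refine ⟨part_subset hB hu, ?_⟩
    have h1 := reach_min hB u hu
    have h2 := reach_min hB v hv
    have hmm : B.min' ⟨u, hu⟩ = B.min' ⟨v, hv⟩ := rfl
    exact comp_fwd (cOf_valid P) (hmm ▸ h1) v h2

lemma ofC_cOf (P : SP n) : ofC n (cOf P) (cOf_valid P) = P := by
  apply Finpartition.ext
  ext B
  rw [mem_parts_ofC]
  constructor
  · rintro ⟨v, hv, rfl⟩
    obtain ⟨B₀, hB₀, hvB₀⟩ := P.exists_mem hv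
    rw [blk_eq_block hB₀ hvB₀]
    exact hB₀
  · intro hB
    obtain ⟨v, hv⟩ := P.nonempty_of_mem_parts hB
    exact ⟨v, part_subset hB hv, blk_eq_block hB hv⟩

lemma cOf_ofC (hc : Valid n c) : ∀ j, cOf (ofC n c hc) j = c j := by
  intro j
  cases hcj : c j with
  | some i =>
    exact cOf_eq_some_iff.mpr ⟨(hc.1 hcj).2.1, (isEdge_ofC (hc := hc) (hc.1 hcj).2.1).mpr hcj⟩
  | none =>
    cases h2 : cOf (ofC n c hc) j with
    | none => rfl
    | some i =>
      obtain ⟨hij, he⟩ := cOf_eq_some_iff.mp h2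
      rw [isEdge_ofC (hc := hc) hij] at he
      rw [he] at hcj
      exact absurd hcj (by simp)

end Dict

section Count
variable {n k : ℕ}

lemma dcr_eq_sum (hk : 1 ≤ k) (P : SP n) :
    dcr k P = ∑ j ∈ Finset.Icc 1 n, crAt n k (cOf P) j := by
  have hc := cOf_valid P
  set c := cOf P with hcdef
  set CS : Finset ((ℕ × ℕ) × ℕ × ℕ) :=
    ((Finset.Icc 1 n ×ˢ Finset.Icc 1 n) ×ˢ (Finset.Icc 1 n ×ˢ Finset.Icc 1 n)).filter
      (fun p => IsEdge P p.1.1 p.1.2 ∧ IsEdge P p.2.1 p.2.2 ∧ CrossPair k p.1 p.2)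
    with hCS
  have hset : {p : (ℕ × ℕ) × ℕ × ℕ |
      IsEdge P p.1.1 p.1.2 ∧ IsEdge P p.2.1 p.2.2 ∧ CrossPair k p.1 p.2} = ↑CS := by
    ext p
    simp only [Set.mem_setOf_eq, hCS, Finset.coe_filter, Finset.mem_product]
    constructor
    · rintro ⟨h1, h2, h3⟩
      exact ⟨⟨⟨(edge_mem_Icc h1).1, (edge_mem_Icc h1).2⟩,
        ⟨(edge_mem_Icc h2).1, (edge_mem_Icc h2).2⟩⟩, h1, h2, h3⟩
    · rintro ⟨_, h⟩
      exact h
  rw [dcr, hset, Set.ncard_coe_finset]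
  rw [Finset.card_eq_sum_card_fiberwise (f := fun p => p.1.2) (t := Finset.Icc 1 n)
    (fun p hp => by
      rw [hCS, Finset.mem_coe, Finset.mem_filter] at hp
      exact Finset.mem_coe.mpr (edge_mem_Icc hp.2.1).2)]
  apply Finset.sum_congr rfl
  intro j hj
  have hfib : ∀ p ∈ CS.filter (fun p => p.1.2 = j),
      c j = some p.1.1 ∧ c p.2.2 = some p.2.1 ∧ p.1.1 < p.2.1 ∧ p.2.1 + k ≤ j ∧
        j < p.2.2 := by
    intro p hp
    rw [Finset.mem_filter, hCS, Finset.mem_filter] at hp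
    obtain ⟨⟨_, h1, h2, h3⟩, hpj⟩ := hp
    obtain ⟨hc1, hc2, hc3, hc4⟩ := h3
    rw [hpj] at h1 hc2 hc3 hc4
    have hp11 : p.1.1 < j := by omega
    have hp21 : p.2.1 + k ≤ j := by omega
    have he1 : c j = some p.1.1 := by
      rw [hcdef, cOf_eq_some_iff]
      refine ⟨hp11, ?_⟩
      rcases h1 with ⟨he, _⟩ | h
      · omega
      · exact Or.inr ⟨hp11, h.2⟩
    have he2 : c p.2.2 = some p.2.1 := by
      rw [hcdef, cOf_eq_some_iff]
      have : p.2.1 < p.2.2 := by omega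
      refine ⟨this, ?_⟩
      rcases h2 with ⟨he, _⟩ | h
      · omega
      · exact Or.inr ⟨this, h.2⟩
    exact ⟨he1, he2, hc1, hp21, hc3⟩
  cases hcj : c j with
  | none =>
    have : CS.filter (fun p => p.1.2 = j) = ∅ := by
      rw [Finset.filter_eq_empty_iff]
      intro p hp hpj
      have := hfib p (Finset.mem_filter.mpr ⟨hp, hpj⟩)
      rw [hcj] at this
      exact absurd this.1 (by simp)
    rw [this, Finset.card_empty, crAt, hcj]
    rfl
  | some i₁ =>
    rw [crAt, hcj]
    simp only [Option.elim]
    unfold rkA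
    apply Finset.card_bij (fun p _ => p.2.1)
    · -- maps into target
      intro p hp
      obtain ⟨he1, he2, hlt, hfar, hj2⟩ := hfib p hp
      have hi : p.1.1 = i₁ := by
        rw [hcj] at he1; injection he1 with h; omega
      rw [Finset.mem_filter, mem_fav, mem_avail]
      rw [Finset.mem_filter, hCS, Finset.mem_filter] at hp
      have hprod := hp.1.1
      simp only [Finset.mem_product] at hprod
      refine ⟨⟨⟨hprod.2.1, by omega, ⟨p.2.2, he2⟩, fun j' hj' hcon => ?_⟩, hfar⟩, by omega⟩
      have := hc.2 hcon he2
      omega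
    · -- injective
      intro p hp p' hp' heq
      obtain ⟨he1, he2, _, _, _⟩ := hfib p hp
      obtain ⟨he1', he2', _, _, _⟩ := hfib p' hp'
      have h1 : p.1.1 = p'.1.1 := by
        rw [he1'] at he1; injection he1 with h; omega
      have h2 : p.1.2 = p'.1.2 := by
        rw [Finset.mem_filter] at hp hp'
        rw [hp.2, hp'.2]
      have h4 : p.2.2 = p'.2.2 := by
        apply hc.2 (i := p.2.1) he2
        rw [← heq] at he2'
        exact he2'
      have : p.1 = p'.1 := Prod.ext h1 h2
      have h5 : p.2 = p'.2 := Prod.ext heq h4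
      exact Prod.ext this h5
    · -- surjective
      intro x hx
      rw [Finset.mem_filter, mem_fav, mem_avail] at hx
      obtain ⟨⟨⟨hxI, hxj, ⟨j₂, hj₂⟩, hunc⟩, hfar⟩, hlt⟩ := hx
      have hj₂j : j < j₂ := by
        rcases Nat.lt_trichotomy j₂ j with h | h | h
        · exact absurd hj₂ (hunc j₂ h)
        · subst h
          rw [hcj] at hj₂
          have : i₁ = x := by injection hj₂
          omega
        · exact h
      have hbx := hc.1 hj₂
      have hbi := hc.1 hcj
      refine ⟨((i₁, j), (x, j₂)), ?_, rfl⟩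
      rw [Finset.mem_filter, hCS, Finset.mem_filter]
      refine ⟨⟨?_, ?_, ?_, ?_⟩, rfl⟩
      · exact Finset.mem_product.mpr ⟨Finset.mem_product.mpr
          ⟨Finset.mem_Icc.mpr ⟨hbi.1, show i₁ ≤ n by omega⟩, hj⟩,
          Finset.mem_product.mpr ⟨hxI, Finset.mem_Icc.mpr ⟨show 1 ≤ j₂ by omega, hbx.2.2⟩⟩⟩
      · exact (cOf_eq_some_iff.mp hcj).2
      · exact (cOf_eq_some_iff.mp hj₂).2
      · exact ⟨hlt, show x ≤ j by omega, hj₂j, show k ≤ j - x by omega⟩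

lemma dne_eq_sum (hk : 1 ≤ k) (P : SP n) :
    dne k P = ∑ j ∈ Finset.Icc 1 n, neAt n k (cOf P) j := by
  have hc := cOf_valid P
  set c := cOf P with hcdef
  set CS : Finset ((ℕ × ℕ) × ℕ × ℕ) :=
    ((Finset.Icc 1 n ×ˢ Finset.Icc 1 n) ×ˢ (Finset.Icc 1 n ×ˢ Finset.Icc 1 n)).filter
      (fun p => IsEdge P p.1.1 p.1.2 ∧ IsEdge P p.2.1 p.2.2 ∧ NestPair k p.1 p.2)
    with hCS
  have hset : {p : (ℕ × ℕ) × ℕ × ℕ |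
      IsEdge P p.1.1 p.1.2 ∧ IsEdge P p.2.1 p.2.2 ∧ NestPair k p.1 p.2} = ↑CS := by
    ext p
    simp only [Set.mem_setOf_eq, hCS, Finset.coe_filter, Finset.mem_product]
    constructor
    · rintro ⟨h1, h2, h3⟩
      exact ⟨⟨⟨(edge_mem_Icc h1).1, (edge_mem_Icc h1).2⟩,
        ⟨(edge_mem_Icc h2).1, (edge_mem_Icc h2).2⟩⟩, h1, h2, h3⟩
    · rintro ⟨_, h⟩
      exact h
  rw [dne, hset, Set.ncard_coe_finset]
  rw [Finset.card_eq_sum_card_fiberwise (f := fun p => p.2.2) (t := Finset.Icc 1 n)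
    (fun p hp => by
      rw [hCS, Finset.mem_coe, Finset.mem_filter] at hp
      exact Finset.mem_coe.mpr (edge_mem_Icc hp.2.2.1).2)]
  apply Finset.sum_congr rfl
  intro j hj
  have hfib : ∀ p ∈ CS.filter (fun p => p.2.2 = j),
      c j = some p.2.1 ∧ c p.1.2 = some p.1.1 ∧ p.1.1 < p.2.1 ∧ p.2.1 + k ≤ j ∧
        j < p.1.2 := by
    intro p hp
    rw [Finset.mem_filter, hCS, Finset.mem_filter] at hp
    obtain ⟨⟨_, h1, h2, h3⟩, hpj⟩ := hp
    obtain ⟨hc1, hc2, hc3, hc4⟩ := h3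
    rw [hpj] at h2 hc2 hc3 hc4
    have hp21 : p.2.1 + k ≤ j := by omega
    have he2 : c j = some p.2.1 := by
      rw [hcdef, cOf_eq_some_iff]
      have : p.2.1 < j := by omega
      refine ⟨this, ?_⟩
      rcases h2 with ⟨he, _⟩ | h
      · omega
      · exact Or.inr ⟨this, h.2⟩
    have he1 : c p.1.2 = some p.1.1 := by
      rw [hcdef, cOf_eq_some_iff]
      have : p.1.1 < p.1.2 := by omega
      refine ⟨this, ?_⟩
      rcases h1 with ⟨he, _⟩ | h
      · omega
      · exact Or.inr ⟨this, h.2⟩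
    exact ⟨he2, he1, hc1, hp21, hc3⟩
  cases hcj : c j with
  | none =>
    have : CS.filter (fun p => p.2.2 = j) = ∅ := by
      rw [Finset.filter_eq_empty_iff]
      intro p hp hpj
      have := hfib p (Finset.mem_filter.mpr ⟨hp, hpj⟩)
      rw [hcj] at this
      exact absurd this.1 (by simp)
    rw [this, Finset.card_empty, neAt, hcj]
    rfl
  | some i₂ =>
    rw [neAt, hcj]
    simp only [Option.elim]
    by_cases hfar : i₂ + k ≤ j
    · rw [if_pos hfar]
      unfold rkB
      apply Finset.card_bij (fun p _ => p.1.1)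
      · intro p hp
        obtain ⟨he2, he1, hlt, _, hj1⟩ := hfib p hp
        have hi : p.2.1 = i₂ := by
          rw [hcj] at he2; injection he2 with h; omega
        rw [Finset.mem_filter, mem_fav, mem_avail]
        rw [Finset.mem_filter, hCS, Finset.mem_filter] at hp
        have hprod := hp.1.1
        simp only [Finset.mem_product] at hprod
        refine ⟨⟨⟨hprod.1.1, by omega, ⟨p.1.2, he1⟩, fun j' hj' hcon => ?_⟩, by omega⟩,
          by omega⟩
        have := hc.2 hcon he1
        omega
      · intro p hp p' hp' heq
        obtain ⟨he2, he1, _, _, _⟩ := hfib p hp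
        obtain ⟨he2', he1', _, _, _⟩ := hfib p' hp'
        have h1 : p.2.1 = p'.2.1 := by
          rw [he2'] at he2; injection he2 with h; omega
        have h2 : p.2.2 = p'.2.2 := by
          rw [Finset.mem_filter] at hp hp'
          rw [hp.2, hp'.2]
        have h4 : p.1.2 = p'.1.2 := by
          apply hc.2 (i := p.1.1) he1
          rw [← heq] at he1'
          exact he1'
        exact Prod.ext (Prod.ext heq h4) (Prod.ext h1 h2)
      · intro x hx
        rw [Finset.mem_filter, mem_fav, mem_avail] at hx
        obtain ⟨⟨⟨hxI, hxj, ⟨j₁, hj₁⟩, hunc⟩, hxfar⟩, hlt⟩ := hx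
        have hj₁j : j < j₁ := by
          rcases Nat.lt_trichotomy j₁ j with h | h | h
          · exact absurd hj₁ (hunc j₁ h)
          · subst h
            rw [hcj] at hj₁
            have : i₂ = x := by injection hj₁
            omega
          · exact h
        have hbx := hc.1 hj₁
        have hbi := hc.1 hcj
        refine ⟨((x, j₁), (i₂, j)), ?_, rfl⟩
        rw [Finset.mem_filter, hCS, Finset.mem_filter]
        refine ⟨⟨?_, ?_, ?_, ?_⟩, rfl⟩
        · exact Finset.mem_product.mpr ⟨Finset.mem_product.mpr
            ⟨hxI, Finset.mem_Icc.mpr ⟨show 1 ≤ j₁ by omega, hbx.2.2⟩⟩,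
            Finset.mem_product.mpr ⟨Finset.mem_Icc.mpr ⟨hbi.1, show i₂ ≤ n by omega⟩, hj⟩⟩
        · exact (cOf_eq_some_iff.mp hj₁).2
        · exact (cOf_eq_some_iff.mp hcj).2
        · exact ⟨hlt, show i₂ ≤ j by omega, hj₁j, show k ≤ j - i₂ by omega⟩
    · rw [if_neg hfar]
      rw [Finset.card_eq_zero, Finset.filter_eq_empty_iff]
      intro p hp hpj
      have := hfib p (Finset.mem_filter.mpr ⟨hp, hpj⟩)
      have hi : p.2.1 = i₂ := by
        have h := this.1
        rw [hcj] at h; injection h with h2; omega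
      omega

end Count

section Final
variable {n k : ℕ} {c : ℕ → Option ℕ}

lemma flip_none (j : ℕ) : flip n k c j = none ↔ c j = none := by
  rw [flip_eq]
  unfold step
  exact Option.map_eq_none_iff

lemma ofC_ext (c₂ c₃ : ℕ → Option ℕ) (h2 : Valid n c₂) (h3 : Valid n c₃)
    (e : c₂ = c₃) : ofC n c₂ h2 = ofC n c₃ h3 := by
  subst e
  rfl

end Final

end KZ

/-- For `k ≥ 1` there is a type-preserving involution on partitions of `[n]`
exchanging `dcr k` and `dne k`: it preserves openers, closers, singletons, and
transients. -/
theorem exists_type_preserving_involution (k n : ℕ) (hk : 1 ≤ k) (hn : 1 ≤ n) :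
    ∃ φ : SP n → SP n, (∀ P, φ (φ P) = P) ∧
      (∀ P, dcr k (φ P) = dne k P ∧ dne k (φ P) = dcr k P) ∧
      ∀ P, openers (φ P) = openers P ∧ closers (φ P) = closers P ∧
        singletons (φ P) = singletons P ∧ transients (φ P) = transients P := by
  classical
  refine ⟨fun P => KZ.ofC n (KZ.flip n k (KZ.cOf P)) (KZ.flip_valid hk (KZ.cOf_valid P)),
    ?_, ?_, ?_⟩
  · -- involution
    intro P
    dsimp only
    have hc := KZ.cOf_valid P
    have h1 : KZ.Valid n (KZ.flip n k (KZ.cOf P)) := KZ.flip_valid hk hc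
    have e1 : KZ.cOf (KZ.ofC n (KZ.flip n k (KZ.cOf P)) h1) = KZ.flip n k (KZ.cOf P) :=
      funext (KZ.cOf_ofC h1)
    have e2 : KZ.flip n k (KZ.cOf (KZ.ofC n (KZ.flip n k (KZ.cOf P)) h1)) = KZ.cOf P := by
      rw [e1]
      exact funext (KZ.flip_flip hk hc)
    exact (KZ.ofC_ext _ _ _ (KZ.cOf_valid P) e2).trans (KZ.ofC_cOf P)
  · -- statistics are exchanged
    intro P
    dsimp only
    have hc := KZ.cOf_valid P
    have h1 : KZ.Valid n (KZ.flip n k (KZ.cOf P)) := KZ.flip_valid hk hc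
    have e1 : KZ.cOf (KZ.ofC n (KZ.flip n k (KZ.cOf P)) h1) = KZ.flip n k (KZ.cOf P) :=
      funext (KZ.cOf_ofC h1)
    constructor
    · rw [KZ.dcr_eq_sum hk, KZ.dne_eq_sum hk, e1]
      exact Finset.sum_congr rfl fun j _ => KZ.crAt_flip hk hc j
    · rw [KZ.dne_eq_sum hk, KZ.dcr_eq_sum hk, e1]
      exact Finset.sum_congr rfl fun j _ => KZ.neAt_flip hk hc j
  · -- types are preserved
    intro P
    dsimp only
    have hc := KZ.cOf_valid P
    have h1 : KZ.Valid n (KZ.flip n k (KZ.cOf P)) := KZ.flip_valid hk hc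
    have e1 : KZ.cOf (KZ.ofC n (KZ.flip n k (KZ.cOf P)) h1) = KZ.flip n k (KZ.cOf P) :=
      funext (KZ.cOf_ofC h1)
    have hL : ∀ v : ℕ, (∃ j, KZ.flip n k (KZ.cOf P) j = some v) ↔ ∃ j, KZ.cOf P j = some v :=
      fun v => KZ.flip_lefts hk hc
    have hAll : ∀ v : ℕ, (∀ j, KZ.flip n k (KZ.cOf P) j ≠ some v) ↔ ∀ j, KZ.cOf P j ≠ some v := by
      intro v
      rw [← not_exists, ← not_exists]
      exact not_congr (hL v)
    refine ⟨?_, ?_, ?_, ?_⟩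
    · ext v
      rw [KZ.opener_iff, KZ.opener_iff, e1, hL v, KZ.flip_none]
    · ext v
      rw [KZ.closer_iff, KZ.closer_iff, e1, hAll v, ne_eq, KZ.flip_none]
    · ext v
      rw [KZ.singleton_iff, KZ.singleton_iff, e1, hAll v, KZ.flip_none]
    · ext v
      rw [KZ.transient_iff, KZ.transient_iff, e1, hL v, ne_eq, KZ.flip_none]
end

section
/- For complete matchings, 0-distant noncrossing and 1-distant noncrossing coincide: a complete matching of [2n] has no 0-distant crossing if and only if it has no 1-distant crossing. Consequently NCM_0(2n) = NCM_1(2n) = C_n, the n-th Catalan number. -/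
open Finset

open Finset

namespace NCMaux

/-- number of elements of `A` that are `≤ t` -/
def cnt (A : Finset ℕ) (t : ℕ) : ℕ := (A.filter (· ≤ t)).card

/-- height of the lattice path associated to the "opener set" `A` at time `t` -/
def hgt (A : Finset ℕ) (t : ℕ) : ℤ := 2 * (cnt A t : ℤ) - t

lemma cnt_zero {A : Finset ℕ} (h0 : 0 ∉ A) : cnt A 0 = 0 := by
  unfold cnt
  rw [Finset.card_eq_zero]
  ext x
  simp only [Finset.mem_filter, Finset.notMem_empty, iff_false, not_and]
  intro hx hle
  exact h0 (by simpa [Nat.le_zero.mp hle] using hx)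

lemma cnt_succ (A : Finset ℕ) (t : ℕ) :
    cnt A (t + 1) = cnt A t + (if t + 1 ∈ A then 1 else 0) := by
  unfold cnt
  by_cases h : t + 1 ∈ A
  · rw [if_pos h]
    have : A.filter (· ≤ t + 1) = insert (t + 1) (A.filter (· ≤ t)) := by
      ext x
      simp only [Finset.mem_filter, Finset.mem_insert]
      constructor
      · rintro ⟨hx, hle⟩
        rcases Nat.lt_or_ge x (t+1) with h' | h'
        · exact Or.inr ⟨hx, Nat.lt_succ_iff.mp h'⟩
        · exact Or.inl (le_antisymm hle h')
      · rintro (rfl | ⟨hx, hle⟩)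
        · exact ⟨h, le_refl _⟩
        · exact ⟨hx, hle.trans (Nat.le_succ t)⟩
    rw [this, Finset.card_insert_of_notMem (by simp)]
  · rw [if_neg h]
    congr 1
    ext x
    simp only [Finset.mem_filter]
    constructor
    · rintro ⟨hx, hle⟩
      refine ⟨hx, ?_⟩
      rcases Nat.lt_or_ge x (t+1) with h' | h'
      · exact Nat.lt_succ_iff.mp h'
      · exact absurd (le_antisymm hle h' ▸ hx) h
    · rintro ⟨hx, hle⟩
      exact ⟨hx, hle.trans (Nat.le_succ t)⟩

lemma cnt_all {A : Finset ℕ} {t : ℕ} (h : ∀ x ∈ A, x ≤ t) : cnt A t = A.card := by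
  unfold cnt; rw [Finset.filter_true_of_mem h]

lemma hgt_succ (A : Finset ℕ) (t : ℕ) :
    hgt A (t + 1) = hgt A t + (if t + 1 ∈ A then 1 else -1) := by
  unfold hgt
  rw [cnt_succ]
  split <;> push_cast <;> ring

lemma hgt_zero {A : Finset ℕ} (h0 : 0 ∉ A) : hgt A 0 = 0 := by
  unfold hgt; rw [cnt_zero h0]; simp

lemma hgt_mem {A : Finset ℕ} {i : ℕ} (hi : i ∈ A) (h1 : 1 ≤ i) :
    hgt A i = hgt A (i - 1) + 1 := by
  obtain ⟨j, rfl⟩ : ∃ j, i = j + 1 := ⟨i - 1, by omega⟩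
  rw [hgt_succ, if_pos hi]
  simp

lemma hgt_not_mem {A : Finset ℕ} {i : ℕ} (hi : i ∉ A) (h1 : 1 ≤ i) :
    hgt A i = hgt A (i - 1) - 1 := by
  obtain ⟨j, rfl⟩ : ∃ j, i = j + 1 := ⟨i - 1, by omega⟩
  rw [hgt_succ, if_neg hi]
  simp
  ring

/-- the candidate set for the partner of `i`: times `t > i` where the height
drops below `hgt A i`. -/
def dset (A : Finset ℕ) (m i : ℕ) : Finset ℕ :=
  (Finset.Icc 1 m).filter (fun t => i < t ∧ hgt A t < hgt A i)

noncomputable def dmin (A : Finset ℕ) (m i : ℕ) : ℕ :=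
  if h : (dset A m i).Nonempty then (dset A m i).min' h else 0

lemma dmin_eq_of {A : Finset ℕ} {m i j : ℕ} (hmem : j ∈ dset A m i)
    (hle : ∀ t ∈ dset A m i, j ≤ t) : dmin A m i = j := by
  have hne : (dset A m i).Nonempty := ⟨j, hmem⟩
  rw [dmin, dif_pos hne]
  exact le_antisymm (Finset.min'_le _ _ hmem) (hle _ (Finset.min'_mem _ hne))

lemma mem_dset {A : Finset ℕ} {m i t : ℕ} :
    t ∈ dset A m i ↔ (1 ≤ t ∧ t ≤ m ∧ i < t ∧ hgt A t < hgt A i) := by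
  simp [dset, Finset.mem_filter, Finset.mem_Icc, and_assoc]

end NCMaux
section Matching

namespace NCMaux

variable {m : ℕ}

open scoped Classical in
/-- partner function of a matching -/
noncomputable def ptn (P : SP m) (x : ℕ) : ℕ :=
  if h : ∃ y, y ≠ x ∧ {x, y} ∈ P.parts then h.choose else 0

lemma pair_mem_Icc {P : SP m} {i j : ℕ} (h : {i, j} ∈ P.parts) :
    i ∈ Finset.Icc 1 m ∧ j ∈ Finset.Icc 1 m := by
  have hle := P.le h
  exact ⟨hle (by simp), hle (by simp)⟩

lemma exists_partner {P : SP m} (hM : IsMatching P) {i : ℕ} (hi : i ∈ Finset.Icc 1 m) :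
    ∃ y, y ≠ i ∧ {i, y} ∈ P.parts := by
  obtain ⟨B, hB, hiB⟩ := P.exists_mem hi
  obtain ⟨a, b, hab, rfl⟩ := Finset.card_eq_two.mp (hM B hB)
  rcases Finset.mem_insert.mp hiB with rfl | hib
  · exact ⟨b, fun e => hab e.symm, hB⟩
  · rw [Finset.mem_singleton] at hib
    subst hib
    exact ⟨a, hab, by rwa [Finset.pair_comm]⟩

lemma partner_unique {P : SP m} {i j j' : ℕ} (h : {i, j} ∈ P.parts)
    (h' : {i, j'} ∈ P.parts) (hj : j ≠ i) (hj' : j' ≠ i) : j = j' := by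
  have := P.eq_of_mem_parts h h' (Finset.mem_insert_self i {j}) (Finset.mem_insert_self i {j'})
  have hj2 : j ∈ ({i, j'} : Finset ℕ) := by
    rw [← this]; simp
  rcases Finset.mem_insert.mp hj2 with e | e
  · exact absurd e hj
  · simpa using e

lemma ptn_spec {P : SP m} (hM : IsMatching P) {i : ℕ} (hi : i ∈ Finset.Icc 1 m) :
    ptn P i ≠ i ∧ {i, ptn P i} ∈ P.parts := by
  have h := exists_partner hM hi
  unfold ptn
  rw [dif_pos h]
  exact h.choose_spec

lemma ptn_eq {P : SP m} (hM : IsMatching P) {i j : ℕ} (h : {i, j} ∈ P.parts)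
    (hj : j ≠ i) : ptn P i = j := by
  have hi := (pair_mem_Icc h).1
  obtain ⟨h1, h2⟩ := ptn_spec hM hi
  exact partner_unique h2 h h1 hj

lemma ptn_ptn {P : SP m} (hM : IsMatching P) {i : ℕ} (hi : i ∈ Finset.Icc 1 m) :
    ptn P (ptn P i) = i := by
  obtain ⟨h1, h2⟩ := ptn_spec hM hi
  exact ptn_eq hM (by rwa [Finset.pair_comm]) (fun e => h1 e.symm)

lemma ptn_mem_Icc {P : SP m} (hM : IsMatching P) {i : ℕ} (hi : i ∈ Finset.Icc 1 m) :
    ptn P i ∈ Finset.Icc 1 m := (pair_mem_Icc (ptn_spec hM hi).2).2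

/-- openers of a matching, as a Finset -/
noncomputable def opF (P : SP m) : Finset ℕ :=
  (Finset.Icc 1 m).filter (fun i => i < ptn P i)

lemma mem_opF {P : SP m} {i : ℕ} :
    i ∈ opF P ↔ i ∈ Finset.Icc 1 m ∧ i < ptn P i := Finset.mem_filter

lemma not_mem_opF {P : SP m} (hM : IsMatching P) {i : ℕ} (hi : i ∈ Finset.Icc 1 m) :
    i ∉ opF P ↔ ptn P i < i := by
  have h1 := (ptn_spec hM hi).1
  rw [mem_opF]
  constructor
  · intro h
    rcases Nat.lt_or_ge (ptn P i) i with h' | h'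
    · exact h'
    · exact absurd ⟨hi, lt_of_le_of_ne h' (Ne.symm h1)⟩ h
  · intro h h2
    omega

/-- blocks of a matching are pairs `{i, ptn i}` -/
lemma block_eq_pair {P : SP m} (hM : IsMatching P) {B : Finset ℕ} (hB : B ∈ P.parts) :
    ∃ i j, i < j ∧ B = {i, j} ∧ {i, j} ∈ P.parts := by
  obtain ⟨a, b, hab, rfl⟩ := Finset.card_eq_two.mp (hM B hB)
  rcases Nat.lt_or_ge a b with h | h
  · exact ⟨a, b, h, rfl, hB⟩
  · exact ⟨b, a, lt_of_le_of_ne h hab.symm, Finset.pair_comm a b, Finset.pair_comm a b ▸ hB⟩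

/-- noncrossing predicate for matchings -/
def NCm (P : SP m) : Prop :=
  ∀ a b c d : ℕ, {a, b} ∈ P.parts → {c, d} ∈ P.parts → a < c → c ≤ b → b < d → False

/-- in a matching, an endpoint can't coincide between two (necessarily equal) blocks -/
lemma not_cross_eq {P : SP m} {a b d : ℕ} (h1 : {a, b} ∈ P.parts)
    (h2 : {b, d} ∈ P.parts) (hab : a < b) (hbd : b < d) : False := by
  have := P.eq_of_mem_parts h1 h2 (Finset.mem_insert_of_mem (Finset.mem_singleton_self b))
    (Finset.mem_insert_self b {d})
  have ha : a ∈ ({b, d} : Finset ℕ) := by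
    rw [← this]; simp
  rcases Finset.mem_insert.mp ha with e | e
  · omega
  · rw [Finset.mem_singleton] at e; omega

end NCMaux

end Matching
namespace NCMaux

variable {m : ℕ}

/-- closers of a matching, as a Finset -/
noncomputable def clF (P : SP m) : Finset ℕ :=
  (Finset.Icc 1 m).filter (fun i => ptn P i < i)

lemma mem_clF {P : SP m} {i : ℕ} :
    i ∈ clF P ↔ i ∈ Finset.Icc 1 m ∧ ptn P i < i := Finset.mem_filter

lemma opF_subset {P : SP m} : opF P ⊆ Finset.Icc 1 m := Finset.filter_subset _ _

lemma zero_not_mem_opF {P : SP m} : 0 ∉ opF P := by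
  intro h
  have := opF_subset h
  simp [Finset.mem_Icc] at this

lemma cnt_split (A : Finset ℕ) {i t : ℕ} (h : i ≤ t) :
    cnt A t = cnt A i + (A.filter (fun x => i < x ∧ x ≤ t)).card := by
  unfold cnt
  rw [← Finset.card_union_of_disjoint]
  · congr 1
    ext x
    simp only [Finset.mem_union, Finset.mem_filter]
    constructor
    · rintro ⟨hx, hle⟩
      by_cases h' : x ≤ i
      · exact Or.inl ⟨hx, h'⟩
      · exact Or.inr ⟨hx, by omega, hle⟩
    · rintro (⟨hx, hle⟩ | ⟨hx, _, hle⟩) <;> exact ⟨hx, by omega⟩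
  · rw [Finset.disjoint_left]
    intro x hx hy
    simp only [Finset.mem_filter] at hx hy
    omega

lemma cnt_op_add_cnt_cl {P : SP m} (hM : IsMatching P) {t : ℕ} (ht : t ≤ m) :
    cnt (opF P) t + cnt (clF P) t = t := by
  have hdisj : Disjoint ((opF P).filter (· ≤ t)) ((clF P).filter (· ≤ t)) := by
    rw [Finset.disjoint_left]
    intro x hx hy
    rw [Finset.mem_filter, mem_opF] at hx
    rw [Finset.mem_filter, mem_clF] at hy
    omega
  have hunion : (opF P).filter (· ≤ t) ∪ (clF P).filter (· ≤ t) = Finset.Icc 1 t := by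
    ext x
    simp only [Finset.mem_union, Finset.mem_filter, mem_opF, mem_clF, Finset.mem_Icc]
    constructor
    · rintro (⟨⟨hx, _⟩, hle⟩ | ⟨⟨hx, _⟩, hle⟩) <;> exact ⟨hx.1, hle⟩
    · rintro ⟨h1, h2⟩
      have hxm : x ∈ Finset.Icc 1 m := Finset.mem_Icc.mpr ⟨h1, h2.trans ht⟩
      have := (ptn_spec hM hxm).1
      rcases Nat.lt_or_ge x (ptn P x) with h' | h'
      · exact Or.inl ⟨⟨⟨h1, h2.trans ht⟩, h'⟩, h2⟩
      · exact Or.inr ⟨⟨⟨h1, h2.trans ht⟩, by omega⟩, h2⟩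
  have := Finset.card_union_of_disjoint hdisj
  rw [hunion, Nat.card_Icc] at this
  unfold cnt
  omega

lemma cnt_cl_le_cnt_op {P : SP m} (hM : IsMatching P) (t : ℕ) :
    cnt (clF P) t ≤ cnt (opF P) t := by
  apply Finset.card_le_card_of_injOn (ptn P)
  · intro x hx
    rw [Finset.mem_coe, Finset.mem_filter, mem_clF] at hx
    obtain ⟨⟨hxm, hlt⟩, hle⟩ := hx
    rw [Finset.mem_coe, Finset.mem_filter, mem_opF]
    refine ⟨⟨ptn_mem_Icc hM hxm, ?_⟩, by omega⟩
    rw [ptn_ptn hM hxm]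
    exact hlt
  · intro x hx y hy hxy
    rw [Finset.coe_filter, Set.mem_setOf_eq] at hx hy
    rw [mem_clF] at hx hy
    have := ptn_ptn hM hx.1.1
    have := ptn_ptn hM hy.1.1
    rw [← ptn_ptn hM hx.1.1, hxy, ptn_ptn hM hy.1.1]

lemma hgt_opF_nonneg {P : SP m} (hM : IsMatching P) {t : ℕ} (ht : t ≤ m) :
    0 ≤ hgt (opF P) t := by
  have h1 := cnt_op_add_cnt_cl hM ht
  have h2 := cnt_cl_le_cnt_op hM t
  unfold hgt
  omega

lemma card_opF {n : ℕ} {P : SP (2 * n)} (hM : IsMatching P) : (opF P).card = n := by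
  have h1 : cnt (opF P) (2 * n) = (opF P).card :=
    cnt_all (fun x hx => (Finset.mem_Icc.mp (opF_subset hx)).2)
  have h2 : cnt (clF P) (2 * n) = (clF P).card :=
    cnt_all (fun x hx => (Finset.mem_Icc.mp ((Finset.filter_subset _ _) hx)).2)
  have h3 := cnt_op_add_cnt_cl hM (le_refl (2 * n))
  have h4 := cnt_cl_le_cnt_op hM (2 * n)
  -- opposite inequality
  have h5 : cnt (opF P) (2 * n) ≤ cnt (clF P) (2 * n) := by
    apply Finset.card_le_card_of_injOn (ptn P)
    · intro x hx
      rw [Finset.mem_coe, Finset.mem_filter, mem_opF] at hx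
      obtain ⟨⟨hxm, hlt⟩, hle⟩ := hx
      rw [Finset.mem_coe, Finset.mem_filter, mem_clF]
      refine ⟨⟨ptn_mem_Icc hM hxm, ?_⟩, (Finset.mem_Icc.mp (ptn_mem_Icc hM hxm)).2⟩
      rw [ptn_ptn hM hxm]
      exact hlt
    · intro x hx y hy hxy
      rw [Finset.coe_filter, Set.mem_setOf_eq] at hx hy
      rw [mem_opF] at hx hy
      rw [← ptn_ptn hM hx.1.1, hxy, ptn_ptn hM hy.1.1]
  omega

end NCMaux
namespace NCMaux

variable {m : ℕ}

lemma not_mem_opF_of_cl {P : SP m} {j i : ℕ} (hji : ptn P j = i) (hij : i < j) :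
    j ∉ opF P := by
  intro h
  rw [mem_opF, hji] at h
  omega

lemma cl_le_op_local {P : SP m} (hM : IsMatching P) (hNC : NCm P) {i j t : ℕ}
    (hij : {i, j} ∈ P.parts) (hlt : i < j) (htj : t < j) :
    ((clF P).filter (fun x => i < x ∧ x ≤ t)).card ≤
      ((opF P).filter (fun x => i < x ∧ x ≤ t)).card := by
  have hptn_i : ptn P i = j := ptn_eq hM hij (by omega)
  apply Finset.card_le_card_of_injOn (ptn P)
  · intro x hx
    rw [Finset.mem_coe, Finset.mem_filter, mem_clF] at hx
    obtain ⟨⟨hxm, hcl⟩, hix, hxt⟩ := hx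
    have hblk : {x, ptn P x} ∈ P.parts := (ptn_spec hM hxm).2
    have hyi : ptn P x ≠ i := by
      intro e
      have : ptn P i = x := by rw [← e, ptn_ptn hM hxm]
      omega
    have hygt : i < ptn P x := by
      rcases Nat.lt_or_ge i (ptn P x) with h' | h'
      · exact h'
      · exfalso
        refine hNC (ptn P x) x i j ?_ hij (by omega) (by omega) (by omega)
        rwa [Finset.pair_comm]
    rw [Finset.mem_coe, Finset.mem_filter, mem_opF]
    refine ⟨⟨ptn_mem_Icc hM hxm, by rw [ptn_ptn hM hxm]; exact hcl⟩, hygt, by omega⟩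
  · intro x hx y hy hxy
    rw [Finset.coe_filter, Set.mem_setOf_eq] at hx hy
    rw [mem_clF] at hx hy
    rw [← ptn_ptn hM hx.1.1, hxy, ptn_ptn hM hy.1.1]

lemma op_le_cl_inner {P : SP m} (hM : IsMatching P) (hNC : NCm P) {i j : ℕ}
    (hij : {i, j} ∈ P.parts) (hlt : i < j) :
    ((opF P).filter (fun x => i < x ∧ x ≤ j - 1)).card ≤
      ((clF P).filter (fun x => i < x ∧ x ≤ j - 1)).card := by
  have hptn_j : ptn P j = i :=
    ptn_eq hM (by rwa [Finset.pair_comm]) (by omega)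
  apply Finset.card_le_card_of_injOn (ptn P)
  · intro x hx
    rw [Finset.mem_coe, Finset.mem_filter, mem_opF] at hx
    obtain ⟨⟨hxm, hop⟩, hix, hxt⟩ := hx
    have hblk : {x, ptn P x} ∈ P.parts := (ptn_spec hM hxm).2
    have hyj : ptn P x ≠ j := by
      intro e
      have : ptn P j = x := by rw [← e, ptn_ptn hM hxm]
      omega
    have hylt : ptn P x < j := by
      rcases Nat.lt_or_ge (ptn P x) j with h' | h'
      · exact h'
      · exact absurd (hNC i j x (ptn P x) hij hblk (by omega) (by omega) (by omega)) id
    rw [Finset.mem_coe, Finset.mem_filter, mem_clF]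
    refine ⟨⟨ptn_mem_Icc hM hxm, by rw [ptn_ptn hM hxm]; omega⟩, by omega, by omega⟩
  · intro x hx y hy hxy
    rw [Finset.coe_filter, Set.mem_setOf_eq] at hx hy
    rw [mem_opF] at hx hy
    rw [← ptn_ptn hM hx.1.1, hxy, ptn_ptn hM hy.1.1]

lemma hgt_diff {P : SP m} (hM : IsMatching P) {i t : ℕ} (hit : i ≤ t) (htm : t ≤ m) :
    hgt (opF P) t - hgt (opF P) i =
      (((opF P).filter (fun x => i < x ∧ x ≤ t)).card : ℤ) -
        ((clF P).filter (fun x => i < x ∧ x ≤ t)).card := by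
  have h1 := cnt_split (opF P) hit
  have h2 := cnt_split (clF P) hit
  have h3 := cnt_op_add_cnt_cl hM htm
  have h4 := cnt_op_add_cnt_cl hM (hit.trans htm)
  unfold hgt
  omega

lemma hgt_ge_of_inner {P : SP m} (hM : IsMatching P) (hNC : NCm P) {i j t : ℕ}
    (hij : {i, j} ∈ P.parts) (hlt : i < j) (hit : i ≤ t) (htj : t < j) (htm : t ≤ m) :
    hgt (opF P) i ≤ hgt (opF P) t := by
  have h1 := hgt_diff hM hit htm
  have h2 := cl_le_op_local hM hNC hij hlt htj
  omega

lemma hgt_block_end {P : SP m} (hM : IsMatching P) (hNC : NCm P) {i j : ℕ}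
    (hij : {i, j} ∈ P.parts) (hlt : i < j) :
    hgt (opF P) j = hgt (opF P) i - 1 := by
  have hjm := (pair_mem_Icc hij).2
  rw [Finset.mem_Icc] at hjm
  have hptn_j : ptn P j = i := ptn_eq hM (by rwa [Finset.pair_comm]) (by omega)
  have hnot : j ∉ opF P := not_mem_opF_of_cl hptn_j hlt
  have hstep : hgt (opF P) j = hgt (opF P) (j - 1) - 1 := hgt_not_mem hnot hjm.1
  have hit : i ≤ j - 1 := by omega
  have htm : j - 1 ≤ m := by omega
  have h1 := hgt_diff hM hit htm
  have h2 := cl_le_op_local hM hNC hij hlt (show j - 1 < j by omega)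
  have h3 := op_le_cl_inner hM hNC hij hlt
  omega

lemma dmin_block {P : SP m} (hM : IsMatching P) (hNC : NCm P) {i j : ℕ}
    (hij : {i, j} ∈ P.parts) (hlt : i < j) :
    dmin (opF P) m i = j := by
  have hjm := (pair_mem_Icc hij).2
  rw [Finset.mem_Icc] at hjm
  apply dmin_eq_of
  · rw [mem_dset]
    exact ⟨hjm.1, hjm.2, hlt, by rw [hgt_block_end hM hNC hij hlt]; omega⟩
  · intro t ht
    rw [mem_dset] at ht
    obtain ⟨h1, h2, h3, h4⟩ := ht
    by_contra h
    push_neg at h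
    have := hgt_ge_of_inner hM hNC hij hlt (le_of_lt h3) (by omega) h2
    omega

lemma parts_subset_of_opF_eq {P Q : SP m} (hMP : IsMatching P) (hMQ : IsMatching Q)
    (hNCP : NCm P) (hNCQ : NCm Q) (h : opF P = opF Q) : P.parts ⊆ Q.parts := by
  intro B hB
  obtain ⟨i, j, hlt, rfl, hij⟩ := block_eq_pair hMP hB
  have him := (pair_mem_Icc hij).1
  have hiop : i ∈ opF P := by
    rw [mem_opF, ptn_eq hMP hij (by omega)]
    exact ⟨him, hlt⟩
  have hiopQ : i ∈ opF Q := h ▸ hiop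
  rw [mem_opF] at hiopQ
  have hblkQ : {i, ptn Q i} ∈ Q.parts := (ptn_spec hMQ him).2
  have e1 : dmin (opF P) m i = j := dmin_block hMP hNCP hij hlt
  have e2 : dmin (opF Q) m i = ptn Q i := dmin_block hMQ hNCQ hblkQ hiopQ.2
  rw [h] at e1
  rw [e1] at e2
  rw [← e2] at hblkQ
  exact hblkQ

lemma eq_of_opF_eq {P Q : SP m} (hMP : IsMatching P) (hMQ : IsMatching Q)
    (hNCP : NCm P) (hNCQ : NCm Q) (h : opF P = opF Q) : P = Q := by
  ext1
  exact Finset.Subset.antisymm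
    (parts_subset_of_opF_eq hMP hMQ hNCP hNCQ h)
    (parts_subset_of_opF_eq hMQ hMP hNCQ hNCP h.symm)

end NCMaux
namespace NCMaux

/-- Dyck sets: opener sets of lattice paths staying nonnegative -/
def IsDyck (n : ℕ) (A : Finset ℕ) : Prop :=
  A ⊆ Finset.Icc 1 (2 * n) ∧ A.card = n ∧ ∀ t ≤ 2 * n, 0 ≤ hgt A t

variable {n : ℕ} {A : Finset ℕ}

lemma IsDyck.zero_not_mem (hD : IsDyck n A) : 0 ∉ A := by
  intro h
  have := hD.1 h
  simp [Finset.mem_Icc] at this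

lemma IsDyck.hgt_top (hD : IsDyck n A) : hgt A (2 * n) = 0 := by
  have : cnt A (2 * n) = n := by
    rw [cnt_all (fun x hx => (Finset.mem_Icc.mp (hD.1 hx)).2), hD.2.1]
  unfold hgt
  omega

lemma IsDyck.hgt_mem_pos (hD : IsDyck n A) {i : ℕ} (hi : i ∈ A) : 1 ≤ hgt A i := by
  have hm := Finset.mem_Icc.mp (hD.1 hi)
  have h1 := hgt_mem hi hm.1
  have h2 := hD.2.2 (i - 1) (by omega)
  omega

lemma IsDyck.dset_nonempty (hD : IsDyck n A) {i : ℕ} (hi : i ∈ A) :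
    (dset A (2 * n) i).Nonempty := by
  have hm := Finset.mem_Icc.mp (hD.1 hi)
  have hpos := hD.hgt_mem_pos hi
  have hne : i ≠ 2 * n := by
    intro e
    rw [e, hD.hgt_top] at hpos
    omega
  refine ⟨2 * n, ?_⟩
  rw [mem_dset, hD.hgt_top]
  exact ⟨by omega, le_refl _, by omega, by omega⟩

lemma dmin_mem' {m i : ℕ} (hne : (dset A m i).Nonempty) : dmin A m i ∈ dset A m i := by
  rw [dmin, dif_pos hne]
  exact Finset.min'_mem _ hne

lemma dmin_min' {m i : ℕ} (hne : (dset A m i).Nonempty) {t : ℕ} (ht : t ∈ dset A m i) :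
    dmin A m i ≤ t := by
  rw [dmin, dif_pos hne]
  exact Finset.min'_le _ _ ht

lemma IsDyck.dmin_spec (hD : IsDyck n A) {i : ℕ} (hi : i ∈ A) :
    1 ≤ dmin A (2 * n) i ∧ dmin A (2 * n) i ≤ 2 * n ∧ i < dmin A (2 * n) i ∧
      hgt A (dmin A (2 * n) i) < hgt A i :=
  mem_dset.mp (dmin_mem' (hD.dset_nonempty hi))

lemma IsDyck.hgt_le_of_between (hD : IsDyck n A) {i t : ℕ} (hi : i ∈ A)
    (h1 : i < t) (h2 : t < dmin A (2 * n) i) : hgt A i ≤ hgt A t := by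
  by_contra h
  push_neg at h
  have him := Finset.mem_Icc.mp (hD.1 hi)
  have hsp := hD.dmin_spec hi
  have ht : t ∈ dset A (2 * n) i := mem_dset.mpr ⟨by omega, by omega, h1, h⟩
  have := dmin_min' (hD.dset_nonempty hi) ht
  omega

lemma IsDyck.dmin_not_mem (hD : IsDyck n A) {i : ℕ} (hi : i ∈ A) :
    dmin A (2 * n) i ∉ A := by
  intro h
  obtain ⟨h1, h2, h3, h4⟩ := hD.dmin_spec hi
  have hstep := hgt_mem h h1
  rcases Nat.lt_or_ge i (dmin A (2 * n) i - 1) with h' | h'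
  · have := hD.hgt_le_of_between hi h' (by omega)
    omega
  · have : dmin A (2 * n) i - 1 = i := by omega
    rw [this] at hstep
    omega

lemma IsDyck.hgt_dmin (hD : IsDyck n A) {i : ℕ} (hi : i ∈ A) :
    hgt A (dmin A (2 * n) i) = hgt A i - 1 := by
  obtain ⟨h1, h2, h3, h4⟩ := hD.dmin_spec hi
  have hstep := hgt_not_mem (hD.dmin_not_mem hi) h1
  rcases Nat.lt_or_ge i (dmin A (2 * n) i - 1) with h' | h'
  · have := hD.hgt_le_of_between hi h' (by omega)
    omega
  · have : dmin A (2 * n) i - 1 = i := by omega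
    rw [this] at hstep
    omega

lemma IsDyck.hgt_lt_of_between (hD : IsDyck n A) {i i' : ℕ} (hi : i ∈ A) (hi' : i' ∈ A)
    (h1 : i < i') (h2 : i' < dmin A (2 * n) i) : hgt A i < hgt A i' := by
  have hm' := Finset.mem_Icc.mp (hD.1 hi')
  have hstep := hgt_mem hi' hm'.1
  rcases Nat.lt_or_ge i (i' - 1) with h' | h'
  · have := hD.hgt_le_of_between hi h' (by omega)
    omega
  · have : i' - 1 = i := by omega
    rw [this] at hstep
    omega

lemma IsDyck.dmin_nest (hD : IsDyck n A) {i i' : ℕ} (hi : i ∈ A) (hi' : i' ∈ A)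
    (h1 : i < i') (h2 : i' < dmin A (2 * n) i) :
    dmin A (2 * n) i' < dmin A (2 * n) i := by
  obtain ⟨g1, g2, g3, g4⟩ := hD.dmin_spec hi
  have hlt := hD.hgt_lt_of_between hi hi' h1 h2
  have hmem : dmin A (2 * n) i ∈ dset A (2 * n) i' := by
    rw [mem_dset]
    exact ⟨g1, g2, h2, by omega⟩
  have hle := dmin_min' (hD.dset_nonempty hi') hmem
  have hne : dmin A (2 * n) i' ≠ dmin A (2 * n) i := by
    intro e
    have e1 := hD.hgt_dmin hi
    have e2 := hD.hgt_dmin hi'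
    rw [e] at e2
    omega
  omega

lemma IsDyck.dmin_injOn (hD : IsDyck n A) {i i' : ℕ} (hi : i ∈ A) (hi' : i' ∈ A)
    (hne : i ≠ i') : dmin A (2 * n) i ≠ dmin A (2 * n) i' := by
  rcases Nat.lt_or_ge i i' with h | h
  · rcases Nat.lt_or_ge i' (dmin A (2 * n) i) with h2 | h2
    · exact (hD.dmin_nest hi hi' h h2).ne'
    · have := (hD.dmin_spec hi').2.2.1
      omega
  · have hlt : i' < i := by omega
    rcases Nat.lt_or_ge i (dmin A (2 * n) i') with h2 | h2
    · exact (hD.dmin_nest hi' hi hlt h2).ne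
    · have := (hD.dmin_spec hi).2.2.1
      omega

/-- the blocks of the matching associated to a Dyck set -/
noncomputable def mkParts (A : Finset ℕ) (n : ℕ) : Finset (Finset ℕ) :=
  A.image (fun i => ({i, dmin A (2 * n) i} : Finset ℕ))

lemma IsDyck.cover (hD : IsDyck n A) :
    A ∪ A.image (fun i => dmin A (2 * n) i) = Finset.Icc 1 (2 * n) := by
  have hdisj : Disjoint A (A.image (fun i => dmin A (2 * n) i)) := by
    rw [Finset.disjoint_right]
    intro x hx
    rw [Finset.mem_image] at hx
    obtain ⟨i, hi, rfl⟩ := hx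
    exact fun h => hD.dmin_not_mem hi h
  have hsub : A ∪ A.image (fun i => dmin A (2 * n) i) ⊆ Finset.Icc 1 (2 * n) := by
    intro x hx
    rcases Finset.mem_union.mp hx with h | h
    · exact hD.1 h
    · rw [Finset.mem_image] at h
      obtain ⟨i, hi, rfl⟩ := h
      obtain ⟨h1, h2, _, _⟩ := hD.dmin_spec hi
      exact Finset.mem_Icc.mpr ⟨h1, h2⟩
  have hcardim : (A.image (fun i => dmin A (2 * n) i)).card = n := by
    rw [Finset.card_image_of_injOn, hD.2.1]
    intro x hx y hy hxy
    by_contra hne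
    exact hD.dmin_injOn hx hy hne hxy
  have hcard : (A ∪ A.image (fun i => dmin A (2 * n) i)).card = 2 * n := by
    rw [Finset.card_union_of_disjoint hdisj, hD.2.1, hcardim]
    omega
  apply Finset.eq_of_subset_of_card_le hsub
  rw [hcard, Nat.card_Icc]
  omega

/-- the noncrossing matching associated to a Dyck set -/
noncomputable def mkP (hD : IsDyck n A) : SP (2 * n) where
  parts := mkParts A n
  supIndep := by
    rw [Finset.supIndep_iff_pairwiseDisjoint]
    intro B hB C hC hne
    rw [Finset.mem_coe, mkParts, Finset.mem_image] at hB hC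
    obtain ⟨i, hi, rfl⟩ := hB
    obtain ⟨i', hi', rfl⟩ := hC
    have hii' : i ≠ i' := fun e => hne (by rw [e])
    simp only [Function.onFun, id]
    rw [Finset.disjoint_left]
    intro x hx hy
    simp only [Finset.mem_insert, Finset.mem_singleton] at hx hy
    rcases hx with rfl | rfl
    · rcases hy with e | e
      · exact hii' e
      · exact hD.dmin_not_mem hi' (e ▸ hi)
    · rcases hy with e | e
      · exact hD.dmin_not_mem hi (e ▸ hi')
      · exact hD.dmin_injOn hi hi' hii' e
  sup_parts := by
    apply le_antisymm
    · apply Finset.sup_le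
      intro B hB
      rw [mkParts, Finset.mem_image] at hB
      obtain ⟨i, hi, rfl⟩ := hB
      intro x hx
      simp only [id_eq, Finset.mem_insert, Finset.mem_singleton] at hx
      rcases hx with rfl | rfl
      · exact hD.1 hi
      · obtain ⟨h1, h2, _, _⟩ := hD.dmin_spec hi
        exact Finset.mem_Icc.mpr ⟨h1, h2⟩
    · intro x hx
      rw [← hD.cover] at hx
      rcases Finset.mem_union.mp hx with h | h
      · rw [Finset.mem_sup]
        exact ⟨{x, dmin A (2 * n) x}, Finset.mem_image_of_mem _ h, by simp⟩
      · rw [Finset.mem_image] at h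
        obtain ⟨i, hi, rfl⟩ := h
        rw [Finset.mem_sup]
        exact ⟨{i, dmin A (2 * n) i}, Finset.mem_image_of_mem _ hi, by simp⟩
  bot_notMem := by
    intro h
    rw [mkParts, Finset.mem_image] at h
    obtain ⟨i, hi, e⟩ := h
    have : i ∈ (⊥ : Finset ℕ) := by rw [← e]; simp
    simp at this

lemma mkP_parts (hD : IsDyck n A) : (mkP hD).parts = mkParts A n := rfl

lemma mkP_matching (hD : IsDyck n A) : IsMatching (mkP hD) := by
  intro B hB
  rw [mkP_parts, mkParts, Finset.mem_image] at hB
  obtain ⟨i, hi, rfl⟩ := hB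
  rw [Finset.card_pair]
  exact ((hD.dmin_spec hi).2.2.1).ne

lemma pair_eq_pair_of_lt {a b i j : ℕ} (h : ({a, b} : Finset ℕ) = {i, j})
    (hab : a < b) (hij : i < j) : a = i ∧ b = j := by
  have ha : a ∈ ({i, j} : Finset ℕ) := by rw [← h]; simp
  have hb : b ∈ ({i, j} : Finset ℕ) := by rw [← h]; simp
  have hi : i ∈ ({a, b} : Finset ℕ) := by rw [h]; simp
  have hj : j ∈ ({a, b} : Finset ℕ) := by rw [h]; simp
  simp only [Finset.mem_insert, Finset.mem_singleton] at ha hb hi hj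
  omega

lemma mkP_block {B : Finset ℕ} (hD : IsDyck n A) (hB : B ∈ (mkP hD).parts) :
    ∃ i ∈ A, B = {i, dmin A (2 * n) i} := by
  rw [mkP_parts, mkParts, Finset.mem_image] at hB
  obtain ⟨i, hi, rfl⟩ := hB
  exact ⟨i, hi, rfl⟩

lemma mkP_nc (hD : IsDyck n A) : NCm (mkP hD) := by
  intro a b c d hab hcd h1 h2 h3
  obtain ⟨i, hi, eB⟩ := mkP_block hD hab
  obtain ⟨i', hi', eC⟩ := mkP_block hD hcd
  obtain ⟨ea, eb⟩ := pair_eq_pair_of_lt eB (by omega) (hD.dmin_spec hi).2.2.1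
  obtain ⟨ec, ed⟩ := pair_eq_pair_of_lt eC (by omega) (hD.dmin_spec hi').2.2.1
  have hcb : c ≠ b := by
    intro e
    rw [ec] at e
    rw [eb] at e
    exact hD.dmin_not_mem hi (e ▸ hi')
  have := hD.dmin_nest hi hi' (by omega) (by omega)
  omega

lemma mkP_mem_pair {i : ℕ} (hD : IsDyck n A) (hi : i ∈ A) :
    ({i, dmin A (2 * n) i} : Finset ℕ) ∈ (mkP hD).parts :=
  Finset.mem_image_of_mem _ hi

lemma opF_mkP (hD : IsDyck n A) : opF (mkP hD) = A := by
  ext x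
  constructor
  · intro hx
    rw [mem_opF] at hx
    obtain ⟨hxm, hlt⟩ := hx
    have hblk : {x, ptn (mkP hD) x} ∈ (mkP hD).parts := (ptn_spec (mkP_matching hD) hxm).2
    obtain ⟨i, hi, e⟩ := mkP_block hD hblk
    obtain ⟨e1, _⟩ := pair_eq_pair_of_lt e hlt (hD.dmin_spec hi).2.2.1
    exact e1 ▸ hi
  · intro hx
    have hblk := mkP_mem_pair hD hx
    rw [mem_opF]
    refine ⟨hD.1 hx, ?_⟩
    rw [ptn_eq (mkP_matching hD) hblk ((hD.dmin_spec hx).2.2.1).ne']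
    exact (hD.dmin_spec hx).2.2.1

end NCMaux
namespace NCMaux

open DyckStep

lemma count_U_add_count_D : ∀ l : List DyckStep, l.count U + l.count D = l.length
  | [] => rfl
  | x :: l => by
    rcases x.dichotomy with rfl | rfl <;>
      · simp only [List.count_cons, List.length_cons]
        have := count_U_add_count_D l
        simp_all
        omega

/-- the word associated to an opener set -/
def wordOf (A : Finset ℕ) (m : ℕ) : List DyckStep :=
  (List.range m).map (fun i => if i + 1 ∈ A then U else D)

/-- the opener set associated to a word -/
def setOf (l : List DyckStep) : Finset ℕ :=
  (Finset.Icc 1 l.length).filter (fun x => l.getD (x - 1) D = U)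

@[simp] lemma length_wordOf (A : Finset ℕ) (m : ℕ) : (wordOf A m).length = m := by
  simp [wordOf]

lemma mem_setOf {l : List DyckStep} {x : ℕ} :
    x ∈ setOf l ↔ 1 ≤ x ∧ x ≤ l.length ∧ l.getD (x - 1) D = U := by
  simp [setOf, Finset.mem_filter, Finset.mem_Icc, and_assoc]

lemma cnt_setOf (l : List DyckStep) (t : ℕ) : cnt (setOf l) t = (l.take t).count U := by
  induction t with
  | zero =>
    rw [cnt_zero (by rw [mem_setOf]; omega)]
    simp
  | succ t ih =>
    rw [cnt_succ, ih]
    rcases Nat.lt_or_ge t l.length with h | h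
    · rw [List.take_succ]
      have hsome : l[t]? = some l[t] := List.getElem?_eq_getElem h
      rw [hsome]
      have hmem : (t + 1 ∈ setOf l) ↔ (l[t] = U) := by
        rw [mem_setOf]
        simp only [Nat.add_sub_cancel]
        rw [List.getD_eq_getElem _ _ h]
        constructor
        · exact fun ⟨_, _, h⟩ => h
        · exact fun h' => ⟨by omega, by omega, h'⟩
      by_cases hc : t + 1 ∈ setOf l
      · rw [if_pos hc, List.count_append]
        have e := hmem.mp hc
        simp [e]
      · rw [if_neg hc, List.count_append]
        have e : l[t] = D := (l[t]).dichotomy.resolve_left (fun e => hc (hmem.mpr e))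
        simp [e]
    · rw [List.take_of_length_le h, List.take_of_length_le (by omega)]
      have hns : t + 1 ∉ setOf l := by
        rw [mem_setOf]
        omega
      rw [if_neg hns]
      omega

lemma card_setOf (l : List DyckStep) : (setOf l).card = l.count U := by
  have h1 : cnt (setOf l) l.length = (setOf l).card :=
    cnt_all (fun x hx => (mem_setOf.mp hx).2.1)
  have h2 := cnt_setOf l l.length
  rw [List.take_length] at h2
  omega

lemma setOf_dyck {p : DyckWord} {n : ℕ} (hn : p.semilength = n) : IsDyck n (setOf p.toList) := by
  have hlen : p.toList.length = 2 * n := by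
    rw [← p.two_mul_semilength_eq_length, hn]
  refine ⟨?_, ?_, ?_⟩
  · intro x hx
    rw [mem_setOf] at hx
    rw [Finset.mem_Icc]
    omega
  · rw [card_setOf]
    exact hn
  · intro t ht
    have h1 := cnt_setOf p.toList t
    have h2 := p.count_D_le_count_U t
    have h3 := count_U_add_count_D (p.toList.take t)
    rw [List.length_take, hlen] at h3
    unfold hgt
    omega

lemma getD_wordOf {A : Finset ℕ} {m x : ℕ} (h1 : 1 ≤ x) (h2 : x ≤ m) :
    (wordOf A m).getD (x - 1) D = if x ∈ A then U else D := by
  have hlt : x - 1 < (wordOf A m).length := by rw [length_wordOf]; omega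
  rw [List.getD_eq_getElem _ _ hlt]
  simp only [wordOf]
  simp only [List.getElem_map]
  simp only [List.getElem_range]
  have hx : x - 1 + 1 = x := by omega
  rw [hx]

lemma setOf_wordOf {A : Finset ℕ} {m : ℕ} (hA : A ⊆ Finset.Icc 1 m) :
    setOf (wordOf A m) = A := by
  ext x
  rw [mem_setOf, length_wordOf]
  constructor
  · rintro ⟨h1, h2, h3⟩
    rw [getD_wordOf h1 h2] at h3
    by_cases h : x ∈ A
    · exact h
    · rw [if_neg h] at h3
      exact absurd h3 (by simp)
  · intro h
    have hm := Finset.mem_Icc.mp (hA h)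
    refine ⟨hm.1, hm.2, ?_⟩
    rw [getD_wordOf hm.1 hm.2, if_pos h]

lemma count_U_wordOf {n : ℕ} {A : Finset ℕ} (hD : IsDyck n A) :
    (wordOf A (2 * n)).count U = n := by
  have h1 := cnt_setOf (wordOf A (2 * n)) (2 * n)
  rw [List.take_of_length_le (by rw [length_wordOf])] at h1
  rw [setOf_wordOf hD.1] at h1
  rw [← h1, cnt_all (fun x hx => (Finset.mem_Icc.mp (hD.1 hx)).2), hD.2.1]

/-- the Dyck word associated to a Dyck set -/
def mkWord {n : ℕ} {A : Finset ℕ} (hD : IsDyck n A) : DyckWord where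
  toList := wordOf A (2 * n)
  count_U_eq_count_D := by
    have h1 := count_U_wordOf hD
    have h2 := count_U_add_count_D (wordOf A (2 * n))
    rw [length_wordOf] at h2
    omega
  count_D_le_count_U t := by
    have h1 := cnt_setOf (wordOf A (2 * n)) t
    rw [setOf_wordOf hD.1] at h1
    have h3 := count_U_add_count_D ((wordOf A (2 * n)).take t)
    rw [List.length_take, length_wordOf] at h3
    rcases le_or_gt t (2 * n) with h | h
    · have h2 := hD.2.2 t h
      unfold hgt at h2
      omega
    · have h2 := hD.2.2 (2 * n) (le_refl _)
      have h4 : cnt A t = cnt A (2 * n) + ((A.filter (fun x => 2 * n < x ∧ x ≤ t)).card) :=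
        cnt_split A (by omega)
      have h5 : A.filter (fun x => 2 * n < x ∧ x ≤ t) = ∅ := by
        rw [Finset.filter_eq_empty_iff]
        intro x hx
        have := Finset.mem_Icc.mp (hD.1 hx)
        omega
      rw [h5] at h4
      unfold hgt at h2
      simp at h4
      omega

lemma mkWord_semilength {n : ℕ} {A : Finset ℕ} (hD : IsDyck n A) :
    (mkWord hD).semilength = n := count_U_wordOf hD

lemma wordOf_setOf (l : List DyckStep) : wordOf (setOf l) l.length = l := by
  apply List.ext_getElem
  · rw [length_wordOf]
  · intro i h1 h2
    simp only [wordOf]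
    simp only [List.getElem_map]
    simp only [List.getElem_range]
    have hmem : (i + 1 ∈ setOf l) ↔ (l[i] = U) := by
      rw [mem_setOf]
      simp only [Nat.add_sub_cancel]
      rw [List.getD_eq_getElem _ _ h2]
      constructor
      · exact fun ⟨_, _, h⟩ => h
      · exact fun h' => ⟨by omega, by omega, h'⟩
    rcases (l[i]).dichotomy with e | e
    · rw [if_pos (hmem.mpr e), e]
    · rw [if_neg (fun hc => by rw [hmem.mp hc] at e; exact absurd e (by simp)), e]

end NCMaux
namespace NCMaux

variable {m : ℕ}

lemma isEdge_iff {P : SP m} (hM : IsMatching P) {i j : ℕ} :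
    IsEdge P i j ↔ i < j ∧ {i, j} ∈ P.parts := by
  constructor
  · rintro (⟨rfl, hs⟩ | ⟨hlt, B, hB, hiB, hjB, _⟩)
    · have := hM _ hs
      simp at this
    · refine ⟨hlt, ?_⟩
      have hsub : ({i, j} : Finset ℕ) ⊆ B := by
        intro x hx
        simp only [Finset.mem_insert, Finset.mem_singleton] at hx
        rcases hx with rfl | rfl
        · exact hiB
        · exact hjB
      have : ({i, j} : Finset ℕ) = B := by
        apply Finset.eq_of_subset_of_card_le hsub
        rw [hM _ hB, Finset.card_pair hlt.ne]
      rw [this]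
      exact hB
  · rintro ⟨hlt, hB⟩
    refine Or.inr ⟨hlt, {i, j}, hB, by simp, by simp, ?_⟩
    intro x hx
    simp only [Finset.mem_insert, Finset.mem_singleton] at hx
    rcases hx with rfl | rfl <;> omega

lemma edge_bound {P : SP m} {i j : ℕ} (h : IsEdge P i j) :
    i ∈ Finset.Icc 1 m ∧ j ∈ Finset.Icc 1 m := by
  rcases h with ⟨rfl, hs⟩ | ⟨_, B, hB, hiB, hjB, _⟩
  · have := P.le hs (Finset.mem_singleton_self i)
    exact ⟨this, this⟩
  · exact ⟨P.le hB hiB, P.le hB hjB⟩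

lemma crossSet_finite (k : ℕ) (P : SP m) :
    Set.Finite {p : (ℕ × ℕ) × ℕ × ℕ |
      IsEdge P p.1.1 p.1.2 ∧ IsEdge P p.2.1 p.2.2 ∧ CrossPair k p.1 p.2} := by
  have hIcc : (Set.Icc 0 m).Finite := Set.finite_Icc 0 m
  apply Set.Finite.subset (((hIcc.prod hIcc).prod (hIcc.prod hIcc)))
  rintro ⟨⟨i1, j1⟩, ⟨i2, j2⟩⟩ ⟨h1, h2, _⟩
  obtain ⟨hi1, hj1⟩ := edge_bound h1
  obtain ⟨hi2, hj2⟩ := edge_bound h2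
  rw [Finset.mem_Icc] at hi1 hj1 hi2 hj2
  exact ⟨⟨Set.mem_Icc.mpr ⟨by omega, hi1.2⟩, Set.mem_Icc.mpr ⟨by omega, hj1.2⟩⟩,
    Set.mem_Icc.mpr ⟨by omega, hi2.2⟩, Set.mem_Icc.mpr ⟨by omega, hj2.2⟩⟩

lemma dcr_zero_iff (k : ℕ) (P : SP m) :
    dcr k P = 0 ↔ ∀ i1 j1 i2 j2, IsEdge P i1 j1 → IsEdge P i2 j2 →
      ¬CrossPair k (i1, j1) (i2, j2) := by
  unfold dcr
  rw [Set.ncard_eq_zero (crossSet_finite k P)]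
  constructor
  · intro h i1 j1 i2 j2 h1 h2 hc
    have : ((i1, j1), (i2, j2)) ∈ {p : (ℕ × ℕ) × ℕ × ℕ |
        IsEdge P p.1.1 p.1.2 ∧ IsEdge P p.2.1 p.2.2 ∧ CrossPair k p.1 p.2} := ⟨h1, h2, hc⟩
    rw [h] at this
    exact this
  · intro h
    ext ⟨⟨i1, j1⟩, ⟨i2, j2⟩⟩
    simp only [Set.mem_setOf_eq, Set.mem_empty_iff_false, iff_false, not_and]
    intro h1 h2
    exact h i1 j1 i2 j2 h1 h2

lemma dcr0_iff_NCm {P : SP m} (hM : IsMatching P) : dcr 0 P = 0 ↔ NCm P := by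
  rw [dcr_zero_iff]
  constructor
  · intro h a b c d hab hcd h1 h2 h3
    have hedge1 : IsEdge P a b := (isEdge_iff hM).mpr ⟨by omega, hab⟩
    have hedge2 : IsEdge P c d := (isEdge_iff hM).mpr ⟨by omega, hcd⟩
    exact h a b c d hedge1 hedge2 ⟨h1, h2, h3, by omega⟩
  · intro h i1 j1 i2 j2 h1 h2 hc
    obtain ⟨e1, hb1⟩ := (isEdge_iff hM).mp h1
    obtain ⟨e2, hb2⟩ := (isEdge_iff hM).mp h2
    obtain ⟨c1, c2, c3, _⟩ := hc
    exact h i1 j1 i2 j2 hb1 hb2 c1 c2 c3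

lemma dcr1_iff_NCm {P : SP m} (hM : IsMatching P) : dcr 1 P = 0 ↔ NCm P := by
  rw [dcr_zero_iff]
  constructor
  · intro h a b c d hab hcd h1 h2 h3
    have hedge1 : IsEdge P a b := (isEdge_iff hM).mpr ⟨by omega, hab⟩
    have hedge2 : IsEdge P c d := (isEdge_iff hM).mpr ⟨by omega, hcd⟩
    rcases eq_or_lt_of_le h2 with rfl | hlt
    · exact not_cross_eq hab hcd h1 h3
    · exact h a b c d hedge1 hedge2 ⟨h1, h2, h3, by omega⟩
  · intro h i1 j1 i2 j2 h1 h2 hc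
    obtain ⟨e1, hb1⟩ := (isEdge_iff hM).mp h1
    obtain ⟨e2, hb2⟩ := (isEdge_iff hM).mp h2
    obtain ⟨c1, c2, c3, _⟩ := hc
    exact h i1 j1 i2 j2 hb1 hb2 c1 c2 c3

lemma opF_isDyck {n : ℕ} {P : SP (2 * n)} (hM : IsMatching P) : IsDyck n (opF P) :=
  ⟨opF_subset, card_opF hM, fun t ht => hgt_opF_nonneg hM ht⟩

/-- The master equivalence: noncrossing matchings of `[2n]` are equinumerous
with Dyck words of semilength `n`. -/
noncomputable def matchEquiv (n : ℕ) :
    {P : SP (2 * n) | IsMatching P ∧ dcr 0 P = 0} ≃ {p : DyckWord // p.semilength = n} where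
  toFun := fun ⟨P, hP⟩ => ⟨mkWord (opF_isDyck hP.1), mkWord_semilength _⟩
  invFun := fun ⟨w, hw⟩ => ⟨mkP (setOf_dyck hw),
    ⟨mkP_matching _, (dcr0_iff_NCm (mkP_matching _)).mpr (mkP_nc _)⟩⟩
  left_inv := by
    rintro ⟨P, hM, h0⟩
    apply Subtype.ext
    dsimp only
    apply eq_of_opF_eq (mkP_matching _) hM (mkP_nc _) ((dcr0_iff_NCm hM).mp h0)
    rw [opF_mkP]
    show setOf (wordOf (opF P) (2 * n)) = opF P
    exact setOf_wordOf opF_subset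
  right_inv := by
    rintro ⟨w, hw⟩
    apply Subtype.ext
    dsimp only
    apply DyckWord.ext
    show wordOf (opF (mkP (setOf_dyck hw))) (2 * n) = w.toList
    rw [opF_mkP]
    have hlen : w.toList.length = 2 * n := by
      rw [← w.two_mul_semilength_eq_length, hw]
    rw [← hlen]
    exact wordOf_setOf w.toList

end NCMaux
/-- For complete matchings, 0-distant noncrossing and 1-distant noncrossing
coincide; consequently `NCM₀(2n) = NCM₁(2n) = Cₙ`. -/
theorem ncm_zero_eq_ncm_one_eq_catalan (n : ℕ) :
    (∀ P : SP (2 * n), IsMatching P → (dcr 0 P = 0 ↔ dcr 1 P = 0)) ∧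
    NCM 0 (2 * n) = catalan n ∧ NCM 1 (2 * n) = catalan n := by
  have hiff : ∀ P : SP (2 * n), IsMatching P → (dcr 0 P = 0 ↔ dcr 1 P = 0) := fun P hM =>
    (NCMaux.dcr0_iff_NCm hM).trans (NCMaux.dcr1_iff_NCm hM).symm
  have h0 : NCM 0 (2 * n) = catalan n := by
    unfold NCM
    rw [← Nat.card_coe_set_eq, Nat.card_congr (NCMaux.matchEquiv n),
      Nat.card_eq_fintype_card, DyckWord.card_dyckWord_semilength_eq_catalan]
  refine ⟨hiff, h0, ?_⟩
  have hset : {P : SP (2 * n) | IsMatching P ∧ dcr 1 P = 0} =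
      {P : SP (2 * n) | IsMatching P ∧ dcr 0 P = 0} := by
    ext P
    simp only [Set.mem_setOf_eq]
    exact ⟨fun ⟨hM, h⟩ => ⟨hM, (hiff P hM).mpr h⟩, fun ⟨hM, h⟩ => ⟨hM, (hiff P hM).mp h⟩⟩
  rw [← h0]
  unfold NCM
  rw [hset]
end
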